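/- arXiv:1310.0324 — 13 statements merged into one kernel-verified Lean document; each statement's English description precedes it below -/
import Mathlib

section
/- Let θ ∈ SL₂(ℤ) with trace(θ) ∈ {−1, 1}. Then the centralizer of θ in GL₂(ℤ) is exactly the set {I₂, −I₂, θ, −θ, θ², −θ²}; that is, S(θ) := {χ ∈ GL₂(ℤ) : χθ = θχ} = {±I₂, ±θ, ±θ²}, a cyclic group of order 6. -/
open Matrix

private lemma sq_lemma (θ : Matrix (Fin 2) (Fin 2) ℤ) (hdet : θ.det = 1) :
    θ * θ = (θ 0 0 + θ 1 1) • θ - 1 := by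
  rw [Matrix.det_fin_two] at hdet
  ext i j
  fin_cases i <;> fin_cases j <;>
    simp only [Matrix.mul_apply, Fin.sum_univ_two, Matrix.sub_apply, Matrix.smul_apply,
      Matrix.one_apply, smul_eq_mul] <;> norm_num <;>
    linarith [hdet, mul_comm (θ 0 1) (θ 1 0), mul_comm (θ 0 0) (θ 1 1)]

private lemma cent_sub (θ χ : Matrix (Fin 2) (Fin 2) ℤ) (hdet : θ.det = 1)
    (ht : (θ 0 0 + θ 1 1)^2 = 1)
    (hχd : χ.det = 1 ∨ χ.det = -1) (hc : χ * θ = θ * χ) :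
    ∃ x y : ℤ, χ = x • (1 : Matrix (Fin 2) (Fin 2) ℤ) + y • θ ∧
      x^2 + x*y*(θ 0 0 + θ 1 1) + y^2 = 1 := by
  rw [Matrix.det_fin_two] at hdet
  have e11 : χ 0 0 * θ 0 0 + χ 0 1 * θ 1 0 = θ 0 0 * χ 0 0 + θ 0 1 * χ 1 0 := by
    simpa [Matrix.mul_apply, Fin.sum_univ_two] using congrFun (congrFun hc 0) 0
  have e12 : χ 0 0 * θ 0 1 + χ 0 1 * θ 1 1 = θ 0 0 * χ 0 1 + θ 0 1 * χ 1 1 := by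
    simpa [Matrix.mul_apply, Fin.sum_univ_two] using congrFun (congrFun hc 0) 1
  have e21 : χ 1 0 * θ 0 0 + χ 1 1 * θ 1 0 = θ 1 0 * χ 0 0 + θ 1 1 * χ 1 0 := by
    simpa [Matrix.mul_apply, Fin.sum_univ_two] using congrFun (congrFun hc 1) 0
  -- key quadratic identity
  have hkey : (θ 0 0 - θ 1 1)^2 + 4*(θ 0 1 * θ 1 0) = -3 := by linear_combination ht - 4*hdet
  -- gcd of (b, c, a-d) is 1
  set b := θ 0 1 with hbdef
  set c := θ 1 0 with hcdef
  set e := θ 0 0 - θ 1 1 with hedef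
  set g1 : ℤ := (Int.gcd c e : ℤ) with hg1
  set G : ℕ := Int.gcd b g1 with hGdef
  have hGb : (G:ℤ) ∣ b := Int.gcd_dvd_left _ _
  have hGg1 : (G:ℤ) ∣ g1 := Int.gcd_dvd_right _ _
  have hGc : (G:ℤ) ∣ c := hGg1.trans (Int.gcd_dvd_left _ _)
  have hGe : (G:ℤ) ∣ e := hGg1.trans (Int.gcd_dvd_right _ _)
  have hG3 : (G:ℤ)*(G:ℤ) ∣ 3 := by
    have h1 : (G:ℤ)*(G:ℤ) ∣ e^2 := by rw [sq]; exact mul_dvd_mul hGe hGe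
    have h2 : (G:ℤ)*(G:ℤ) ∣ 4*(b*c) := Dvd.dvd.mul_left (mul_dvd_mul hGb hGc) 4
    have h3 : (G:ℤ)*(G:ℤ) ∣ (-3 : ℤ) := hkey ▸ dvd_add h1 h2
    exact dvd_neg.mp h3
  have hGne : (G:ℤ) ≠ 0 := by
    intro h0
    have hb0 : b = 0 := by simpa [h0] using hGb
    have hc0 : c = 0 := by simpa [h0] using hGc
    have he0 : e = 0 := by simpa [h0] using hGe
    rw [hb0, hc0, he0] at hkey; norm_num at hkey
  have hG1 : (G:ℤ) = 1 := by
    have hpos : (0:ℤ) < G := lt_of_le_of_ne (Int.natCast_nonneg G) (Ne.symm hGne)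
    have hle : (G:ℤ)*(G:ℤ) ≤ 3 := Int.le_of_dvd (by norm_num) hG3
    nlinarith
  -- Bezout
  have hbz1 : (1:ℤ) = b * Int.gcdA b g1 + g1 * Int.gcdB b g1 := by
    rw [← hG1]; exact Int.gcd_eq_gcd_ab b g1
  have hbz2 : g1 = c * Int.gcdA c e + e * Int.gcdB c e := by
    rw [hg1]; exact Int.gcd_eq_gcd_ab c e
  set A := Int.gcdA b g1
  set B := Int.gcdB b g1
  set C := Int.gcdA c e
  set D := Int.gcdB c e
  have hbez : b * A + c * (C*B) + e * (D*B) = 1 := by linear_combination -hbz1 - B * hbz2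
  -- the three commutation identities
  have f1 : χ 0 1 * c = b * χ 1 0 := by linear_combination e11
  have f2 : b * (χ 0 0 - χ 1 1) = χ 0 1 * e := by linear_combination e12
  have f3 : c * (χ 0 0 - χ 1 1) = χ 1 0 * e := by linear_combination -e21
  set y : ℤ := A * χ 0 1 + (C*B) * χ 1 0 + (D*B) * (χ 0 0 - χ 1 1) with hy
  have hyb : y * b = χ 0 1 := by
    rw [hy]; linear_combination χ 0 1 * hbez - (C*B) * f1 + (D*B) * f2
  have hyc : y * c = χ 1 0 := by
    rw [hy]; linear_combination χ 1 0 * hbez + A * f1 + (D*B) * f3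
  have hye : y * e = χ 0 0 - χ 1 1 := by
    rw [hy]; linear_combination (χ 0 0 - χ 1 1) * hbez - A * f2 - (C*B) * f3
  set x : ℤ := χ 0 0 - y * θ 0 0 with hx
  have hp : χ 0 0 = x + y * θ 0 0 := by rw [hx]; ring
  have hs : χ 1 1 = x + y * θ 1 1 := by
    have : χ 0 0 - χ 1 1 = y * (θ 0 0 - θ 1 1) := (hye).symm
    rw [hx]; linarith [this, mul_sub y (θ 0 0) (θ 1 1)]
  clear_value x y
  refine ⟨x, y, ?_, ?_⟩
  · ext i j
    fin_cases i <;> fin_cases j <;>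
      simp only [Matrix.add_apply, Matrix.smul_apply, Matrix.one_apply, smul_eq_mul] <;>
      norm_num
    · linarith [hp]
    · linarith [hyb, mul_comm y b]
    · linarith [hyc, mul_comm y c]
    · linarith [hs]
  · rcases hχd with h | h <;> rw [Matrix.det_fin_two] at h <;>
      rw [hp, hs, ← hyb, ← hyc] at h
    · linear_combination h - y^2 * hdet
    · exfalso
      nlinarith [sq_nonneg (2*x + (θ 0 0 + θ 1 1)*y), sq_nonneg y, ht, h, hdet, mul_self_nonneg y]

/-- For θ ∈ SL₂(ℤ) with trace ±1, the centralizer of θ in GL₂(ℤ) is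
exactly {±I₂, ±θ, ±θ²}, a cyclic group of order 6 (it has six elements and consists
of the powers of a single element). -/
theorem stmt_5 (θ : Matrix (Fin 2) (Fin 2) ℤ) (hdet : θ.det = 1)
    (htr : θ.trace = -1 ∨ θ.trace = 1) :
    {χ : Matrix (Fin 2) (Fin 2) ℤ | (χ.det = 1 ∨ χ.det = -1) ∧ χ * θ = θ * χ} =
      ({1, -1, θ, -θ, θ ^ 2, -θ ^ 2} : Set (Matrix (Fin 2) (Fin 2) ℤ)) ∧
    (∃ g : Matrix (Fin 2) (Fin 2) ℤ,
      ({1, -1, θ, -θ, θ ^ 2, -θ ^ 2} : Set (Matrix (Fin 2) (Fin 2) ℤ)) =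
        {χ : Matrix (Fin 2) (Fin 2) ℤ | ∃ n : ℕ, χ = g ^ n}) ∧
    ({1, -1, θ, -θ, θ ^ 2, -θ ^ 2} : Set (Matrix (Fin 2) (Fin 2) ℤ)).ncard = 6 := by
  have ht2 : (θ 0 0 + θ 1 1)^2 = 1 := by
    rcases htr with h | h <;> rw [Matrix.trace_fin_two] at h <;> rw [h] <;> norm_num
  have hsq : θ * θ = (θ 0 0 + θ 1 1) • θ - 1 := sq_lemma θ hdet
  rw [Matrix.trace_fin_two] at htr
  refine ⟨?_, ?_, ?_⟩
  · -- centralizer = six-element set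
    ext χ
    simp only [Set.mem_setOf_eq, Set.mem_insert_iff, Set.mem_singleton_iff]
    constructor
    · rintro ⟨hχd, hc⟩
      obtain ⟨x, y, hform, heq⟩ := cent_sub θ χ hdet ht2 hχd hc
      rcases htr with ht | ht
      · have hp : θ^2 = -θ - 1 := by rw [sq, hsq, ht]; module
        rw [ht] at heq
        have hx1 : -1 ≤ x := by nlinarith [sq_nonneg (2*y - x), heq]
        have hx2 : x ≤ 1 := by nlinarith [sq_nonneg (2*y - x), heq]
        have hy1 : -1 ≤ y := by nlinarith [sq_nonneg (2*x - y), heq]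
        have hy2 : y ≤ 1 := by nlinarith [sq_nonneg (2*x - y), heq]
        interval_cases x <;> interval_cases y <;>
          first
            | (left; rw [hform]; module)
            | (right; left; rw [hform]; module)
            | (right; right; left; rw [hform]; module)
            | (right; right; right; left; rw [hform]; module)
            | (right; right; right; right; left; rw [hform, hp]; module)
            | (right; right; right; right; right; rw [hform, hp]; module)
            | (exfalso; norm_num at heq)
      · have hp : θ^2 = θ - 1 := by rw [sq, hsq, ht]; module
        rw [ht] at heq
        have hx1 : -1 ≤ x := by nlinarith [sq_nonneg (2*y + x), heq]
        have hx2 : x ≤ 1 := by nlinarith [sq_nonneg (2*y + x), heq]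
        have hy1 : -1 ≤ y := by nlinarith [sq_nonneg (2*x + y), heq]
        have hy2 : y ≤ 1 := by nlinarith [sq_nonneg (2*x + y), heq]
        interval_cases x <;> interval_cases y <;>
          first
            | (left; rw [hform]; module)
            | (right; left; rw [hform]; module)
            | (right; right; left; rw [hform]; module)
            | (right; right; right; left; rw [hform]; module)
            | (right; right; right; right; left; rw [hform, hp]; module)
            | (right; right; right; right; right; rw [hform, hp]; module)
            | (exfalso; norm_num at heq)
    · rintro (rfl | rfl | rfl | rfl | rfl | rfl)
      · exact ⟨Or.inl (by simp), by simp⟩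
      · exact ⟨Or.inl (by simp [Matrix.det_neg]), by simp⟩
      · exact ⟨Or.inl hdet, rfl⟩
      · exact ⟨Or.inl (by simp [Matrix.det_neg, hdet]), by simp [neg_mul, mul_neg]⟩
      · exact ⟨Or.inl (by simp [Matrix.det_pow, hdet]), by rw [← pow_succ, ← pow_succ']⟩
      · exact ⟨Or.inl (by simp [Matrix.det_neg, Matrix.det_pow, hdet]),
          by rw [neg_mul, mul_neg, ← pow_succ, ← pow_succ']⟩
  · -- cyclic of order 6
    rcases htr with ht | ht
    · -- trace -1 : θ³ = 1, generator -θ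
      have hp : θ^2 = -θ - 1 := by rw [sq, hsq, ht]; module
      have h3 : θ^3 = 1 := by
        rw [pow_succ, hp, sub_mul, neg_mul, one_mul, ← sq, hp]; abel
      have hg2 : (-θ)^2 = θ^2 := neg_sq θ
      have hg3 : (-θ)^3 = -1 := by rw [Odd.neg_pow (⟨1, by norm_num⟩ : Odd 3), h3]
      have hg4 : (-θ)^4 = θ := by
        rw [Even.neg_pow (⟨2, by norm_num⟩ : Even 4), show (4:ℕ) = 3+1 from rfl, pow_succ, h3, one_mul]
      have hg5 : (-θ)^5 = -θ^2 := by
        rw [Odd.neg_pow (⟨2, by norm_num⟩ : Odd 5), show (5:ℕ) = 3+2 from rfl, pow_add, h3, one_mul]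
      have hg6 : (-θ)^6 = 1 := by
        rw [Even.neg_pow (⟨3, by norm_num⟩ : Even 6), show (6:ℕ) = 3*2 from rfl, pow_mul, h3, one_pow]
      refine ⟨-θ, ?_⟩
      ext χ
      simp only [Set.mem_insert_iff, Set.mem_singleton_iff, Set.mem_setOf_eq]
      constructor
      · rintro (rfl | rfl | rfl | rfl | rfl | rfl)
        exacts [⟨0, (pow_zero _).symm⟩, ⟨3, hg3.symm⟩, ⟨4, hg4.symm⟩, ⟨1, (pow_one _).symm⟩,
          ⟨2, hg2.symm⟩, ⟨5, hg5.symm⟩]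
      · rintro ⟨n, rfl⟩
        have hmod : (-θ)^n = (-θ)^(n % 6) := by
          conv_lhs => rw [← Nat.div_add_mod n 6]
          rw [pow_add, pow_mul, hg6, one_pow, one_mul]
        rw [hmod]
        have h6 : n % 6 < 6 := Nat.mod_lt _ (by norm_num)
        set m := n % 6 with hm
        clear_value m
        interval_cases m
        · exact Or.inl (pow_zero _)
        · exact Or.inr (Or.inr (Or.inr (Or.inl (pow_one _))))
        · exact Or.inr (Or.inr (Or.inr (Or.inr (Or.inl hg2))))
        · exact Or.inr (Or.inl hg3)
        · exact Or.inr (Or.inr (Or.inl hg4))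
        · exact Or.inr (Or.inr (Or.inr (Or.inr (Or.inr hg5))))
    · -- trace 1 : θ³ = -1, generator θ
      have hp : θ^2 = θ - 1 := by rw [sq, hsq, ht]; module
      have h3 : θ^3 = -1 := by
        rw [pow_succ, hp, sub_mul, one_mul, ← sq, hp]; abel
      have h4 : θ^4 = -θ := by
        rw [show (4:ℕ) = 3+1 from rfl, pow_succ, h3, neg_one_mul]
      have h5 : θ^5 = -θ^2 := by
        rw [show (5:ℕ) = 3+2 from rfl, pow_add, h3, neg_one_mul]
      have h6 : θ^6 = 1 := by
        rw [show (6:ℕ) = 3*2 from rfl, pow_mul, h3, neg_one_sq]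
      refine ⟨θ, ?_⟩
      ext χ
      simp only [Set.mem_insert_iff, Set.mem_singleton_iff, Set.mem_setOf_eq]
      constructor
      · rintro (rfl | rfl | rfl | rfl | rfl | rfl)
        exacts [⟨0, (pow_zero _).symm⟩, ⟨3, h3.symm⟩, ⟨1, (pow_one _).symm⟩, ⟨4, h4.symm⟩,
          ⟨2, rfl⟩, ⟨5, h5.symm⟩]
      · rintro ⟨n, rfl⟩
        have hmod : θ^n = θ^(n % 6) := by
          conv_lhs => rw [← Nat.div_add_mod n 6]
          rw [pow_add, pow_mul, h6, one_pow, one_mul]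
        rw [hmod]
        have h6' : n % 6 < 6 := Nat.mod_lt _ (by norm_num)
        set m := n % 6 with hm
        clear_value m
        interval_cases m
        · exact Or.inl (pow_zero _)
        · exact Or.inr (Or.inr (Or.inl (pow_one _)))
        · exact Or.inr (Or.inr (Or.inr (Or.inr (Or.inl rfl))))
        · exact Or.inr (Or.inl h3)
        · exact Or.inr (Or.inr (Or.inr (Or.inl h4)))
        · exact Or.inr (Or.inr (Or.inr (Or.inr (Or.inr h5))))
  · -- ncard = 6
    have Tne : ∀ {A B : Matrix (Fin 2) (Fin 2) ℤ}, A.trace ≠ B.trace → A ≠ B :=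
      fun h h' => h (by rw [h'])
    have tr1 : (1 : Matrix (Fin 2) (Fin 2) ℤ).trace = 2 := by
      simp [Matrix.trace_fin_two, Matrix.one_apply]
    have trθ : θ.trace = θ 0 0 + θ 1 1 := Matrix.trace_fin_two θ
    have trsq : (θ^2).trace = -1 := by
      rw [sq, hsq, Matrix.trace_sub, Matrix.trace_smul, Matrix.trace_one, trθ]
      simp only [smul_eq_mul, Fintype.card_fin]
      push_cast
      linear_combination ht2
    -- the two entry-based distinctions
    have hA : θ ≠ θ^2 := by
      rcases htr with ht | ht
      · have hp : θ^2 = -θ - 1 := by rw [sq, hsq, ht]; module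
        intro h
        rw [hp] at h
        have h0 := congrFun (congrFun h 0) 0
        simp only [Matrix.sub_apply, Matrix.neg_apply, Matrix.one_apply_eq] at h0
        omega
      · exact Tne (by rw [trθ, ht, trsq]; norm_num)
    have hB : θ ≠ -θ^2 := by
      rcases htr with ht | ht
      · exact Tne (by rw [trθ, ht, Matrix.trace_neg, trsq]; norm_num)
      · have hp : θ^2 = θ - 1 := by rw [sq, hsq, ht]; module
        intro h
        rw [hp] at h
        have h0 := congrFun (congrFun h 0) 0
        simp only [Matrix.sub_apply, Matrix.neg_apply, Matrix.one_apply_eq] at h0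
        omega
    have hT : θ 0 0 + θ 1 1 = -1 ∨ θ 0 0 + θ 1 1 = 1 := htr
    have m1 : (1 : Matrix (Fin 2) (Fin 2) ℤ) ∉
        ({-1, θ, -θ, θ^2, -θ^2} : Set (Matrix (Fin 2) (Fin 2) ℤ)) := by
      simp only [Set.mem_insert_iff, Set.mem_singleton_iff, not_or]
      refine ⟨Tne ?_, Tne ?_, Tne ?_, Tne ?_, Tne ?_⟩ <;>
        simp only [Matrix.trace_neg, trθ, trsq, tr1] <;>
        rcases hT with h | h <;> omega
    have m2 : (-1 : Matrix (Fin 2) (Fin 2) ℤ) ∉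
        ({θ, -θ, θ^2, -θ^2} : Set (Matrix (Fin 2) (Fin 2) ℤ)) := by
      simp only [Set.mem_insert_iff, Set.mem_singleton_iff, not_or]
      refine ⟨Tne ?_, Tne ?_, Tne ?_, Tne ?_⟩ <;>
        simp only [Matrix.trace_neg, trθ, trsq, tr1] <;>
        rcases hT with h | h <;> omega
    have m3 : θ ∉ ({-θ, θ^2, -θ^2} : Set (Matrix (Fin 2) (Fin 2) ℤ)) := by
      simp only [Set.mem_insert_iff, Set.mem_singleton_iff, not_or]
      refine ⟨Tne ?_, hA, hB⟩
      simp only [Matrix.trace_neg, trθ]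
      rcases hT with h | h <;> omega
    have m4 : -θ ∉ ({θ^2, -θ^2} : Set (Matrix (Fin 2) (Fin 2) ℤ)) := by
      simp only [Set.mem_insert_iff, Set.mem_singleton_iff, not_or]
      constructor
      · intro h
        exact hB (by rw [← h, neg_neg])
      · intro h
        exact hA (neg_injective h)
    have m5 : θ^2 ≠ -θ^2 := by
      refine Tne ?_
      rw [Matrix.trace_neg, trsq]
      norm_num
    rw [Set.ncard_insert_of_notMem m1, Set.ncard_insert_of_notMem m2,
      Set.ncard_insert_of_notMem m3, Set.ncard_insert_of_notMem m4, Set.ncard_pair m5]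
end

section
/- Let θ ∈ SL₂(ℤ) with t := trace(θ) ∈ {−1, 0, 1}. Then θ is conjugate in GL₂(ℤ) to the matrix [[t, 1], [−1, 0]]; that is, there exists U ∈ GL₂(ℤ) such that U θ U⁻¹ = [[t, 1], [−1, 0]]. -/
open Matrix

/-- A positive definite binary quadratic form of discriminant −3 or −4 represents 1. -/
lemma rep_one_aux (m : ℤ) (hm : m = 3 ∨ m = 4) :
    ∀ n : ℕ, ∀ A B C : ℤ, A.toNat ≤ n → 0 < A → B ^ 2 - 4 * A * C = -m →
      ∃ x y : ℤ, A * x ^ 2 + B * x * y + C * y ^ 2 = 1 := by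
  have hm3 : (3 : ℤ) ≤ m := by rcases hm with h | h <;> omega
  have hm4 : m ≤ (4 : ℤ) := by rcases hm with h | h <;> omega
  intro n
  induction n with
  | zero => intro A B C hAn hA0 _; omega
  | succ n ih =>
    intro A B C hAn hA0 hdisc
    set q : ℤ := (B + A) / (2 * A) with hq
    set B' : ℤ := B - 2 * A * q with hB'
    have h2A : 0 < 2 * A := by omega
    have hmod : B' + A = (B + A) % (2 * A) := by
      rw [Int.emod_def]; rw [hB', hq]; ring
    have hlb : -A ≤ B' := by
      have := Int.emod_nonneg (B + A) (by omega : (2 : ℤ) * A ≠ 0)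
      omega
    have hub : B' < A := by
      have := Int.emod_lt_of_pos (B + A) h2A
      omega
    have hB'sq : B' ^ 2 ≤ A ^ 2 := by nlinarith
    set C' : ℤ := A * q ^ 2 - B * q + C with hC'
    have hdisc' : B' ^ 2 - 4 * A * C' = -m := by
      rw [hB', hC']; ring_nf; linarith [hdisc]
    have hC'pos : 0 < C' := by
      by_contra h
      push_neg at h
      nlinarith [sq_nonneg B', mul_nonneg hA0.le (neg_nonneg.mpr h)]
    by_cases hAC : A ≤ C'
    · have h3A : 3 * A ^ 2 ≤ 4 := by
        nlinarith [mul_le_mul_of_nonneg_left hAC (by linarith : (0:ℤ) ≤ 4 * A)]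
      have hA1 : A = 1 := by nlinarith
      exact ⟨1, 0, by rw [hA1]; ring⟩
    · push_neg at hAC
      obtain ⟨x, y, hxy⟩ := ih C' B' A (by omega) hC'pos (by linear_combination hdisc')
      refine ⟨y - q * x, x, ?_⟩
      have h : A * (y - q * x) ^ 2 + B * (y - q * x) * x + C * x ^ 2
          = C' * x ^ 2 + B' * x * y + A * y ^ 2 := by rw [hB', hC']; ring
      rw [h, hxy]

/-- Every θ ∈ SL₂(ℤ) with trace t ∈ {−1,0,1} is conjugate in GL₂(ℤ)
to the matrix [[t,1],[−1,0]]: there exists U ∈ GL₂(ℤ) with U θ U⁻¹ = [[t,1],[−1,0]]. -/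
theorem stmt_6 (θ : Matrix (Fin 2) (Fin 2) ℤ) (hdet : θ.det = 1)
    (htr : θ.trace = -1 ∨ θ.trace = 0 ∨ θ.trace = 1) :
    ∃ U : Matrix (Fin 2) (Fin 2) ℤ, (U.det = 1 ∨ U.det = -1) ∧
      U * θ * U⁻¹ = !![θ.trace, 1; -1, 0] := by
  set a := θ 0 0 with ha
  set b := θ 0 1 with hb
  set c := θ 1 0 with hc
  set d := θ 1 1 with hd
  have hdet2 : a * d - b * c = 1 := by rw [Matrix.det_fin_two] at hdet; linarith
  have htr2 : θ.trace = a + d := Matrix.trace_fin_two θ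
  rw [htr2] at htr
  set m : ℤ := 4 - (a + d) ^ 2 with hmdef
  have hm : m = 3 ∨ m = 4 := by rcases htr with h | h | h <;> simp [hmdef, h]
  have hm3 : (3 : ℤ) ≤ m := by rcases hm with h | h <;> omega
  have hdiscQ : (d - a) ^ 2 - 4 * c * (-b) = -m := by rw [hmdef]; ring_nf; linarith
  have hcne : c ≠ 0 := by
    intro h
    rw [h] at hdiscQ
    nlinarith [sq_nonneg (d - a)]
  obtain ⟨x, y, ε, hε, hQ⟩ :
      ∃ x y ε : ℤ, (ε = 1 ∨ ε = -1) ∧ c * x ^ 2 + (d - a) * x * y + (-b) * y ^ 2 = ε := by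
    rcases lt_or_gt_of_ne hcne with hneg | hpos
    · obtain ⟨x, y, hxy⟩ := rep_one_aux m hm (-c).toNat (-c) (a - d) b le_rfl (by omega)
        (by linear_combination hdiscQ)
      exact ⟨x, y, -1, Or.inr rfl, by linear_combination -hxy⟩
    · obtain ⟨x, y, hxy⟩ := rep_one_aux m hm c.toNat c (d - a) (-b) le_rfl hpos hdiscQ
      exact ⟨x, y, 1, Or.inl rfl, hxy⟩
  set U : Matrix (Fin 2) (Fin 2) ℤ :=
    !![-ε * y, ε * x; ε * (c * x + d * y), -ε * (a * x + b * y)] with hU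
  have hε2 : ε ^ 2 = 1 := by rcases hε with h | h <;> rw [h] <;> ring
  have hdetU : U.det = -ε := by
    rw [hU, Matrix.det_fin_two_of]
    linear_combination (-ε ^ 2) * hQ + (-ε) * hε2
  have hdetU' : U.det = 1 ∨ U.det = -1 := by
    rcases hε with h | h <;> rw [hdetU, h] <;> norm_num
  have hUunit : IsUnit U.det := by rcases hdetU' with h | h <;> rw [h] <;> norm_num
  refine ⟨U, hdetU', ?_⟩
  have hθeta : θ = !![a, b; c, d] := by
    rw [ha, hb, hc, hd]; exact Matrix.eta_fin_two θ
  have hcomm : U * θ = !![θ.trace, 1; -1, 0] * U := by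
    rw [htr2]
    nth_rewrite 1 [hθeta]
    ext i j
    fin_cases i <;> fin_cases j <;>
      simp [hU, Matrix.mul_apply, Fin.sum_univ_two]
    · ring
    · ring
    · linear_combination (ε * y) * hdet2
    · linear_combination (-(ε * x)) * hdet2
  calc U * θ * U⁻¹ = !![θ.trace, 1; -1, 0] * U * U⁻¹ := by rw [hcomm]
    _ = !![θ.trace, 1; -1, 0] * (U * U⁻¹) := by rw [Matrix.mul_assoc]
    _ = !![θ.trace, 1; -1, 0] := by rw [Matrix.mul_nonsing_inv U hUunit, Matrix.mul_one]
end

section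
/- Let θ ∈ SL₂(ℤ) with trace(θ) ∈ {−1, 0, 1}. Then θ is reversible in GL₂(ℤ): there exists Λ ∈ GL₂(ℤ) such that Λ θ Λ⁻¹ = θ⁻¹. -/
open Matrix

lemma shift_ex (c : ℤ) (hc : c ≠ 0) : ∀ N : ℕ, ∀ v : ℤ, v.natAbs = N →
    ∃ n : ℤ, (v + 2*n*c).natAbs ≤ c.natAbs := by
  intro N
  induction N using Nat.strong_induction_on with
  | _ N ih =>
    intro v hv
    by_cases h : v.natAbs ≤ c.natAbs
    · exact ⟨0, by simpa using h⟩
    · have hstep : ∃ s : ℤ, (s = 1 ∨ s = -1) ∧ (v + 2*s*c).natAbs < v.natAbs := by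
        rcases le_or_gt 0 v with h1 | h1 <;> rcases le_or_gt 0 c with h2 | h2
        · refine ⟨-1, Or.inr rfl, ?_⟩; rw [show v + 2*(-1)*c = v - 2*c from by ring]; omega
        · refine ⟨1, Or.inl rfl, ?_⟩; rw [show v + 2*1*c = v + 2*c from by ring]; omega
        · refine ⟨1, Or.inl rfl, ?_⟩; rw [show v + 2*1*c = v + 2*c from by ring]; omega
        · refine ⟨-1, Or.inr rfl, ?_⟩; rw [show v + 2*(-1)*c = v - 2*c from by ring]; omega
      obtain ⟨s, _, hw⟩ := hstep
      obtain ⟨m, hm⟩ := ih (v + 2*s*c).natAbs (by omega) (v + 2*s*c) rfl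
      exact ⟨s + m, by rw [show v + 2*(s+m)*c = (v + 2*s*c) + 2*m*c by ring]; exact hm⟩

lemma main_ind : ∀ N : ℕ, ∀ θ : Matrix (Fin 2) (Fin 2) ℤ, (θ 1 0).natAbs = N →
    θ.det = 1 → (θ.trace = -1 ∨ θ.trace = 0 ∨ θ.trace = 1) →
    ∃ Λ : Matrix (Fin 2) (Fin 2) ℤ, (Λ.det = 1 ∨ Λ.det = -1) ∧ Λ * θ = θ.adjugate * Λ := by
  intro N
  induction N using Nat.strong_induction_on with
  | _ N ih =>
    intro θ hN hdet htr
    obtain ⟨a, b, c, d, hθ⟩ : ∃ a b c d, θ = !![a, b; c, d] :=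
      ⟨_, _, _, _, Matrix.eta_fin_two θ⟩
    subst hθ
    have hN' : c.natAbs = N := by simpa using hN
    have hdet' : a * d - b * c = 1 := by
      rw [Matrix.det_fin_two_of] at hdet; linarith
    have htr' : a + d = -1 ∨ a + d = 0 ∨ a + d = 1 := by
      simpa [Matrix.trace_fin_two_of] using htr
    have hadj : (!![a, b; c, d] : Matrix (Fin 2) (Fin 2) ℤ).adjugate = !![d, -b; -c, a] :=
      Matrix.adjugate_fin_two_of a b c d
    by_cases hc0 : c = 0
    · exfalso
      rw [hc0] at hdet'
      have had : a * d = 1 := by linarith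
      rcases Int.eq_one_or_neg_one_of_mul_eq_one' had with ⟨h1, h2⟩ | ⟨h1, h2⟩ <;> omega
    · by_cases hc1 : c.natAbs = 1
      · have hc' : c = 1 ∨ c = -1 := by omega
        refine ⟨!![1, -(a-d)*c; 0, -1], Or.inr (by simp [Matrix.det_fin_two_of]), ?_⟩
        rw [hadj]
        rcases hc' with h | h <;> subst h <;>
          · ext i j; fin_cases i <;> fin_cases j <;>
              simp [Matrix.mul_apply, Fin.sum_univ_succ] <;> ring
      · -- |c| ≥ 2
        obtain ⟨n, hn⟩ := shift_ex c hc0 (a - d).natAbs (a - d) rfl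
        set b' : ℤ := b + n*(d-a) - n^2*c with hb'
        set θ' : Matrix (Fin 2) (Fin 2) ℤ := !![d - n*c, -c; -b', a + n*c] with hθ'
        set g : Matrix (Fin 2) (Fin 2) ℤ := !![0, -1; 1, n] with hg
        set g' : Matrix (Fin 2) (Fin 2) ℤ := !![n, 1; -1, 0] with hg'
        have hgg' : g * g' = 1 := by
          ext i j; fin_cases i <;> fin_cases j <;>
            simp [hg, hg', Matrix.mul_apply, Fin.sum_univ_succ]
        have hg'g : g' * g = 1 := by
          ext i j; fin_cases i <;> fin_cases j <;>
            simp [hg, hg', Matrix.mul_apply, Fin.sum_univ_succ]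
        have hconj : g * !![a, b; c, d] * g' = θ' := by
          ext i j; fin_cases i <;> fin_cases j <;>
            simp [hg, hg', hθ', hb', Matrix.mul_apply, Fin.sum_univ_succ] <;> ring
        have hdetθ' : θ'.det = 1 := by
          rw [hθ', Matrix.det_fin_two_of]
          have : -b' = -(b + n*(d-a) - n^2*c) := by rw [hb']
          rw [this]; linear_combination hdet'
        have htrθ' : θ'.trace = -1 ∨ θ'.trace = 0 ∨ θ'.trace = 1 := by
          rw [hθ']
          rcases htr' with h | h | h <;> simp [Matrix.trace_fin_two_of] <;> omega
        have hkey : 4 * (b' * c) = (a+d)^2 - 4 - (a - d + 2*n*c)^2 := by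
          rw [hb']; linear_combination -4 * hdet'
        have habsu : |a - d + 2*n*c| ≤ |c| := by
          rw [Int.abs_eq_natAbs, Int.abs_eq_natAbs]; exact_mod_cast hn
        have hu2 : (a - d + 2*n*c)^2 ≤ c^2 := by
          calc (a - d + 2*n*c)^2 = |a - d + 2*n*c|^2 := (sq_abs _).symm
            _ ≤ |c|^2 := by
                apply pow_le_pow_left₀ (abs_nonneg _) habsu
            _ = c^2 := sq_abs c
        have htsq : (a + d)^2 ≤ 1 := by rcases htr' with h | h | h <;> rw [h] <;> norm_num
        have habs : |4 * (b' * c)| ≤ 4 + c^2 := by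
          rw [hkey, abs_of_nonpos (by nlinarith [sq_nonneg (a - d + 2*n*c)])]
          nlinarith
        have hc2 : (2:ℤ) ≤ |c| := by
          rw [Int.abs_eq_natAbs]; exact_mod_cast (by omega : 2 ≤ c.natAbs)
        have hblt : |b'| < |c| := by
          by_contra hle
          push_neg at hle
          have h1 : 4 * (|b'| * |c|) ≤ 4 + c^2 := by
            rwa [abs_mul, abs_mul, abs_of_nonneg (by norm_num : (0:ℤ) ≤ 4)] at habs
          have h2 : c^2 = |c| * |c| := by rw [← sq_abs]; ring
          nlinarith [abs_nonneg b', abs_nonneg c]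
        have hlt : (θ' 1 0).natAbs < N := by
          have h10 : θ' 1 0 = -b' := by rw [hθ']; rfl
          rw [h10, Int.natAbs_neg]
          rw [Int.abs_eq_natAbs, Int.abs_eq_natAbs] at hblt
          have : b'.natAbs < c.natAbs := by exact_mod_cast hblt
          omega
        obtain ⟨Λ', hΛ'det, hΛ'⟩ := ih (θ' 1 0).natAbs hlt θ' rfl hdetθ' htrθ'
        refine ⟨g' * Λ' * g, ?_, ?_⟩
        · have hdg : g.det = 1 := by rw [hg, Matrix.det_fin_two_of]; ring
          have hdg' : g'.det = 1 := by rw [hg', Matrix.det_fin_two_of]; ring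
          rw [Matrix.det_mul, Matrix.det_mul, hdg, hdg', one_mul, mul_one]
          exact hΛ'det
        · have hadjg : g.adjugate = g' := by
            rw [hg, hg', Matrix.adjugate_fin_two_of]; norm_num
          have hadjg' : g'.adjugate = g := by
            rw [hg, hg', Matrix.adjugate_fin_two_of]; norm_num
          have hadjθ' : θ'.adjugate = g * (!![a, b; c, d]).adjugate * g' := by
            rw [← hconj, Matrix.adjugate_mul_distrib, Matrix.adjugate_mul_distrib,
              hadjg, hadjg']
            noncomm_ring
          have hgθ : g * !![a, b; c, d] = θ' * g := by
            rw [← hconj]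
            calc g * !![a, b; c, d] = g * !![a, b; c, d] * (g' * g) := by rw [hg'g, mul_one]
              _ = g * !![a, b; c, d] * g' * g := by noncomm_ring
          calc g' * Λ' * g * !![a, b; c, d] = g' * Λ' * (g * !![a, b; c, d]) := by noncomm_ring
            _ = g' * Λ' * (θ' * g) := by rw [hgθ]
            _ = g' * (Λ' * θ') * g := by noncomm_ring
            _ = g' * (θ'.adjugate * Λ') * g := by rw [hΛ']
            _ = g' * (g * (!![a, b; c, d]).adjugate * g' * Λ') * g := by rw [hadjθ']
            _ = (g' * g) * (!![a, b; c, d]).adjugate * (g' * Λ' * g) := by noncomm_ring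
            _ = (!![a, b; c, d]).adjugate * (g' * Λ' * g) := by rw [hg'g, one_mul]

/-- Every θ ∈ SL₂(ℤ) with trace in {−1,0,1} is reversible in GL₂(ℤ):
there exists Λ ∈ GL₂(ℤ) with Λ θ Λ⁻¹ = θ⁻¹. -/
theorem stmt_7 (θ : Matrix (Fin 2) (Fin 2) ℤ) (hdet : θ.det = 1)
    (htr : θ.trace = -1 ∨ θ.trace = 0 ∨ θ.trace = 1) :
    ∃ Λ : Matrix (Fin 2) (Fin 2) ℤ, (Λ.det = 1 ∨ Λ.det = -1) ∧
      Λ * θ * Λ⁻¹ = θ⁻¹ := by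
  obtain ⟨Λ, hΛdet, hΛ⟩ := main_ind (θ 1 0).natAbs θ rfl hdet htr
  have hinv : θ⁻¹ = θ.adjugate := by
    rw [Matrix.inv_def, hdet]; simp
  have hunit : IsUnit Λ.det := by
    rcases hΛdet with h | h <;> rw [h]
    · exact isUnit_one
    · exact isUnit_one.neg
  refine ⟨Λ, hΛdet, ?_⟩
  calc Λ * θ * Λ⁻¹ = θ.adjugate * Λ * Λ⁻¹ := by rw [hΛ]
    _ = θ.adjugate * (Λ * Λ⁻¹) := by rw [mul_assoc]
    _ = θ.adjugate := by rw [Matrix.mul_nonsing_inv Λ hunit, mul_one]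
    _ = θ⁻¹ := hinv.symm
end

section
/- Let θ ∈ SL₂(ℤ) with trace(θ) ∈ {−1, 0, 1}, and let Λ ∈ GL₂(ℤ) be any reversing symmetry of θ (i.e. ΛθΛ⁻¹ = θ⁻¹). Then the reversing symmetry group R(θ) := {χ ∈ GL₂(ℤ) : χθχ⁻¹ = θ or χθχ⁻¹ = θ⁻¹} equals S(θ) ∪ Λ·S(θ), so S(θ) has index 2 in R(θ). Explicitly, if trace(θ) = 0 then R(θ) = {±I₂, ±θ, ±Λ, ±Λθ} (a dihedral group of order 8), and if trace(θ) = ±1 then R(θ) = {±I₂, ±θ, ±θ², ±Λ, ±Λθ, ±Λθ²} (a dihedral group of order 12). -/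
lemma sqrt3_aux (x y : ℤ) (h : x ^ 2 = 3 * y ^ 2) : y = 0 := by
  by_contra hy
  have h3 : Irrational (Real.sqrt 3) := by
    simpa using (Nat.prime_three).irrational_sqrt
  apply h3
  refine ⟨|(x : ℚ) / (y : ℚ)|, ?_⟩
  have hyR : ((y : ℝ)) ≠ 0 := Int.cast_ne_zero.mpr hy
  have hx : ((x : ℝ) / (y : ℝ)) ^ 2 = 3 := by
    field_simp
    exact_mod_cast h.trans (mul_comm _ _)
  have : Real.sqrt 3 = |(x : ℝ) / (y : ℝ)| := by
    rw [← hx, Real.sqrt_sq_eq_abs]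
  rw [this]
  push_cast
  ring

set_option maxHeartbeats 2000000 in
lemma cent_entries (p q r s a b c d : ℤ)
    (hdet : p * s - q * r = 1)
    (ht : p + s = -1 ∨ p + s = 0 ∨ p + s = 1)
    (hε : a * d - b * c = 1 ∨ a * d - b * c = -1)
    (h1 : b * r = q * c) (h2 : q * (a - d) = b * (p - s)) :
    ∃ x y : ℤ, a = x + y * p ∧ b = y * q ∧ c = y * r ∧ d = x + y * s ∧
      ((x = 1 ∧ y = 0) ∨ (x = -1 ∧ y = 0) ∨ (x = 0 ∧ y = 1) ∨ (x = 0 ∧ y = -1) ∨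
        (x = -1 ∧ y = p + s) ∨ (x = 1 ∧ y = -(p + s))) := by
  have hts : (p + s) ^ 2 ≤ 1 := by rcases ht with h | h | h <;> rw [h] <;> norm_num
  have hqr : q * r ≤ -1 := by nlinarith [sq_nonneg (p - s)]
  have hq : q ≠ 0 := by intro h; rw [h] at hqr; omega
  have hq2 : 1 ≤ q ^ 2 := by rcases hq.lt_or_gt with h | h <;> nlinarith
  have key : 4 * q ^ 2 * (a * d - b * c) = q ^ 2 * (a + d) ^ 2 - ((p + s) ^ 2 - 4) * b ^ 2 := by
    linear_combination 4 * b ^ 2 * hdet - (q * (a - d) + b * (p - s)) * h2 + 4 * q * b * h1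
  rcases hε with hε | hε
  swap
  · exfalso
    nlinarith [sq_nonneg (a + d), sq_nonneg b, sq_nonneg (q * (a + d)), sq_nonneg (q * b)]
  have h5 : q ^ 2 * ((a + d) ^ 2 - 4) ≤ 0 := by
    nlinarith [mul_le_mul_of_nonneg_right hts (sq_nonneg b), sq_nonneg b]
  have hm4 : (a + d) ^ 2 ≤ 4 := by nlinarith [h5, hq2]
  have hmb : -2 ≤ a + d ∧ a + d ≤ 2 := by
    constructor
    · nlinarith [hm4, sq_nonneg (a + d + 3)]
    · nlinarith [hm4, sq_nonneg (a + d - 3)]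
  have hm : a + d = -2 ∨ a + d = -1 ∨ a + d = 0 ∨ a + d = 1 ∨ a + d = 2 := by omega
  -- helper facts
  have hb0 : ∀ (u : ℤ), b = u * q → c = u * r ∧ a - d = u * (p - s) := by
    intro u hb
    constructor
    · apply mul_left_cancel₀ hq
      rw [hb] at h1; linarith [h1]
    · apply mul_left_cancel₀ hq
      rw [hb] at h2; linarith [h2]
  have e0 : 4 * q ^ 2 * (a * d - b * c) = 4 * q ^ 2 := by linear_combination 4 * q ^ 2 * hε
  have E : q ^ 2 * (a + d) ^ 2 - ((p + s) ^ 2 - 4) * b ^ 2 = 4 * q ^ 2 := by linarith [key, e0]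
  -- tactic blocks per case
  rcases ht with htv | htv | htv <;> rcases hm with hmv | hmv | hmv | hmv | hmv <;>
    rw [htv, hmv] at E
  -- t = -1
  · -- m = -2 : ±1 case
    have hb2 : b ^ 2 = 0 := by linarith [E]
    have hb : b = 0 := pow_eq_zero_iff two_ne_zero |>.mp hb2
    obtain ⟨hc, had⟩ := hb0 0 (by linarith)
    exact ⟨-1, 0, by linarith, by linarith, by linarith, by linarith, by norm_num⟩
  · -- m = -1
    have hbq : (b - q) * (b + q) = 0 := by linarith [E]
    rcases mul_eq_zero.mp hbq with h | h
    · obtain ⟨hc, had⟩ := hb0 1 (by linarith)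
      exact ⟨0, 1, by linarith, by linarith, by linarith, by linarith, by norm_num⟩
    · obtain ⟨hc, had⟩ := hb0 (-1) (by linarith)
      refine ⟨-1, -1, by linarith, by linarith, by linarith, by linarith, ?_⟩
      right; right; right; right; left; exact ⟨rfl, by linarith⟩
  · -- m = 0 : contradiction
    have h3 : (3 * b) ^ 2 = 3 * (2 * q) ^ 2 := by linarith [E]
    have := sqrt3_aux (3 * b) (2 * q) h3
    omega
  · -- m = 1
    have hbq : (b - q) * (b + q) = 0 := by linarith [E]
    rcases mul_eq_zero.mp hbq with h | h
    · obtain ⟨hc, had⟩ := hb0 1 (by linarith)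
      refine ⟨1, 1, by linarith, by linarith, by linarith, by linarith, ?_⟩
      right; right; right; right; right; exact ⟨rfl, by linarith⟩
    · obtain ⟨hc, had⟩ := hb0 (-1) (by linarith)
      exact ⟨0, -1, by linarith, by linarith, by linarith, by linarith, by norm_num⟩
  · -- m = 2
    have hb2 : b ^ 2 = 0 := by linarith [E]
    have hb : b = 0 := pow_eq_zero_iff two_ne_zero |>.mp hb2
    obtain ⟨hc, had⟩ := hb0 0 (by linarith)
    exact ⟨1, 0, by linarith, by linarith, by linarith, by linarith, by norm_num⟩
  -- t = 0
  · have hb2 : b ^ 2 = 0 := by linarith [E]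
    have hb : b = 0 := pow_eq_zero_iff two_ne_zero |>.mp hb2
    obtain ⟨hc, had⟩ := hb0 0 (by linarith)
    exact ⟨-1, 0, by linarith, by linarith, by linarith, by linarith, by norm_num⟩
  · have h3 : (2 * b) ^ 2 = 3 * q ^ 2 := by linarith [E]
    exact absurd (sqrt3_aux (2 * b) q h3) hq
  · have hbq : (b - q) * (b + q) = 0 := by linarith [E]
    rcases mul_eq_zero.mp hbq with h | h
    · obtain ⟨hc, had⟩ := hb0 1 (by linarith)
      exact ⟨0, 1, by linarith, by linarith, by linarith, by linarith, by norm_num⟩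
    · obtain ⟨hc, had⟩ := hb0 (-1) (by linarith)
      exact ⟨0, -1, by linarith, by linarith, by linarith, by linarith, by norm_num⟩
  · have h3 : (2 * b) ^ 2 = 3 * q ^ 2 := by linarith [E]
    exact absurd (sqrt3_aux (2 * b) q h3) hq
  · have hb2 : b ^ 2 = 0 := by linarith [E]
    have hb : b = 0 := pow_eq_zero_iff two_ne_zero |>.mp hb2
    obtain ⟨hc, had⟩ := hb0 0 (by linarith)
    exact ⟨1, 0, by linarith, by linarith, by linarith, by linarith, by norm_num⟩
  -- t = 1
  · have hb2 : b ^ 2 = 0 := by linarith [E]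
    have hb : b = 0 := pow_eq_zero_iff two_ne_zero |>.mp hb2
    obtain ⟨hc, had⟩ := hb0 0 (by linarith)
    exact ⟨-1, 0, by linarith, by linarith, by linarith, by linarith, by norm_num⟩
  · have hbq : (b - q) * (b + q) = 0 := by linarith [E]
    rcases mul_eq_zero.mp hbq with h | h
    · obtain ⟨hc, had⟩ := hb0 1 (by linarith)
      refine ⟨-1, 1, by linarith, by linarith, by linarith, by linarith, ?_⟩
      right; right; right; right; left; exact ⟨rfl, by linarith⟩
    · obtain ⟨hc, had⟩ := hb0 (-1) (by linarith)
      exact ⟨0, -1, by linarith, by linarith, by linarith, by linarith, by norm_num⟩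
  · have h3 : (3 * b) ^ 2 = 3 * (2 * q) ^ 2 := by linarith [E]
    have := sqrt3_aux (3 * b) (2 * q) h3
    omega
  · have hbq : (b - q) * (b + q) = 0 := by linarith [E]
    rcases mul_eq_zero.mp hbq with h | h
    · obtain ⟨hc, had⟩ := hb0 1 (by linarith)
      exact ⟨0, 1, by linarith, by linarith, by linarith, by linarith, by norm_num⟩
    · obtain ⟨hc, had⟩ := hb0 (-1) (by linarith)
      refine ⟨1, -1, by linarith, by linarith, by linarith, by linarith, ?_⟩
      right; right; right; right; right; exact ⟨rfl, by linarith⟩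
  · have hb2 : b ^ 2 = 0 := by linarith [E]
    have hb : b = 0 := pow_eq_zero_iff two_ne_zero |>.mp hb2
    obtain ⟨hc, had⟩ := hb0 0 (by linarith)
    exact ⟨1, 0, by linarith, by linarith, by linarith, by linarith, by norm_num⟩

open Matrix

lemma CH (θ : Matrix (Fin 2) (Fin 2) ℤ) (hdet : θ.det = 1) :
    θ ^ 2 = θ.trace • θ - 1 := by
  rw [Matrix.det_fin_two] at hdet
  rw [sq, Matrix.trace_fin_two]
  ext i j
  fin_cases i <;> fin_cases j <;> ring_nf <;>
    simp only [Matrix.mul_apply, Fin.sum_univ_two, Matrix.sub_apply, Matrix.smul_apply, smul_eq_mul, Matrix.one_apply, Fin.isValue, if_true, if_false, Fin.zero_eta, Fin.mk_one, ne_eq, zero_ne_one, one_ne_zero, ite_true, ite_false, reduceIte] <;> linarith [hdet]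

example (θ χ : Matrix (Fin 2) (Fin 2) ℤ) (h : χ * θ = θ * χ) :
    χ 0 0 * θ 0 0 + χ 0 1 * θ 1 0 = θ 0 0 * χ 0 0 + θ 0 1 * χ 1 0 := by
  have := congrFun (congrFun h 0) 0
  simpa [Matrix.mul_apply, Fin.sum_univ_two] using this

lemma centralizer_classify (θ χ : Matrix (Fin 2) (Fin 2) ℤ) (hdet : θ.det = 1)
    (htr : θ.trace = -1 ∨ θ.trace = 0 ∨ θ.trace = 1)
    (hχd : χ.det = 1 ∨ χ.det = -1) (hcomm : χ * θ = θ * χ) :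
    χ = 1 ∨ χ = -1 ∨ χ = θ ∨ χ = -θ ∨ χ = θ ^ 2 ∨ χ = -θ ^ 2 := by
  have hdet' := hdet; rw [Matrix.det_fin_two] at hdet'
  have hχd' := hχd; rw [Matrix.det_fin_two] at hχd'
  have htr' := htr; rw [Matrix.trace_fin_two] at htr'
  have h00 := congrFun (congrFun hcomm 0) 0
  have h01 := congrFun (congrFun hcomm 0) 1
  simp only [Matrix.mul_apply, Fin.sum_univ_two] at h00 h01
  obtain ⟨x, y, ha, hb, hc, hd, hxy⟩ :=
    cent_entries (θ 0 0) (θ 0 1) (θ 1 0) (θ 1 1) (χ 0 0) (χ 0 1) (χ 1 0) (χ 1 1)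
      (by linarith) htr' hχd' (by linarith) (by linarith)
  have hCH := CH θ hdet
  rw [Matrix.trace_fin_two] at hCH
  rcases hxy with ⟨hx, hy⟩ | ⟨hx, hy⟩ | ⟨hx, hy⟩ | ⟨hx, hy⟩ | ⟨hx, hy⟩ | ⟨hx, hy⟩ <;>
    subst hx hy
  · left
    ext i j
    fin_cases i <;> fin_cases j <;> simp [Matrix.one_apply] <;> linarith
  · right; left
    ext i j
    fin_cases i <;> fin_cases j <;> simp [Matrix.one_apply] <;> linarith
  · right; right; left
    ext i j
    fin_cases i <;> fin_cases j <;> simp <;> linarith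
  · right; right; right; left
    ext i j
    fin_cases i <;> fin_cases j <;> simp <;> linarith
  · right; right; right; right; left
    rw [hCH]
    ext i j
    fin_cases i <;> fin_cases j <;>
      simp only [Matrix.sub_apply, Matrix.smul_apply, smul_eq_mul, Matrix.one_apply,
        Fin.isValue, Fin.zero_eta, Fin.mk_one, ne_eq, zero_ne_one, one_ne_zero,
        ite_true, ite_false, reduceIte, if_true, if_false] <;> linarith
  · right; right; right; right; right
    rw [hCH]
    ext i j
    fin_cases i <;> fin_cases j <;>
      simp only [Matrix.neg_apply, Matrix.sub_apply, Matrix.smul_apply, smul_eq_mul,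
        Matrix.one_apply, Fin.isValue, Fin.zero_eta, Fin.mk_one, ne_eq, zero_ne_one,
        one_ne_zero, ite_true, ite_false, reduceIte, if_true, if_false] <;> linarith
lemma conj_iff (A B C : Matrix (Fin 2) (Fin 2) ℤ) (hA : IsUnit A.det) :
    A * B * A⁻¹ = C ↔ A * B = C * A := by
  constructor <;> intro h
  · have := congrArg (fun X => X * A) h
    simpa [Matrix.mul_assoc, Matrix.nonsing_inv_mul A hA] using this
  · rw [h, Matrix.mul_assoc, Matrix.mul_nonsing_inv A hA, mul_one]

lemma rev_mul (Λ ψ θ : Matrix (Fin 2) (Fin 2) ℤ) (hψ : IsUnit ψ.det)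
    (hc : ψ * θ = θ * ψ) : Λ * ψ * θ * (Λ * ψ)⁻¹ = Λ * θ * Λ⁻¹ := by
  rw [Matrix.mul_inv_rev, Matrix.mul_assoc Λ ψ θ, hc, ← Matrix.mul_assoc Λ θ ψ,
    Matrix.mul_assoc (Λ * θ) ψ, ← Matrix.mul_assoc ψ ψ⁻¹, Matrix.mul_nonsing_inv ψ hψ, one_mul]


set_option maxHeartbeats 2000000 in
/-- For θ ∈ SL₂(ℤ) with trace in {−1,0,1} and Λ ∈ GL₂(ℤ) any reversing
symmetry of θ (ΛθΛ⁻¹ = θ⁻¹), the reversing symmetry group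
R(θ) = {χ ∈ GL₂(ℤ) : χθχ⁻¹ = θ or χθχ⁻¹ = θ⁻¹} equals S(θ) ∪ Λ·S(θ), where
S(θ) = {χ ∈ GL₂(ℤ) : χθ = θχ}; moreover Λ ∉ S(θ), so S(θ) has index 2 in R(θ).
Explicitly, R(θ) = {±I₂, ±θ, ±Λ, ±Λθ} when trace θ = 0, and
R(θ) = {±I₂, ±θ, ±θ², ±Λ, ±Λθ, ±Λθ²} when trace θ = ±1. -/
theorem stmt_8 (θ Λ : Matrix (Fin 2) (Fin 2) ℤ) (hdet : θ.det = 1)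
    (htr : θ.trace = -1 ∨ θ.trace = 0 ∨ θ.trace = 1)
    (hΛdet : Λ.det = 1 ∨ Λ.det = -1) (hΛ : Λ * θ * Λ⁻¹ = θ⁻¹) :
    ({χ : Matrix (Fin 2) (Fin 2) ℤ | (χ.det = 1 ∨ χ.det = -1) ∧
        (χ * θ * χ⁻¹ = θ ∨ χ * θ * χ⁻¹ = θ⁻¹)} =
      {χ : Matrix (Fin 2) (Fin 2) ℤ | (χ.det = 1 ∨ χ.det = -1) ∧ χ * θ = θ * χ} ∪
        (fun χ => Λ * χ) ''
          {χ : Matrix (Fin 2) (Fin 2) ℤ | (χ.det = 1 ∨ χ.det = -1) ∧ χ * θ = θ * χ}) ∧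
    Λ ∉ {χ : Matrix (Fin 2) (Fin 2) ℤ | (χ.det = 1 ∨ χ.det = -1) ∧ χ * θ = θ * χ} ∧
    (θ.trace = 0 →
      {χ : Matrix (Fin 2) (Fin 2) ℤ | (χ.det = 1 ∨ χ.det = -1) ∧
          (χ * θ * χ⁻¹ = θ ∨ χ * θ * χ⁻¹ = θ⁻¹)} =
        ({1, -1, θ, -θ, Λ, -Λ, Λ * θ, -(Λ * θ)} : Set (Matrix (Fin 2) (Fin 2) ℤ))) ∧
    (θ.trace = -1 ∨ θ.trace = 1 →
      {χ : Matrix (Fin 2) (Fin 2) ℤ | (χ.det = 1 ∨ χ.det = -1) ∧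
          (χ * θ * χ⁻¹ = θ ∨ χ * θ * χ⁻¹ = θ⁻¹)} =
        ({1, -1, θ, -θ, θ ^ 2, -θ ^ 2, Λ, -Λ, Λ * θ, -(Λ * θ),
          Λ * θ ^ 2, -(Λ * θ ^ 2)} : Set (Matrix (Fin 2) (Fin 2) ℤ))) := by
  have hθu : IsUnit θ.det := by rw [hdet]; exact isUnit_one
  have hΛu : IsUnit Λ.det := by
    rcases hΛdet with h | h <;> rw [h]
    exacts [isUnit_one, isUnit_one.neg]
  have hunit : ∀ A : Matrix (Fin 2) (Fin 2) ℤ, A.det = 1 ∨ A.det = -1 → IsUnit A.det := by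
    rintro A (h | h) <;> rw [h]
    exacts [isUnit_one, isUnit_one.neg]
  have hΛinvdet : Λ⁻¹.det = Λ.det := by
    have h1 : Λ⁻¹.det * Λ.det = 1 := by
      rw [← Matrix.det_mul, Matrix.nonsing_inv_mul Λ hΛu, Matrix.det_one]
    rcases hΛdet with h | h <;> rw [h] at h1 ⊢ <;> omega
  -- part 1
  have part1 : {χ : Matrix (Fin 2) (Fin 2) ℤ | (χ.det = 1 ∨ χ.det = -1) ∧
        (χ * θ * χ⁻¹ = θ ∨ χ * θ * χ⁻¹ = θ⁻¹)} =
      {χ : Matrix (Fin 2) (Fin 2) ℤ | (χ.det = 1 ∨ χ.det = -1) ∧ χ * θ = θ * χ} ∪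
        (fun χ => Λ * χ) ''
          {χ : Matrix (Fin 2) (Fin 2) ℤ | (χ.det = 1 ∨ χ.det = -1) ∧ χ * θ = θ * χ} := by
    ext χ
    simp only [Set.mem_setOf_eq, Set.mem_union, Set.mem_image]
    constructor
    · rintro ⟨hχd, hco | hrev⟩
      · exact Or.inl ⟨hχd, (conj_iff χ θ θ (hunit χ hχd)).mp hco⟩
      · refine Or.inr ⟨Λ⁻¹ * χ, ⟨?_, ?_⟩, ?_⟩
        · rw [Matrix.det_mul, hΛinvdet]
          rcases hΛdet with h | h <;> rcases hχd with h' | h' <;> rw [h, h'] <;> norm_num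
        · -- commutation of Λ⁻¹ * χ with θ
          have hχθ : χ * θ = θ⁻¹ * χ := (conj_iff χ θ θ⁻¹ (hunit χ hχd)).mp hrev
          have hΛθ : Λ * θ = θ⁻¹ * Λ := (conj_iff Λ θ θ⁻¹ hΛu).mp hΛ
          have haux : θ * Λ⁻¹ = Λ⁻¹ * θ⁻¹ := by
            have h2 := congrArg (fun X => Λ⁻¹ * X * Λ⁻¹) hΛθ
            simpa [Matrix.mul_assoc, Matrix.nonsing_inv_mul_cancel_left Λ _ hΛu,
              Matrix.mul_nonsing_inv_cancel_right Λ _ hΛu,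
              Matrix.nonsing_inv_mul_cancel_right Λ _ hΛu,
              Matrix.mul_nonsing_inv Λ hΛu, Matrix.nonsing_inv_mul Λ hΛu] using h2
          calc Λ⁻¹ * χ * θ = Λ⁻¹ * (θ⁻¹ * χ) := by rw [Matrix.mul_assoc, hχθ]
            _ = (Λ⁻¹ * θ⁻¹) * χ := by rw [Matrix.mul_assoc]
            _ = (θ * Λ⁻¹) * χ := by rw [haux]
            _ = θ * (Λ⁻¹ * χ) := by rw [Matrix.mul_assoc]
        · rw [← Matrix.mul_assoc, Matrix.mul_nonsing_inv Λ hΛu, one_mul]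
    · rintro (⟨hχd, hco⟩ | ⟨ψ, ⟨hψd, hψc⟩, rfl⟩)
      · exact ⟨hχd, Or.inl ((conj_iff χ θ θ (hunit χ hχd)).mpr (by rw [hco]))⟩
      · constructor
        · rw [Matrix.det_mul]
          rcases hΛdet with h | h <;> rcases hψd with h' | h' <;> rw [h, h'] <;> norm_num
        · exact Or.inr (by rw [rev_mul Λ ψ θ (hunit ψ hψd) hψc, hΛ])
  have hSset : {χ : Matrix (Fin 2) (Fin 2) ℤ | (χ.det = 1 ∨ χ.det = -1) ∧ χ * θ = θ * χ} =
      ({1, -1, θ, -θ, θ ^ 2, -θ ^ 2} : Set (Matrix (Fin 2) (Fin 2) ℤ)) := by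
    ext χ
    simp only [Set.mem_setOf_eq, Set.mem_insert_iff, Set.mem_singleton_iff]
    constructor
    · rintro ⟨h1, h2⟩
      exact centralizer_classify θ χ hdet htr h1 h2
    · rintro (rfl | rfl | rfl | rfl | rfl | rfl)
      · exact ⟨by norm_num, by rw [one_mul, mul_one]⟩
      · exact ⟨by norm_num [Matrix.det_neg], by rw [neg_one_mul, mul_neg_one]⟩
      · exact ⟨by norm_num [hdet], rfl⟩
      · exact ⟨by norm_num [Matrix.det_neg, hdet], by rw [neg_mul, mul_neg]⟩
      · exact ⟨by norm_num [Matrix.det_pow, hdet], by rw [sq, Matrix.mul_assoc]⟩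
      · exact ⟨by norm_num [Matrix.det_neg, Matrix.det_pow, hdet],
          by rw [neg_mul, mul_neg, sq, Matrix.mul_assoc]⟩
  have hImg : (fun χ => Λ * χ) '' ({1, -1, θ, -θ, θ ^ 2, -θ ^ 2} :
        Set (Matrix (Fin 2) (Fin 2) ℤ)) =
      ({Λ, -Λ, Λ * θ, -(Λ * θ), Λ * θ ^ 2, -(Λ * θ ^ 2)} :
        Set (Matrix (Fin 2) (Fin 2) ℤ)) := by
    simp only [Set.image_insert_eq, Set.image_singleton, mul_one, mul_neg_one, mul_neg]
  refine ⟨part1, ?_, ?_, ?_⟩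
  · -- Λ not a symmetry
    rintro ⟨-, hcomm⟩
    have hθinv : θ⁻¹ = θ := by
      rw [← hΛ, hcomm, Matrix.mul_assoc, Matrix.mul_nonsing_inv Λ hΛu, mul_one]
    have h2 : θ * θ = 1 := by
      have h3 := Matrix.nonsing_inv_mul θ hθu
      rwa [hθinv] at h3
    have hch := CH θ hdet
    rw [sq, h2] at hch
    have h3 : θ.trace • θ = 1 + 1 := sub_eq_iff_eq_add.mp hch.symm
    have h4 := congrArg Matrix.trace h3
    simp only [Matrix.trace_smul, Matrix.trace_add, Matrix.trace_one, smul_eq_mul,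
      Fintype.card_fin] at h4
    rcases htr with h | h | h <;> rw [h] at h4 <;> norm_num at h4
  · -- trace 0 case
    intro h0
    have hsq : θ ^ 2 = -1 := by rw [CH θ hdet, h0, zero_smul, zero_sub]
    rw [part1, hSset, hImg, hsq]
    simp only [mul_neg_one, neg_neg, Set.insert_union, Set.singleton_union]
    ext x
    simp only [Set.mem_insert_iff, Set.mem_singleton_iff]
    constructor
    · rintro (rfl | rfl | rfl | rfl | rfl | rfl | rfl | rfl | rfl | rfl | rfl | rfl) <;> tauto
    · rintro (rfl | rfl | rfl | rfl | rfl | rfl | rfl | rfl) <;> tauto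
  · -- trace ±1 case
    intro _
    rw [part1, hSset, hImg]
    simp only [Set.insert_union, Set.singleton_union]
end

section
/- Fix k ∈ ℝ with k ≠ 0, and define the bilinear bracket on ℝ³ by [x, y] := (−k(x₂y₃ − x₃y₂), k(x₁y₃ − x₃y₁), 0) (so that [f₁,f₂] = 0, [f₁,f₃] = k f₂, [f₂,f₃] = −k f₁ for the standard basis f₁, f₂, f₃). An invertible linear map L : ℝ³ → ℝ³ satisfies L[x, y] = [Lx, Ly] for all x, y ∈ ℝ³ if and only if the matrix of L (acting on column vectors, with respect to the standard basis) has the form Pᵉ · [[α, β, γ], [−β, α, δ], [0, 0, 1]], where P = [[0,1,0],[1,0,0],[0,0,−1]], ε ∈ {0,1}, and α, β, γ, δ ∈ ℝ with α² + β² ≠ 0. -/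
open Matrix

/-- For k ≠ 0 and the bracket [x,y] = (−k(x₂y₃−x₃y₂), k(x₁y₃−x₃y₁), 0)
on ℝ³ (the Lie bracket of 𝔰₂ in the basis f₁,f₂,f₃), an invertible linear map L
(given by its matrix acting on column vectors) preserves the bracket iff its matrix is
Pᵉ·[[α,β,γ],[−β,α,δ],[0,0,1]] with P = [[0,1,0],[1,0,0],[0,0,−1]], ε ∈ {0,1}, and
α,β,γ,δ ∈ ℝ, α²+β² ≠ 0. -/
theorem stmt_9 (k : ℝ) (hk : k ≠ 0)
    (bracket : (Fin 3 → ℝ) → (Fin 3 → ℝ) → (Fin 3 → ℝ))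
    (hbr : ∀ x y : Fin 3 → ℝ,
      bracket x y = ![-(k * (x 1 * y 2 - x 2 * y 1)), k * (x 0 * y 2 - x 2 * y 0), 0])
    (L : Matrix (Fin 3) (Fin 3) ℝ) (hL : IsUnit L.det) :
    (∀ x y : Fin 3 → ℝ, L.mulVec (bracket x y) = bracket (L.mulVec x) (L.mulVec y)) ↔
      ∃ ε : ℕ, ε ∈ ({0, 1} : Set ℕ) ∧ ∃ α β γ δ : ℝ, α ^ 2 + β ^ 2 ≠ 0 ∧
        L = (!![0, 1, 0; 1, 0, 0; 0, 0, -1] : Matrix (Fin 3) (Fin 3) ℝ) ^ ε *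
          !![α, β, γ; -β, α, δ; 0, 0, 1] := by
  have hdet : L.det ≠ 0 := hL.ne_zero
  rw [Matrix.det_fin_three] at hdet
  constructor
  · intro h
    have h02 := h ![1,0,0] ![0,0,1]
    have h12 := h ![0,1,0] ![0,0,1]
    simp only [hbr] at h02 h12
    have e0 := congrFun h02 0
    have e1 := congrFun h02 1
    have e2 := congrFun h02 2
    have f0 := congrFun h12 0
    have f1 := congrFun h12 1
    have f2 := congrFun h12 2
    simp [Matrix.mulVec, dotProduct, Fin.sum_univ_three] at e0 e1 e2 f0 f1 f2
    have hH : L 2 1 = 0 := e2.resolve_right hk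
    have hG : L 2 0 = 0 := f2.resolve_right hk
    rw [hG] at e0 e1
    rw [hH] at f0 f1
    rw [hG, hH] at hdet
    clear h02 h12 e2 f2
    have eb : L 0 1 = -(L 1 0 * L 2 2) := by
      have := mul_right_cancel₀ hk (show L 0 1 * k = (-(L 1 0 * L 2 2)) * k by linear_combination e0)
      linarith
    have ee : L 1 1 = L 0 0 * L 2 2 := by
      have := mul_right_cancel₀ hk (show L 1 1 * k = (L 0 0 * L 2 2) * k by linear_combination e1)
      linarith
    have ea : L 0 0 = L 1 1 * L 2 2 := by
      have := mul_right_cancel₀ hk (show L 0 0 * k = (L 1 1 * L 2 2) * k by linear_combination f0)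
      linarith
    have ed : L 1 0 = -(L 0 1 * L 2 2) := by
      have := mul_right_cancel₀ hk (show L 1 0 * k = (-(L 0 1 * L 2 2)) * k by linear_combination -f1)
      linarith
    have hdet' : (L 0 0 * L 1 1 - L 0 1 * L 1 0) * L 2 2 ≠ 0 := by
      intro hc; apply hdet; linear_combination hc
    have hne : L 0 0 * L 1 1 - L 0 1 * L 1 0 ≠ 0 := fun hc => hdet' (by rw [hc]; ring)
    have ha : L 0 0 * (L 2 2 ^ 2 - 1) = 0 := by
      linear_combination (-1 : ℝ) * ea - L 2 2 * ee
    have hb : L 0 1 * (L 2 2 ^ 2 - 1) = 0 := by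
      linear_combination L 2 2 * ed - eb
    have key : (L 0 0 * L 1 1 - L 0 1 * L 1 0) * (L 2 2 ^ 2 - 1) = 0 := by
      linear_combination L 1 1 * ha - L 1 0 * hb
    have hi2 : L 2 2 ^ 2 - 1 = 0 := (mul_eq_zero.1 key).resolve_left hne
    have hii : L 2 2 = 1 ∨ L 2 2 = -1 := by
      rcases mul_eq_zero.1 (show (L 2 2 - 1) * (L 2 2 + 1) = 0 by linear_combination hi2) with h' | h'
      · left; linarith
      · right; linarith
    rcases hii with hi1 | hi1
    · rw [hi1] at ee ed
      refine ⟨0, by simp, L 0 0, L 0 1, L 0 2, L 1 2, ?_, ?_⟩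
      · intro hc; apply hne
        linear_combination hc + L 0 0 * ee - L 0 1 * ed
      · rw [pow_zero, one_mul]
        ext i j
        fin_cases i <;> fin_cases j <;> simp [hG, hH, hi1, ee, ed]
    · rw [hi1] at ee ed
      refine ⟨1, by simp, L 0 1, -(L 0 0), L 1 2, L 0 2, ?_, ?_⟩
      · intro hc; apply hne
        linear_combination L 0 0 * ee - L 0 1 * ed - hc
      · rw [pow_one]
        ext i j
        fin_cases i <;> fin_cases j <;>
          simp [Matrix.mul_apply, Fin.sum_univ_three, hG, hH, hi1, ee, ed]
  · rintro ⟨ε, hε, α, β, γ, δ, hαβ, rfl⟩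
    intro x y
    simp only [hbr]
    rcases hε with rfl | rfl
    · funext j
      fin_cases j <;>
        simp [Matrix.mulVec, dotProduct, Fin.sum_univ_three, Matrix.mul_apply] <;> ring
    · funext j
      fin_cases j <;>
        simp [Matrix.mulVec, dotProduct, Fin.sum_univ_three, Matrix.mul_apply] <;> ring
end

section
/- Fix k ∈ ℝ with k ≠ 0 and let ψ_k : ℝ³ × ℝ³ → ℝ³ be defined by ψ_k(u, v) = (u₁ + v₁cos(ku₃) + v₂sin(ku₃), u₂ − v₁sin(ku₃) + v₂cos(ku₃), u₃ + v₃). Let α, β, γ, δ ∈ ℝ with α² + β² ≠ 0 and ε ∈ {0,1}, and define φ : ℝ³ → ℝ³ by: if ε = 0, φ(v) = (αv₁ + βv₂ + (γ/k)sin(kv₃) + (δ/k)(1 − cos(kv₃)), −βv₁ + αv₂ − (γ/k)(1 − cos(kv₃)) + (δ/k)sin(kv₃), v₃); and if ε = 1, φ(v) = (−βv₁ + αv₂ − (γ/k)(1 − cos(kv₃)) + (δ/k)sin(kv₃), αv₁ + βv₂ + (γ/k)sin(kv₃) + (δ/k)(1 − cos(kv₃)), −v₃). Then φ is a bijection of ℝ³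 and φ(ψ_k(u, v)) = ψ_k(φ(u), φ(v)) for all u, v ∈ ℝ³; i.e. φ is an automorphism of the group (ℝ³, ψ_k). -/
set_option maxHeartbeats 1000000


open Real

/-- For k ≠ 0 with group operation ψ_k on ℝ³, the map φ determined by
ε ∈ {0,1} and α,β,γ,δ ∈ ℝ with α²+β² ≠ 0 (by the two displayed formulas) is a
bijection of ℝ³ and an automorphism of the group (ℝ³, ψ_k). -/
theorem stmt_10 (k : ℝ) (hk : k ≠ 0)
    (ψ : ℝ × ℝ × ℝ → ℝ × ℝ × ℝ → ℝ × ℝ × ℝ)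
    (hψ : ∀ u v : ℝ × ℝ × ℝ,
      ψ u v = (u.1 + v.1 * Real.cos (k * u.2.2) + v.2.1 * Real.sin (k * u.2.2),
               u.2.1 - v.1 * Real.sin (k * u.2.2) + v.2.1 * Real.cos (k * u.2.2),
               u.2.2 + v.2.2))
    (α β γ δ : ℝ) (hαβ : α ^ 2 + β ^ 2 ≠ 0) (ε : ℕ) (hε : ε ∈ ({0, 1} : Set ℕ))
    (φ : ℝ × ℝ × ℝ → ℝ × ℝ × ℝ)
    (hφ0 : ε = 0 → ∀ v : ℝ × ℝ × ℝ,
      φ v = (α * v.1 + β * v.2.1 + (γ / k) * Real.sin (k * v.2.2)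
               + (δ / k) * (1 - Real.cos (k * v.2.2)),
             -β * v.1 + α * v.2.1 - (γ / k) * (1 - Real.cos (k * v.2.2))
               + (δ / k) * Real.sin (k * v.2.2),
             v.2.2))
    (hφ1 : ε = 1 → ∀ v : ℝ × ℝ × ℝ,
      φ v = (-β * v.1 + α * v.2.1 - (γ / k) * (1 - Real.cos (k * v.2.2))
               + (δ / k) * Real.sin (k * v.2.2),
             α * v.1 + β * v.2.1 + (γ / k) * Real.sin (k * v.2.2)
               + (δ / k) * (1 - Real.cos (k * v.2.2)),
             -v.2.2)) :
    Function.Bijective φ ∧ ∀ u v : ℝ × ℝ × ℝ, φ (ψ u v) = ψ (φ u) (φ v) := by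
  have hd : α ^ 2 + β ^ 2 ≠ 0 := hαβ
  rcases hε with hε | hε
  · -- ε = 0
    have hφ := hφ0 hε
    constructor
    · rw [Function.bijective_iff_has_inverse]
      refine ⟨fun w => (
        (α * (w.1 - ((γ / k) * Real.sin (k * w.2.2) + (δ / k) * (1 - Real.cos (k * w.2.2))))
          - β * (w.2.1 - (-(γ / k) * (1 - Real.cos (k * w.2.2)) + (δ / k) * Real.sin (k * w.2.2))))
          / (α ^ 2 + β ^ 2),
        (β * (w.1 - ((γ / k) * Real.sin (k * w.2.2) + (δ / k) * (1 - Real.cos (k * w.2.2))))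
          + α * (w.2.1 - (-(γ / k) * (1 - Real.cos (k * w.2.2)) + (δ / k) * Real.sin (k * w.2.2))))
          / (α ^ 2 + β ^ 2),
        w.2.2), ?_, ?_⟩
      · intro v
        simp only [hφ]
        refine Prod.ext ?_ (Prod.ext ?_ rfl) <;> field_simp <;> ring
      · intro w
        simp only [hφ]
        refine Prod.ext ?_ (Prod.ext ?_ rfl) <;> field_simp <;> ring
    · intro u v
      simp only [hψ, hφ, mul_add, Real.sin_add, Real.cos_add]
      refine Prod.ext ?_ (Prod.ext ?_ rfl) <;> ring
  · -- ε = 1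
    simp only [Set.mem_singleton_iff] at hε
    have hφ := hφ1 hε
    constructor
    · rw [Function.bijective_iff_has_inverse]
      refine ⟨fun w => (
        (α * (w.2.1 - ((γ / k) * Real.sin (k * (-w.2.2)) + (δ / k) * (1 - Real.cos (k * (-w.2.2)))))
          - β * (w.1 - (-(γ / k) * (1 - Real.cos (k * (-w.2.2))) + (δ / k) * Real.sin (k * (-w.2.2)))))
          / (α ^ 2 + β ^ 2),
        (β * (w.2.1 - ((γ / k) * Real.sin (k * (-w.2.2)) + (δ / k) * (1 - Real.cos (k * (-w.2.2)))))
          + α * (w.1 - (-(γ / k) * (1 - Real.cos (k * (-w.2.2))) + (δ / k) * Real.sin (k * (-w.2.2)))))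
          / (α ^ 2 + β ^ 2),
        -w.2.2), ?_, ?_⟩
      · intro v
        simp only [hφ, neg_neg]
        refine Prod.ext ?_ (Prod.ext ?_ rfl) <;> field_simp <;> ring
      · intro w
        simp only [hφ, neg_neg]
        refine Prod.ext ?_ (Prod.ext ?_ rfl) <;> field_simp <;> ring
    · intro u v
      simp only [hψ, hφ, neg_add, mul_add, mul_neg, Real.sin_add, Real.cos_add,
        Real.sin_neg, Real.cos_neg]
      refine Prod.ext ?_ (Prod.ext ?_ rfl) <;> ring
end

section
/- Fix k ∈ ℝ with k ≠ 0 and let ψ_k : ℝ³ × ℝ³ → ℝ³ be defined by ψ_k(u, v) = (u₁ + v₁cos(ku₃) + v₂sin(ku₃), u₂ − v₁sin(ku₃) + v₂cos(ku₃), u₃ + v₃). Define F(k, t) ∈ M₂(ℝ) by F(k, t) = (1/(kt))·[[sin(kt), 1 − cos(kt)], [−(1 − cos(kt)), sin(kt)]] for t ≠ 0 and F(k, 0) = I₂, and define the exponential map E : ℝ³ → ℝ³ by E(u₁, u₂, u₃) = (first two components F(k, u₃)·(u₁, u₂)ᵀ, third component u₃). Then for every u ∈ ℝ³ and all s, t ∈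 ℝ one has ψ_k(E(t·u), E(s·u)) = E((t + s)·u); i.e. t ↦ E(t·u) is a one-parameter subgroup of the group (ℝ³, ψ_k). -/
open Matrix

/-- For k ≠ 0, with ψ_k the group operation of S₂ and E the exponential
map built from F(k,·), the curve t ↦ E(t·u) is a one-parameter subgroup:
ψ_k(E(t·u), E(s·u)) = E((t+s)·u) for all u ∈ ℝ³ and s,t ∈ ℝ. -/
theorem stmt_11 (k : ℝ) (hk : k ≠ 0)
    (ψ : ℝ × ℝ × ℝ → ℝ × ℝ × ℝ → ℝ × ℝ × ℝ)
    (hψ : ∀ u v : ℝ × ℝ × ℝ,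
      ψ u v = (u.1 + v.1 * Real.cos (k * u.2.2) + v.2.1 * Real.sin (k * u.2.2),
               u.2.1 - v.1 * Real.sin (k * u.2.2) + v.2.1 * Real.cos (k * u.2.2),
               u.2.2 + v.2.2))
    (F : ℝ → Matrix (Fin 2) (Fin 2) ℝ)
    (hF0 : F 0 = 1)
    (hF : ∀ t : ℝ, t ≠ 0 →
      F t = (1 / (k * t)) •
        !![Real.sin (k * t), 1 - Real.cos (k * t);
           -(1 - Real.cos (k * t)), Real.sin (k * t)])
    (E : ℝ × ℝ × ℝ → ℝ × ℝ × ℝ)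
    (hE : ∀ u : ℝ × ℝ × ℝ,
      E u = (F u.2.2 0 0 * u.1 + F u.2.2 0 1 * u.2.1,
             F u.2.2 1 0 * u.1 + F u.2.2 1 1 * u.2.1,
             u.2.2)) :
    ∀ (u : ℝ × ℝ × ℝ) (s t : ℝ), ψ (E (t • u)) (E (s • u)) = E ((t + s) • u) := by
  rintro ⟨a, b, c⟩ s t
  simp only [Prod.smul_def, smul_eq_mul]
  by_cases hc : c = 0
  · subst hc
    simp only [mul_zero]
    rw [hE, hE, hE]
    simp only [hF0, Matrix.one_apply_eq, Matrix.one_apply_ne (by decide : (0:Fin 2) ≠ 1),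
      Matrix.one_apply_ne (by decide : (1:Fin 2) ≠ 0)]
    rw [hψ]
    simp only [mul_zero, Real.sin_zero, Real.cos_zero]
    refine Prod.ext ?_ (Prod.ext ?_ ?_) <;> simp <;> ring
  · have key : ∀ r : ℝ, E (r * a, r * b, r * c) =
        ((Real.sin (k * r * c) * a + (1 - Real.cos (k * r * c)) * b) / (k * c),
         (-(1 - Real.cos (k * r * c)) * a + Real.sin (k * r * c) * b) / (k * c),
         r * c) := by
      intro r
      by_cases hr : r = 0
      · subst hr
        rw [hE]
        simp [hF0, Matrix.one_apply]
      · rw [hE]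
        rw [show ((r * a, r * b, r * c) : ℝ × ℝ × ℝ).2.2 = r * c from rfl,
          hF (r * c) (mul_ne_zero hr hc)]
        simp only [Matrix.smul_apply, Matrix.cons_val', Matrix.cons_val_zero,
          Matrix.cons_val_one, Matrix.head_cons, Matrix.empty_val',
          Matrix.cons_val_fin_one, Matrix.head_fin_const, smul_eq_mul, Matrix.of_apply]
        refine Prod.ext ?_ (Prod.ext ?_ rfl) <;>
        · field_simp
    rw [key t, key s, key (t + s), hψ]
    have h3 : k * (t + s) * c = k * t * c + k * s * c := by ring
    simp only []
    rw [h3, Real.sin_add, Real.cos_add]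
    refine Prod.ext ?_ (Prod.ext ?_ ?_)
    · show _ + _ + _ = _
      field_simp
      ring
    · show _ - _ + _ = _
      field_simp
      ring
    · show t * c + s * c = (t + s) * c
      ring
end

section
/- Fix k ∈ ℝ with k ≠ 0 and let B = [[0, k], [−k, 0]]. For every t ∈ ℝ, the series Σ_{j=0}^∞ (tB)ʲ/(j+1)! converges and equals F(k, t), where F(k, t) = (1/(kt))·[[sin(kt), 1 − cos(kt)], [−(1 − cos(kt)), sin(kt)]] for t ≠ 0 and F(k, 0) = I₂. -/
open Matrix

/-- For k ≠ 0, B = [[0,k],[−k,0]] and any t ∈ ℝ, the series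
Σ_{j=0}^∞ (tB)ʲ/(j+1)! converges (HasSum) to F(k,t), where F(k,t) is the matrix
(1/(kt))·[[sin kt, 1−cos kt],[−(1−cos kt), sin kt]] for t ≠ 0 and I₂ for t = 0. -/
theorem stmt_12 (k : ℝ) (hk : k ≠ 0)
    (B : Matrix (Fin 2) (Fin 2) ℝ) (hB : B = !![0, k; -k, 0])
    (F : ℝ → Matrix (Fin 2) (Fin 2) ℝ)
    (hF0 : F 0 = 1)
    (hF : ∀ t : ℝ, t ≠ 0 →
      F t = (1 / (k * t)) •
        !![Real.sin (k * t), 1 - Real.cos (k * t);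
           -(1 - Real.cos (k * t)), Real.sin (k * t)]) :
    ∀ t : ℝ,
      HasSum (fun j : ℕ => (((j + 1).factorial : ℝ))⁻¹ • (t • B) ^ j) (F t) := by
  intro t
  rcases eq_or_ne t 0 with rfl | ht
  · rw [hF0]
    have h0 : (((0 + 1 : ℕ).factorial : ℝ))⁻¹ • ((0 : ℝ) • B) ^ 0 = 1 := by simp
    have := hasSum_single (f := fun j : ℕ => (((j + 1).factorial : ℝ))⁻¹ • ((0:ℝ) • B) ^ j)
      0 (fun b hb => by simp only [zero_smul, zero_pow hb, smul_zero])
    simpa [h0] using this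
  · set x := k * t with hx_def
    have hx : x ≠ 0 := mul_ne_zero hk ht
    set A := t • B with hA_def
    -- A ^ 2 = -(x^2) • 1
    have hA2 : A ^ 2 = (-(x ^ 2)) • (1 : Matrix (Fin 2) (Fin 2) ℝ) := by
      rw [hA_def, hB, pow_two]
      ext i j
      fin_cases i <;> fin_cases j <;>
        simp [Matrix.mul_apply, Fin.sum_univ_two, Matrix.one_apply, hx_def] <;> ring
    have hAeven : ∀ m : ℕ, A ^ (2 * m) = ((-(x ^ 2)) ^ m) • (1 : Matrix (Fin 2) (Fin 2) ℝ) := by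
      intro m; rw [pow_mul, hA2, smul_pow, one_pow]
    have hAodd : ∀ m : ℕ, A ^ (2 * m + 1) = ((-(x ^ 2)) ^ m) • A := by
      intro m; rw [pow_succ, hAeven m, smul_mul_assoc, one_mul]
    -- scalar sum for even terms
    have hs1 : HasSum (fun m : ℕ => (-(x ^ 2)) ^ m / ((2 * m + 1).factorial : ℝ))
        (Real.sin x / x) := by
      have h := (Real.hasSum_sin x).div_const x
      have hfun : (fun m : ℕ => (-1:ℝ) ^ m * x ^ (2 * m + 1) / ((2 * m + 1).factorial : ℝ) / x)
          = fun m : ℕ => (-(x ^ 2)) ^ m / ((2 * m + 1).factorial : ℝ) := by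
        funext m
        have hf : ((2 * m + 1).factorial : ℝ) ≠ 0 := Nat.cast_ne_zero.2 (Nat.factorial_ne_zero _)
        have hx2 : (-(x ^ 2)) ^ m = (-1 : ℝ) ^ m * x ^ (2 * m) := by
          rw [neg_pow, pow_mul]
        rw [hx2]
        field_simp
        ring
      rwa [hfun] at h
    -- scalar sum for odd terms
    have hs2 : HasSum (fun m : ℕ => (-(x ^ 2)) ^ m / ((2 * m + 2).factorial : ℝ))
        ((1 - Real.cos x) / x ^ 2) := by
      have h := Real.hasSum_cos x
      have h1 : HasSum (fun m : ℕ =>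
          (-1:ℝ) ^ (m + 1) * x ^ (2 * (m + 1)) / ((2 * (m + 1)).factorial : ℝ))
          (Real.cos x - 1) := by
        have := (hasSum_nat_add_iff'
          (f := fun n : ℕ => (-1:ℝ) ^ n * x ^ (2 * n) / ((2 * n).factorial : ℝ)) 1).mpr h
        simpa using this
      have h2 := (h1.neg).div_const (x ^ 2)
      have hfun : (fun m : ℕ =>
          -((-1:ℝ) ^ (m + 1) * x ^ (2 * (m + 1)) / ((2 * (m + 1)).factorial : ℝ)) / x ^ 2)
          = fun m : ℕ => (-(x ^ 2)) ^ m / ((2 * m + 2).factorial : ℝ) := by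
        funext m
        have hf : ((2 * m + 2).factorial : ℝ) ≠ 0 := Nat.cast_ne_zero.2 (Nat.factorial_ne_zero _)
        have h22 : 2 * (m + 1) = 2 * m + 2 := by ring
        have hx2 : (-(x ^ 2)) ^ m = (-1 : ℝ) ^ m * x ^ (2 * m) := by
          rw [neg_pow, pow_mul]
        rw [h22, hx2]
        field_simp
        ring
      rw [hfun] at h2
      convert h2 using 1
      case e'_6 => ring
      case e'_3 => rfl
    -- matrix sums
    have he : HasSum (fun m : ℕ => (((2 * m + 1).factorial : ℝ))⁻¹ • A ^ (2 * m))
        ((Real.sin x / x) • (1 : Matrix (Fin 2) (Fin 2) ℝ)) := by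
      have h := hs1.smul_const (1 : Matrix (Fin 2) (Fin 2) ℝ)
      have hfun : (fun m : ℕ => (((2 * m + 1).factorial : ℝ))⁻¹ • A ^ (2 * m))
          = fun m : ℕ => ((-(x ^ 2)) ^ m / ((2 * m + 1).factorial : ℝ)) •
              (1 : Matrix (Fin 2) (Fin 2) ℝ) := by
        funext m
        rw [hAeven m, smul_smul, div_eq_mul_inv, mul_comm]
      rwa [hfun]
    have ho : HasSum (fun m : ℕ => (((2 * m + 2).factorial : ℝ))⁻¹ • A ^ (2 * m + 1))
        (((1 - Real.cos x) / x ^ 2) • A) := by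
      have h := hs2.smul_const A
      have hfun : (fun m : ℕ => (((2 * m + 2).factorial : ℝ))⁻¹ • A ^ (2 * m + 1))
          = fun m : ℕ => ((-(x ^ 2)) ^ m / ((2 * m + 2).factorial : ℝ)) • A := by
        funext m
        rw [hAodd m, smul_smul, div_eq_mul_inv, mul_comm]
      rwa [hfun]
    have hsum := HasSum.even_add_odd
      (f := fun j : ℕ => (((j + 1).factorial : ℝ))⁻¹ • A ^ j)
      (by simpa using he) (by
        have : ∀ m : ℕ, 2 * m + 1 + 1 = 2 * m + 2 := fun m => by ring
        simpa [this] using ho)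
    have hAe : A = !![0, x; -x, 0] := by
      rw [hA_def, hB]
      ext i j
      fin_cases i <;> fin_cases j <;> simp [hx_def] <;> ring
    convert hsum using 1
    rw [hF t ht, hAe, ← hx_def]
    ext i j
    fin_cases i <;> fin_cases j <;>
      simp [Matrix.one_apply, Matrix.smul_apply] <;> field_simp <;> ring
end

section
/- Fix k ∈ ℝ with k ≠ 0, define F(k, t) ∈ M₂(ℝ) by F(k, t) = (1/(kt))·[[sin(kt), 1 − cos(kt)], [−(1 − cos(kt)), sin(kt)]] for t ≠ 0 and F(k, 0) = I₂, and define E : ℝ³ → ℝ³ by E(u₁, u₂, u₃) = (F(k, u₃)·(u₁, u₂)ᵀ, u₃). Then E is not surjective: for every nonzero integer n, no point (v₁, v₂, 2πn/k) with (v₁, v₂) ≠ (0, 0) lies in the range of E; in particular (1, 0, 2π/k) ∉ range(E). Indeed, if u₃ = 2πn/k with n a nonzero integer then F(k, u₃) is the zero matrix and E(u) = (0, 0, u₃) for all u₁, u₂. -/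
open Matrix Real

/-- For k ≠ 0 the exponential map E of 𝔰₂ is not surjective: if
u₃ = 2πn/k with n a nonzero integer then F(k,u₃) = 0 and E(u) = (0,0,u₃); hence no
point (v₁,v₂,2πn/k) with (v₁,v₂) ≠ (0,0) is in the range of E; in particular
(1,0,2π/k) ∉ range E. -/
theorem stmt_13 (k : ℝ) (hk : k ≠ 0)
    (F : ℝ → Matrix (Fin 2) (Fin 2) ℝ)
    (hF0 : F 0 = 1)
    (hF : ∀ t : ℝ, t ≠ 0 →
      F t = (1 / (k * t)) •
        !![Real.sin (k * t), 1 - Real.cos (k * t);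
           -(1 - Real.cos (k * t)), Real.sin (k * t)])
    (E : ℝ × ℝ × ℝ → ℝ × ℝ × ℝ)
    (hE : ∀ u : ℝ × ℝ × ℝ,
      E u = (F u.2.2 0 0 * u.1 + F u.2.2 0 1 * u.2.1,
             F u.2.2 1 0 * u.1 + F u.2.2 1 1 * u.2.1,
             u.2.2)) :
    (∀ n : ℤ, n ≠ 0 → F (2 * Real.pi * n / k) = 0 ∧
      ∀ u₁ u₂ : ℝ, E (u₁, u₂, 2 * Real.pi * n / k) = (0, 0, 2 * Real.pi * n / k)) ∧
    (∀ n : ℤ, n ≠ 0 → ∀ v₁ v₂ : ℝ, (v₁, v₂) ≠ ((0 : ℝ), (0 : ℝ)) →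
      ((v₁, v₂, 2 * Real.pi * n / k) : ℝ × ℝ × ℝ) ∉ Set.range E) ∧
    ((1, 0, 2 * Real.pi / k) : ℝ × ℝ × ℝ) ∉ Set.range E ∧
    ¬ Function.Surjective E := by
  have key : ∀ n : ℤ, n ≠ 0 → F (2 * Real.pi * n / k) = 0 ∧
      ∀ u₁ u₂ : ℝ, E (u₁, u₂, 2 * Real.pi * n / k) = (0, 0, 2 * Real.pi * n / k) := by
    intro n hn
    have ht : (2 * Real.pi * n / k : ℝ) ≠ 0 := by
      exact div_ne_zero (mul_ne_zero (mul_ne_zero two_ne_zero Real.pi_ne_zero)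
        (Int.cast_ne_zero.mpr hn)) hk
    have hkt : k * (2 * Real.pi * n / k) = 2 * Real.pi * n := by field_simp
    have hsin : Real.sin (k * (2 * Real.pi * n / k)) = 0 := by
      rw [hkt]
      have : (2 * Real.pi * n : ℝ) = ((2 * n : ℤ) : ℝ) * Real.pi := by push_cast; ring
      rw [this, Real.sin_int_mul_pi]
    have hcos : Real.cos (k * (2 * Real.pi * n / k)) = 1 := by
      rw [hkt]
      have : (2 * Real.pi * n : ℝ) = n * (2 * Real.pi) := by ring
      rw [this]
      exact Real.cos_int_mul_two_pi n
    have hFz : F (2 * Real.pi * n / k) = 0 := by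
      rw [hF _ ht, hsin, hcos]
      norm_num
      ext i j
      fin_cases i <;> fin_cases j <;> simp
    refine ⟨hFz, fun u₁ u₂ => ?_⟩
    rw [hE]
    simp [hFz]
  have notrange : ∀ n : ℤ, n ≠ 0 → ∀ v₁ v₂ : ℝ, (v₁, v₂) ≠ ((0 : ℝ), (0 : ℝ)) →
      ((v₁, v₂, 2 * Real.pi * n / k) : ℝ × ℝ × ℝ) ∉ Set.range E := by
    intro n hn v₁ v₂ hv ⟨u, hu⟩
    obtain ⟨hFz, -⟩ := key n hn
    rw [hE u] at hu
    have h3 : u.2.2 = 2 * Real.pi * n / k := (congrArg (fun p => p.2.2) hu)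
    rw [h3, hFz] at hu
    simp at hu
    exact hv (by simp [← hu.1, ← hu.2])
  have hone : ((1, 0, 2 * Real.pi / k) : ℝ × ℝ × ℝ) ∉ Set.range E := by
    have := notrange 1 one_ne_zero 1 0 (by norm_num)
    simpa using this
  exact ⟨key, notrange, hone, fun hs => hone (hs _)⟩
end

section
/- Let θ = [[a, b], [c, d]] ∈ SL₂(ℤ) and define the 4×4 real matrices A, B, C by: A has top-left 2×2 block θ, entries A₃₃ = A₃₄ = A₄₄ = 1, and all other entries 0; B = I₄ + E₁₄; C = I₄ + E₂₄ (where E_{ij} is the matrix with 1 in position (i,j) and 0 elsewhere). Then A, B, C are invertible, B and C commute, and the commutators satisfy (A, B) := A⁻¹B⁻¹AB = B^{1−d}·C^{c} and (A, C) := A⁻¹C⁻¹AC = B^{b}·C^{1−a}. -/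
open Matrix

lemma aux_mul (i j : Fin 4) (hj : (3:Fin 4) ≠ j) (s t : ℝ) :
    (1 + single i (3:Fin 4) s) * (1 + single j (3:Fin 4) t)
      = 1 + (single i (3:Fin 4) s + single j (3:Fin 4) t) := by
  have h0 : single i (3:Fin 4) s * single j (3:Fin 4) t = 0 :=
    single_mul_single_of_ne (c := s) i (3:Fin 4) j hj t
  rw [mul_add, add_mul, add_mul, mul_one, mul_one, one_mul, h0]
  abel

lemma aux_inv (i : Fin 4) (hi : (3:Fin 4) ≠ i) :
    (1 + single i (3:Fin 4) (1:ℝ)) * (1 + single i (3:Fin 4) (-1:ℝ)) = 1 := by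
  rw [aux_mul i i hi, ← single_add]
  norm_num

lemma aux_zpow (i : Fin 4) (hi : (3:Fin 4) ≠ i) (n : ℤ) :
    (1 + single i (3:Fin 4) (1:ℝ)) ^ n = 1 + single i (3:Fin 4) (n:ℝ) := by
  have hinv := aux_inv i hi
  have hu : IsUnit (1 + single i (3:Fin 4) (1:ℝ)).det :=
    Matrix.isUnit_det_of_right_inverse hinv
  have hBi : (1 + single i (3:Fin 4) (1:ℝ))⁻¹
      = 1 + single i (3:Fin 4) (-1:ℝ) :=
    Matrix.inv_eq_right_inv hinv
  induction n using Int.induction_on with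
  | zero => simp
  | succ k ih =>
      rw [zpow_add_one hu, ih, aux_mul i i hi, ← single_add]
      push_cast
      ring_nf
  | pred k ih =>
      rw [show (-(k:ℤ) - 1) = (-(k:ℤ)) - 1 by ring, zpow_sub_one hu, ih, hBi,
        aux_mul i i hi, ← single_add]
      push_cast
      ring_nf

lemma aux_B03 (t : ℝ) : (1:Matrix (Fin 4) (Fin 4) ℝ) + single (0:Fin 4) (3:Fin 4) t
    = !![1,0,0,t; 0,1,0,0; 0,0,1,0; 0,0,0,1] := by
  ext i j
  fin_cases i <;> fin_cases j <;>
    simp [Matrix.single, Matrix.one_apply, Matrix.vecHead, Matrix.vecTail]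

lemma aux_B13 (t : ℝ) : (1:Matrix (Fin 4) (Fin 4) ℝ) + single (1:Fin 4) (3:Fin 4) t
    = !![1,0,0,0; 0,1,0,t; 0,0,1,0; 0,0,0,1] := by
  ext i j
  fin_cases i <;> fin_cases j <;>
    simp [Matrix.single, Matrix.one_apply, Matrix.vecHead, Matrix.vecTail]


lemma aux_comm1 (a b c d s t : ℝ) (h : a*d - b*c = 1) (hs : s = 1 - d) (ht : t = c) :
    !![d,-b,0,0; -c,a,0,0; 0,0,1,-1; 0,0,0,1] * !![1,0,0,-1; 0,1,0,0; 0,0,1,0; 0,0,0,1]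
      * !![a,b,0,0; c,d,0,0; 0,0,1,1; 0,0,0,1] * !![1,0,0,1; 0,1,0,0; 0,0,1,0; 0,0,0,1]
    = !![1,0,0,s; 0,1,0,0; 0,0,1,0; 0,0,0,1] * !![1,0,0,0; 0,1,0,t; 0,0,1,0; 0,0,0,1] := by
  rw [hs, ht]
  have e1 : !![d,-b,0,0; -c,a,0,0; 0,0,1,-1; 0,0,0,1] * !![1,0,0,-1; 0,1,0,0; 0,0,1,0; 0,0,0,1]
      = !![d,-b,0,-d; -c,a,0,c; 0,0,1,-1; 0,0,0,1] := by
    ext i j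
    fin_cases i <;> fin_cases j <;>
      simp [Matrix.mul_apply, Fin.sum_univ_four, Matrix.vecHead, Matrix.vecTail]
  have e2 : !![d,-b,0,-d; -c,a,0,c; 0,0,1,-1; 0,0,0,1] * !![a,b,0,0; c,d,0,0; 0,0,1,1; 0,0,0,1]
      = !![1,0,0,-d; 0,1,0,c; 0,0,1,0; 0,0,0,1] := by
    ext i j
    fin_cases i <;> fin_cases j <;>
      simp [Matrix.mul_apply, Fin.sum_univ_four, Matrix.vecHead, Matrix.vecTail] <;>
      nlinarith [h]
  have e3 : !![(1:ℝ),0,0,-d; 0,1,0,c; 0,0,1,0; 0,0,0,1] * !![1,0,0,1; 0,1,0,0; 0,0,1,0; 0,0,0,1]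
      = !![1,0,0,1-d; 0,1,0,c; 0,0,1,0; 0,0,0,1] := by
    ext i j
    fin_cases i <;> fin_cases j <;>
      simp [Matrix.mul_apply, Fin.sum_univ_four, Matrix.vecHead, Matrix.vecTail] <;> ring
  have e4 : !![(1:ℝ),0,0,1-d; 0,1,0,0; 0,0,1,0; 0,0,0,1] * !![1,0,0,0; 0,1,0,c; 0,0,1,0; 0,0,0,1]
      = !![1,0,0,1-d; 0,1,0,c; 0,0,1,0; 0,0,0,1] := by
    ext i j
    fin_cases i <;> fin_cases j <;>
      simp [Matrix.mul_apply, Fin.sum_univ_four, Matrix.vecHead, Matrix.vecTail] <;> ring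
  rw [e1, e2, e3, e4]

lemma aux_comm2 (a b c d s t : ℝ) (h : a*d - b*c = 1) (hs : s = b) (ht : t = 1 - a) :
    !![d,-b,0,0; -c,a,0,0; 0,0,1,-1; 0,0,0,1] * !![1,0,0,0; 0,1,0,-1; 0,0,1,0; 0,0,0,1]
      * !![a,b,0,0; c,d,0,0; 0,0,1,1; 0,0,0,1] * !![1,0,0,0; 0,1,0,1; 0,0,1,0; 0,0,0,1]
    = !![1,0,0,s; 0,1,0,0; 0,0,1,0; 0,0,0,1] * !![1,0,0,0; 0,1,0,t; 0,0,1,0; 0,0,0,1] := by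
  rw [hs, ht]
  have e1 : !![d,-b,0,0; -c,a,0,0; 0,0,1,-1; 0,0,0,1] * !![1,0,0,0; 0,1,0,-1; 0,0,1,0; 0,0,0,1]
      = !![d,-b,0,b; -c,a,0,-a; 0,0,1,-1; 0,0,0,1] := by
    ext i j
    fin_cases i <;> fin_cases j <;>
      simp [Matrix.mul_apply, Fin.sum_univ_four, Matrix.vecHead, Matrix.vecTail]
  have e2 : !![d,-b,0,b; -c,a,0,-a; 0,0,1,-1; 0,0,0,1] * !![a,b,0,0; c,d,0,0; 0,0,1,1; 0,0,0,1]
      = !![1,0,0,b; 0,1,0,-a; 0,0,1,0; 0,0,0,1] := by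
    ext i j
    fin_cases i <;> fin_cases j <;>
      simp [Matrix.mul_apply, Fin.sum_univ_four, Matrix.vecHead, Matrix.vecTail] <;>
      nlinarith [h]
  have e3 : !![(1:ℝ),0,0,b; 0,1,0,-a; 0,0,1,0; 0,0,0,1] * !![1,0,0,0; 0,1,0,1; 0,0,1,0; 0,0,0,1]
      = !![1,0,0,b; 0,1,0,1-a; 0,0,1,0; 0,0,0,1] := by
    ext i j
    fin_cases i <;> fin_cases j <;>
      simp [Matrix.mul_apply, Fin.sum_univ_four, Matrix.vecHead, Matrix.vecTail] <;> ring
  have e4 : !![(1:ℝ),0,0,b; 0,1,0,0; 0,0,1,0; 0,0,0,1] * !![1,0,0,0; 0,1,0,1-a; 0,0,1,0; 0,0,0,1]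
      = !![1,0,0,b; 0,1,0,1-a; 0,0,1,0; 0,0,0,1] := by
    ext i j
    fin_cases i <;> fin_cases j <;>
      simp [Matrix.mul_apply, Fin.sum_univ_four, Matrix.vecHead, Matrix.vecTail] <;> ring
  rw [e1, e2, e3, e4]

/-- For θ = [[a,b],[c,d]] ∈ SL₂(ℤ) and the 4×4 real matrices A, B, C
(A with top-left block θ, A₃₃ = A₃₄ = A₄₄ = 1; B = I₄ + E₁₄; C = I₄ + E₂₄): A, B, C
are invertible, B and C commute, and (A,B) = B^{1−d} C^{c}, (A,C) = B^{b} C^{1−a}. -/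
theorem stmt_14 (θ : Matrix (Fin 2) (Fin 2) ℤ) (hdet : θ.det = 1)
    (A B C : Matrix (Fin 4) (Fin 4) ℝ)
    (hA : A = !![(θ 0 0 : ℝ), (θ 0 1 : ℝ), 0, 0;
                 (θ 1 0 : ℝ), (θ 1 1 : ℝ), 0, 0;
                 0, 0, 1, 1;
                 0, 0, 0, 1])
    (hB : B = 1 + Matrix.single 0 3 (1 : ℝ))
    (hC : C = 1 + Matrix.single 1 3 (1 : ℝ)) :
    IsUnit A ∧ IsUnit B ∧ IsUnit C ∧
    B * C = C * B ∧
    A⁻¹ * B⁻¹ * A * B = B ^ ((1 : ℤ) - θ 1 1) * C ^ (θ 1 0 : ℤ) ∧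
    A⁻¹ * C⁻¹ * A * C = B ^ (θ 0 1 : ℤ) * C ^ ((1 : ℤ) - θ 0 0) := by
  have hdetR : (θ 0 0 : ℝ) * θ 1 1 - θ 0 1 * θ 1 0 = 1 := by
    rw [Matrix.det_fin_two] at hdet
    exact_mod_cast hdet
  subst hA hB hC
  have h30 : (3:Fin 4) ≠ 0 := by decide
  have h31 : (3:Fin 4) ≠ 1 := by decide
  have hAinv : !![(θ 0 0 : ℝ), (θ 0 1 : ℝ), 0, 0;
                 (θ 1 0 : ℝ), (θ 1 1 : ℝ), 0, 0;
                 0, 0, 1, 1;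
                 0, 0, 0, 1] *
      !![(θ 1 1 : ℝ), -(θ 0 1 : ℝ), 0, 0; -(θ 1 0 : ℝ), (θ 0 0 : ℝ), 0, 0;
         0, 0, 1, -1; 0, 0, 0, 1] = 1 := by
    ext i j
    fin_cases i <;> fin_cases j <;>
      simp [Matrix.mul_apply, Fin.sum_univ_four, Matrix.one_apply,
        Matrix.vecHead, Matrix.vecTail] <;>
      nlinarith [hdetR]
  have hAu : IsUnit !![(θ 0 0 : ℝ), (θ 0 1 : ℝ), 0, 0;
                 (θ 1 0 : ℝ), (θ 1 1 : ℝ), 0, 0;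
                 0, 0, 1, 1;
                 0, 0, 0, 1] := (Matrix.isUnit_iff_isUnit_det _).mpr
    (Matrix.isUnit_det_of_right_inverse hAinv)
  have hAi : (!![(θ 0 0 : ℝ), (θ 0 1 : ℝ), 0, 0;
                 (θ 1 0 : ℝ), (θ 1 1 : ℝ), 0, 0;
                 0, 0, 1, 1;
                 0, 0, 0, 1])⁻¹
      = !![(θ 1 1 : ℝ), -(θ 0 1 : ℝ), 0, 0; -(θ 1 0 : ℝ), (θ 0 0 : ℝ), 0, 0;
           0, 0, 1, -1; 0, 0, 0, 1] :=
    Matrix.inv_eq_right_inv hAinv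
  have hBu : IsUnit ((1:Matrix (Fin 4) (Fin 4) ℝ) + single (0:Fin 4) (3:Fin 4) (1:ℝ)) :=
    (Matrix.isUnit_iff_isUnit_det _).mpr (Matrix.isUnit_det_of_right_inverse (aux_inv 0 h30))
  have hCu : IsUnit ((1:Matrix (Fin 4) (Fin 4) ℝ) + single (1:Fin 4) (3:Fin 4) (1:ℝ)) :=
    (Matrix.isUnit_iff_isUnit_det _).mpr (Matrix.isUnit_det_of_right_inverse (aux_inv 1 h31))
  have hBi : ((1:Matrix (Fin 4) (Fin 4) ℝ) + single (0:Fin 4) (3:Fin 4) (1:ℝ))⁻¹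
      = 1 + single (0:Fin 4) (3:Fin 4) (-1:ℝ) :=
    Matrix.inv_eq_right_inv (aux_inv 0 h30)
  have hCi : ((1:Matrix (Fin 4) (Fin 4) ℝ) + single (1:Fin 4) (3:Fin 4) (1:ℝ))⁻¹
      = 1 + single (1:Fin 4) (3:Fin 4) (-1:ℝ) :=
    Matrix.inv_eq_right_inv (aux_inv 1 h31)
  refine ⟨hAu, hBu, hCu, ?_, ?_, ?_⟩
  · rw [aux_mul 0 1 h31, aux_mul 1 0 h30,
      add_comm (single (0:Fin 4) (3:Fin 4) (1:ℝ))]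
  · rw [hAi, hBi, aux_zpow 0 h30, aux_zpow 1 h31,
      aux_B03 (-1:ℝ), aux_B03 (1:ℝ), aux_B03 (((1:ℤ) - θ 1 1 : ℤ) : ℝ),
      aux_B13 ((θ 1 0 : ℤ) : ℝ)]
    exact aux_comm1 _ _ _ _ _ _ hdetR (by push_cast; ring) (by push_cast; ring)
  · rw [hAi, hCi, aux_zpow 0 h30, aux_zpow 1 h31,
      aux_B13 (-1:ℝ), aux_B13 (1:ℝ), aux_B03 ((θ 0 1 : ℤ) : ℝ),
      aux_B13 (((1:ℤ) - θ 0 0 : ℤ) : ℝ)]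
    exact aux_comm2 _ _ _ _ _ _ hdetR (by push_cast; ring) (by push_cast; ring)
end

section
/- Let θ = [[a, b], [c, d]] ∈ SL₂(ℤ) and let A, B, C be the 4×4 real matrices: A with top-left 2×2 block θ, entries A₃₃ = A₃₄ = A₄₄ = 1, other entries 0; B = I₄ + E₁₄; C = I₄ + E₂₄. Then the subgroup D_m of GL₄(ℝ) generated by {A, B, C} equals {A^Q B^M C^N : Q, M, N ∈ ℤ}, and for Q, M, N ∈ ℤ the element A^Q B^M C^N is the 4×4 matrix with top-left 2×2 block θ^Q, with fourth column ((θ^Q·(M, N)ᵀ)₁, (θ^Q·(M, N)ᵀ)₂, Q, 1)ᵀ, with (3,3) entry 1, and all other entries 0. Equivalently, with r : ℝ³ → M₄(ℝ) the parametrization r(x) having top-left block θ^{x₃} when x₃ ∈ ℤ and fourth column (x₁, x₂, x₃, 1)ᵀ, one has D_m = r(ℤ³): the discrete structure corresponding to D_m is the integer lattice ℤ³. -/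
open Matrix

namespace Stmt15

noncomputable def F (η : Matrix (Fin 2) (Fin 2) ℝ) (q : ℤ) (u : Fin 2 → ℝ) :
    Matrix (Fin 4) (Fin 4) ℝ :=
  !![(η ^ q) 0 0, (η ^ q) 0 1, 0, u 0;
     (η ^ q) 1 0, (η ^ q) 1 1, 0, u 1;
     0, 0, 1, (q : ℝ);
     0, 0, 0, 1]

lemma F_one (η : Matrix (Fin 2) (Fin 2) ℝ) : F η 0 0 = 1 := by
  ext i j
  fin_cases i <;> fin_cases j <;> simp [F, Matrix.one_apply, Matrix.vecHead, Matrix.vecTail]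

lemma F_mul {η : Matrix (Fin 2) (Fin 2) ℝ} (h : IsUnit η.det) (q q' : ℤ) (u u' : Fin 2 → ℝ) :
    F η q u * F η q' u' = F η (q + q') (η ^ q *ᵥ u' + u) := by
  ext i j
  fin_cases i <;> fin_cases j <;>
    simp [F, Matrix.mul_apply, Fin.sum_univ_four, Matrix.zpow_add h,
      Fin.sum_univ_two, Matrix.mulVec, dotProduct, Matrix.vecHead, Matrix.vecTail] <;>
    ring

lemma det_map {θ : Matrix (Fin 2) (Fin 2) ℤ} (hdet : θ.det = 1) :
    IsUnit (θ.map ((↑) : ℤ → ℝ)).det := by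
  have : (θ.map ((↑) : ℤ → ℝ)).det = ((θ.det : ℤ) : ℝ) :=
    (RingHom.map_det (Int.castRingHom ℝ) θ).symm
  rw [this, hdet]; simp

lemma exists_int_zpow {θ : Matrix (Fin 2) (Fin 2) ℤ} (hdet : θ.det = 1) (q : ℤ) :
    ∃ P : Matrix (Fin 2) (Fin 2) ℤ, (θ.map ((↑) : ℤ → ℝ)) ^ q = P.map ((↑) : ℤ → ℝ) := by
  set η := θ.map ((↑) : ℤ → ℝ) with hη
  have hu : IsUnit η.det := det_map hdet
  set ψ := θ.adjugate with hψdef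
  have hmap : ∀ M N : Matrix (Fin 2) (Fin 2) ℤ,
      (M * N).map ((↑) : ℤ → ℝ) = M.map ((↑) : ℤ → ℝ) * N.map ((↑) : ℤ → ℝ) :=
    fun M N => Matrix.map_mul (f := Int.castRingHom ℝ)
  have hψ : θ * ψ = 1 := by rw [hψdef, Matrix.mul_adjugate, hdet, one_smul]
  have hinv : η⁻¹ = ψ.map ((↑) : ℤ → ℝ) := by
    apply Matrix.inv_eq_right_inv
    rw [hη, ← hmap, hψ]
    simp [Matrix.map_one]
  induction q using Int.induction_on with
  | zero => exact ⟨1, by simp [Matrix.map_one]⟩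
  | succ n ih =>
    obtain ⟨P, hP⟩ := ih
    exact ⟨P * θ, by rw [Matrix.zpow_add_one hu, hP, hmap]⟩
  | pred n ih =>
    obtain ⟨P, hP⟩ := ih
    exact ⟨P * ψ, by rw [Matrix.zpow_sub_one hu, hP, hinv, hmap]⟩

lemma cast_mulVec (P : Matrix (Fin 2) (Fin 2) ℤ) (a b : ℤ) :
    (P.map ((↑) : ℤ → ℝ)) *ᵥ ![(a : ℝ), (b : ℝ)] =
      ![((P *ᵥ ![a, b]) 0 : ℝ), ((P *ᵥ ![a, b]) 1 : ℝ)] := by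
  funext i
  fin_cases i <;>
    simp [Matrix.mulVec, dotProduct, Fin.sum_univ_two, Matrix.map_apply]

lemma Apow {η : Matrix (Fin 2) (Fin 2) ℝ} (hu : IsUnit η.det)
    (A : (Matrix (Fin 4) (Fin 4) ℝ)ˣ) (hA : (A : Matrix (Fin 4) (Fin 4) ℝ) = F η 1 0)
    (q : ℤ) : ((A ^ q : (Matrix (Fin 4) (Fin 4) ℝ)ˣ) : Matrix (Fin 4) (Fin 4) ℝ) = F η q 0 := by
  have hAdet : IsUnit (A : Matrix (Fin 4) (Fin 4) ℝ).det :=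
    (Matrix.isUnit_iff_isUnit_det _).mp A.isUnit
  have hAinv : (A : Matrix (Fin 4) (Fin 4) ℝ)⁻¹ = F η (-1) 0 := by
    apply Matrix.inv_eq_right_inv
    rw [hA, F_mul hu]
    simp [F_one]
  rw [Matrix.coe_units_zpow]
  induction q using Int.induction_on with
  | zero => rw [zpow_zero]; simpa using (F_one η).symm
  | succ n ih => rw [Matrix.zpow_add_one hAdet, ih, hA, F_mul hu]; simp
  | pred n ih => rw [Matrix.zpow_sub_one hAdet, ih, hAinv, F_mul hu]; simp [sub_eq_add_neg]

lemma Bpow {η : Matrix (Fin 2) (Fin 2) ℝ} (hu : IsUnit η.det)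
    (B : (Matrix (Fin 4) (Fin 4) ℝ)ˣ) (w : Fin 2 → ℝ)
    (hB : (B : Matrix (Fin 4) (Fin 4) ℝ) = F η 0 w)
    (m : ℤ) : ((B ^ m : (Matrix (Fin 4) (Fin 4) ℝ)ˣ) : Matrix (Fin 4) (Fin 4) ℝ) =
      F η 0 (m • w) := by
  have hBdet : IsUnit (B : Matrix (Fin 4) (Fin 4) ℝ).det :=
    (Matrix.isUnit_iff_isUnit_det _).mp B.isUnit
  have hBinv : (B : Matrix (Fin 4) (Fin 4) ℝ)⁻¹ = F η 0 (-w) := by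
    apply Matrix.inv_eq_right_inv
    rw [hB, F_mul hu]
    rw [zpow_zero]; simpa using (F_one η)
  rw [Matrix.coe_units_zpow]
  induction m using Int.induction_on with
  | zero => rw [zpow_zero]; simpa using (F_one η).symm
  | succ n ih =>
    rw [Matrix.zpow_add_one hBdet, ih, hB, F_mul hu]
    rw [zpow_zero, Matrix.one_mulVec]
    congr 1
    funext i
    simp [Pi.add_apply, Pi.smul_apply, smul_eq_mul]
    ring
  | pred n ih =>
    rw [Matrix.zpow_sub_one hBdet, ih, hBinv, F_mul hu]
    rw [zpow_zero, Matrix.one_mulVec]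
    congr 1
    funext i
    simp [Pi.add_apply, Pi.smul_apply, smul_eq_mul]
    ring

end Stmt15

open Stmt15

/-- For θ ∈ SL₂(ℤ), the subgroup D_m of GL₄(ℝ) generated by A, B, C
equals {A^Q B^M C^N : Q,M,N ∈ ℤ}; each A^Q B^M C^N is the 4×4 matrix with top-left
block θ^Q, fourth column (θ^Q·(M,N)ᵀ, Q, 1)ᵀ and (3,3) entry 1; and hence D_m is the
image r(ℤ³) of the integer lattice under the parametrization r. -/
theorem stmt_15 (θ : Matrix (Fin 2) (Fin 2) ℤ) (hdet : θ.det = 1)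
    (A B C : (Matrix (Fin 4) (Fin 4) ℝ)ˣ)
    (hA : (A : Matrix (Fin 4) (Fin 4) ℝ) =
      !![(θ 0 0 : ℝ), (θ 0 1 : ℝ), 0, 0;
         (θ 1 0 : ℝ), (θ 1 1 : ℝ), 0, 0;
         0, 0, 1, 1;
         0, 0, 0, 1])
    (hB : (B : Matrix (Fin 4) (Fin 4) ℝ) = 1 + Matrix.single 0 3 (1 : ℝ))
    (hC : (C : Matrix (Fin 4) (Fin 4) ℝ) = 1 + Matrix.single 1 3 (1 : ℝ)) :
    ((Subgroup.closure {A, B, C} : Subgroup (Matrix (Fin 4) (Fin 4) ℝ)ˣ) : Set _) =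
      {g : (Matrix (Fin 4) (Fin 4) ℝ)ˣ | ∃ Q M N : ℤ, g = A ^ Q * B ^ M * C ^ N} ∧
    (∀ Q M N : ℤ,
      ((A ^ Q * B ^ M * C ^ N : (Matrix (Fin 4) (Fin 4) ℝ)ˣ) :
          Matrix (Fin 4) (Fin 4) ℝ) =
        !![(θ.map ((↑) : ℤ → ℝ) ^ Q) 0 0, (θ.map ((↑) : ℤ → ℝ) ^ Q) 0 1, 0,
             (θ.map ((↑) : ℤ → ℝ) ^ Q).mulVec ![(M : ℝ), (N : ℝ)] 0;
           (θ.map ((↑) : ℤ → ℝ) ^ Q) 1 0, (θ.map ((↑) : ℤ → ℝ) ^ Q) 1 1, 0,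
             (θ.map ((↑) : ℤ → ℝ) ^ Q).mulVec ![(M : ℝ), (N : ℝ)] 1;
           0, 0, 1, (Q : ℝ);
           0, 0, 0, 1]) ∧
    {m : Matrix (Fin 4) (Fin 4) ℝ |
        ∃ g ∈ Subgroup.closure ({A, B, C} : Set (Matrix (Fin 4) (Fin 4) ℝ)ˣ),
          m = (g : Matrix (Fin 4) (Fin 4) ℝ)} =
      {m : Matrix (Fin 4) (Fin 4) ℝ | ∃ x : ℤ × ℤ × ℤ,
        m = !![(θ.map ((↑) : ℤ → ℝ) ^ x.2.2) 0 0, (θ.map ((↑) : ℤ → ℝ) ^ x.2.2) 0 1,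
                 0, (x.1 : ℝ);
               (θ.map ((↑) : ℤ → ℝ) ^ x.2.2) 1 0, (θ.map ((↑) : ℤ → ℝ) ^ x.2.2) 1 1,
                 0, (x.2.1 : ℝ);
               0, 0, 1, (x.2.2 : ℝ);
               0, 0, 0, 1]} := by
  set η := θ.map ((↑) : ℤ → ℝ) with hη
  have hu : IsUnit η.det := det_map hdet
  have hA' : (A : Matrix (Fin 4) (Fin 4) ℝ) = F η 1 0 := by
    rw [hA]
    ext i j
    fin_cases i <;> fin_cases j <;>
      simp [F, zpow_one, hη, Matrix.map_apply, Matrix.vecHead, Matrix.vecTail]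
  have hB' : (B : Matrix (Fin 4) (Fin 4) ℝ) = F η 0 ![1, 0] := by
    rw [hB]
    ext i j
    fin_cases i <;> fin_cases j <;>
      simp [F, Matrix.single, Matrix.one_apply, Matrix.vecHead, Matrix.vecTail]
  have hC' : (C : Matrix (Fin 4) (Fin 4) ℝ) = F η 0 ![0, 1] := by
    rw [hC]
    ext i j
    fin_cases i <;> fin_cases j <;>
      simp [F, Matrix.single, Matrix.one_apply, Matrix.vecHead, Matrix.vecTail]
  have hBpow : ∀ m : ℤ, ((B ^ m : (Matrix (Fin 4) (Fin 4) ℝ)ˣ) : Matrix (Fin 4) (Fin 4) ℝ)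
      = F η 0 ![(m : ℝ), 0] := by
    intro m
    rw [Bpow hu B _ hB' m]
    congr 1
    funext i
    fin_cases i <;> simp
  have hCpow : ∀ m : ℤ, ((C ^ m : (Matrix (Fin 4) (Fin 4) ℝ)ˣ) : Matrix (Fin 4) (Fin 4) ℝ)
      = F η 0 ![0, (m : ℝ)] := by
    intro m
    rw [Bpow hu C _ hC' m]
    congr 1
    funext i
    fin_cases i <;> simp
  have prodForm : ∀ Q M N : ℤ,
      ((A ^ Q * B ^ M * C ^ N : (Matrix (Fin 4) (Fin 4) ℝ)ˣ) : Matrix (Fin 4) (Fin 4) ℝ)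
        = F η Q (η ^ Q *ᵥ ![(M : ℝ), (N : ℝ)]) := by
    intro Q M N
    rw [Units.val_mul, Units.val_mul, Apow hu A hA', hBpow, hCpow, F_mul hu, F_mul hu]
    simp only [add_zero, Matrix.mulVec_zero, zero_add]
    rw [← Matrix.mulVec_add]
    congr 1
    funext i
    fin_cases i <;> simp
  have memS : ∀ Q M N : ℤ,
      A ^ Q * B ^ M * C ^ N ∈ Subgroup.closure ({A, B, C} : Set (Matrix (Fin 4) (Fin 4) ℝ)ˣ) := by
    intro Q M N
    have hAmem : A ∈ Subgroup.closure ({A, B, C} : Set (Matrix (Fin 4) (Fin 4) ℝ)ˣ) :=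
      Subgroup.subset_closure (by simp)
    have hBmem : B ∈ Subgroup.closure ({A, B, C} : Set (Matrix (Fin 4) (Fin 4) ℝ)ˣ) :=
      Subgroup.subset_closure (by simp)
    have hCmem : C ∈ Subgroup.closure ({A, B, C} : Set (Matrix (Fin 4) (Fin 4) ℝ)ˣ) :=
      Subgroup.subset_closure (by simp)
    exact mul_mem (mul_mem (zpow_mem hAmem Q) (zpow_mem hBmem M)) (zpow_mem hCmem N)
  have part1 : ((Subgroup.closure {A, B, C} : Subgroup (Matrix (Fin 4) (Fin 4) ℝ)ˣ) : Set _) =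
      {g : (Matrix (Fin 4) (Fin 4) ℝ)ˣ | ∃ Q M N : ℤ, g = A ^ Q * B ^ M * C ^ N} := by
    apply Set.Subset.antisymm
    · intro g hg
      rw [SetLike.mem_coe] at hg
      induction hg using Subgroup.closure_induction with
      | mem x hx =>
        rcases hx with rfl | rfl | rfl
        · exact ⟨1, 0, 0, by simp⟩
        · exact ⟨0, 1, 0, by simp⟩
        · exact ⟨0, 0, 1, by simp⟩
      | one => exact ⟨0, 0, 0, by simp⟩
      | mul x y hx hy ihx ihy =>
        obtain ⟨Q, M, N, rfl⟩ := ihx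
        obtain ⟨Q', M', N', rfl⟩ := ihy
        obtain ⟨P, hP⟩ := exists_int_zpow hdet (-Q')
        refine ⟨Q + Q', (P *ᵥ ![M, N] + ![M', N']) 0, (P *ᵥ ![M, N] + ![M', N']) 1, ?_⟩
        apply Units.ext
        rw [Units.val_mul, prodForm, prodForm, prodForm, F_mul hu]
        congr 1
        have e1 : η ^ Q *ᵥ (η ^ Q' *ᵥ ![(M' : ℝ), (N' : ℝ)])
            = η ^ (Q + Q') *ᵥ ![(M' : ℝ), (N' : ℝ)] := by
          rw [Matrix.mulVec_mulVec, ← Matrix.zpow_add hu]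
        have e2 : η ^ Q *ᵥ ![(M : ℝ), (N : ℝ)]
            = η ^ (Q + Q') *ᵥ (η ^ (-Q') *ᵥ ![(M : ℝ), (N : ℝ)]) := by
          rw [Matrix.mulVec_mulVec, ← Matrix.zpow_add hu, add_neg_cancel_right]
        rw [e1, e2, ← Matrix.mulVec_add]
        congr 1
        rw [hP, cast_mulVec]
        funext i
        fin_cases i <;> simp <;> push_cast <;> ring
      | inv x hx ihx =>
        obtain ⟨Q, M, N, rfl⟩ := ihx
        obtain ⟨P, hP⟩ := exists_int_zpow hdet Q
        refine ⟨-Q, -((P *ᵥ ![M, N]) 0), -((P *ᵥ ![M, N]) 1), ?_⟩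
        symm
        apply eq_inv_of_mul_eq_one_right
        apply Units.ext
        rw [Units.val_mul, prodForm, prodForm, F_mul hu, Units.val_one]
        have e2 : η ^ Q *ᵥ (η ^ (-Q) *ᵥ
            ![((-((P *ᵥ ![M, N]) 0) : ℤ) : ℝ), ((-((P *ᵥ ![M, N]) 1) : ℤ) : ℝ)])
            = ![((-((P *ᵥ ![M, N]) 0) : ℤ) : ℝ), ((-((P *ᵥ ![M, N]) 1) : ℤ) : ℝ)] := by
          rw [Matrix.mulVec_mulVec, ← Matrix.zpow_add hu, add_neg_cancel, zpow_zero,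
            Matrix.one_mulVec]
        have e3 : (Q + -Q : ℤ) = 0 := by ring
        have e4 : (![((-((P *ᵥ ![M, N]) 0) : ℤ) : ℝ), ((-((P *ᵥ ![M, N]) 1) : ℤ) : ℝ)]
            + η ^ Q *ᵥ ![(M : ℝ), (N : ℝ)]) = 0 := by
          rw [hP, cast_mulVec]
          funext i
          fin_cases i <;> simp
        rw [e2, e3, e4, F_one]
    · rintro g ⟨Q, M, N, rfl⟩
      exact memS Q M N
  refine ⟨part1, fun Q M N => (prodForm Q M N).trans rfl, ?_⟩
  ext m
  simp only [Set.mem_setOf_eq]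
  constructor
  · rintro ⟨g, hg, rfl⟩
    have hg' : g ∈ {g : (Matrix (Fin 4) (Fin 4) ℝ)ˣ | ∃ Q M N : ℤ, g = A ^ Q * B ^ M * C ^ N} := by
      rw [← part1]; exact hg
    obtain ⟨Q, M, N, rfl⟩ := hg'
    obtain ⟨P, hP⟩ := exists_int_zpow hdet Q
    refine ⟨((P *ᵥ ![M, N]) 0, (P *ᵥ ![M, N]) 1, Q), ?_⟩
    rw [prodForm]
    show F η Q _ = F η Q ![(((P *ᵥ ![M, N]) 0 : ℤ) : ℝ), (((P *ᵥ ![M, N]) 1 : ℤ) : ℝ)]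
    congr 1
    rw [hP, cast_mulVec]
  · rintro ⟨⟨a, b, q⟩, rfl⟩
    obtain ⟨P, hP⟩ := exists_int_zpow hdet (-q)
    refine ⟨A ^ q * B ^ ((P *ᵥ ![a, b]) 0) * C ^ ((P *ᵥ ![a, b]) 1), memS _ _ _, ?_⟩
    rw [prodForm]
    show F η q ![(a : ℝ), (b : ℝ)] = F η q _
    congr 1
    rw [← cast_mulVec P a b, ← hP, Matrix.mulVec_mulVec, ← Matrix.zpow_add hu,
      add_neg_cancel, zpow_zero, Matrix.one_mulVec]
end

section
/- Let θ ∈ SL₂(ℤ) and let A, B, C be the 4×4 matrices generating D_m (A with top-left block θ, A₃₃ = A₃₄ = A₄₄ = 1, other entries 0; B = I₄ + E₁₄; C = I₄ + E₂₄). Let g₁ = A^{α₁}B^{β₁}C^{γ₁}, g₂ = A^{α₂}B^{β₂}C^{γ₂}, g₃ = A^{α₃}B^{β₃}C^{γ₃} with αᵢ, βᵢ, γᵢ ∈ ℤ, and suppose gcd(α₁, α₂, α₃) = 1. Then there exist integers β₁′, γ₁′, β₂′, γ₂′, β₃′, γ₃′ such that the subgroup generated by {g₁, g₂, g₃} equals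 the subgroup generated by {A·B^{β₁′}C^{γ₁′}, B^{β₂′}C^{γ₂′}, B^{β₃′}C^{γ₃′}}. -/
open Matrix

section AuxLemmas

variable {G : Type*} [Group G]

private lemma cl3_congr {a a' b c : G}
    (h1 : a' ∈ Subgroup.closure {a, b, c}) (h2 : a ∈ Subgroup.closure {a', b, c}) :
    Subgroup.closure ({a', b, c} : Set G) = Subgroup.closure ({a, b, c} : Set G) := by
  apply le_antisymm <;> rw [Subgroup.closure_le] <;> intro x hx <;>
    simp only [Set.mem_insert_iff, Set.mem_singleton_iff] at hx
  · rcases hx with rfl | rfl | rfl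
    · exact h1
    · exact Subgroup.subset_closure (by simp)
    · exact Subgroup.subset_closure (by simp)
  · rcases hx with rfl | rfl | rfl
    · exact h2
    · exact Subgroup.subset_closure (by simp)
    · exact Subgroup.subset_closure (by simp)

private lemma cl3_mul2 (a b c : G) (k : ℤ) :
    Subgroup.closure ({a * b ^ k, b, c} : Set G) = Subgroup.closure ({a, b, c} : Set G) := by
  apply cl3_congr
  · exact mul_mem (Subgroup.subset_closure (by simp))
      (zpow_mem (Subgroup.subset_closure (by simp)) k)
  · have : a = (a * b ^ k) * b ^ (-k) := by group
    rw [this]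
    exact mul_mem (Subgroup.subset_closure (by simp))
      (zpow_mem (Subgroup.subset_closure (by simp)) (-k))

private lemma cl3_mul3 (a b c : G) (k : ℤ) :
    Subgroup.closure ({a * c ^ k, b, c} : Set G) = Subgroup.closure ({a, b, c} : Set G) := by
  apply cl3_congr
  · exact mul_mem (Subgroup.subset_closure (by simp))
      (zpow_mem (Subgroup.subset_closure (by simp)) k)
  · have : a = (a * c ^ k) * c ^ (-k) := by group
    rw [this]
    exact mul_mem (Subgroup.subset_closure (by simp))
      (zpow_mem (Subgroup.subset_closure (by simp)) (-k))

private lemma cl3_inv (a b c : G) :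
    Subgroup.closure ({a⁻¹, b, c} : Set G) = Subgroup.closure ({a, b, c} : Set G) := by
  apply cl3_congr
  · exact inv_mem (Subgroup.subset_closure (by simp))
  · have : a = (a⁻¹)⁻¹ := (inv_inv a).symm
    rw [this]
    exact inv_mem (Subgroup.subset_closure (by simp))

private lemma set3_comm12 (a b c : G) : ({a, b, c} : Set G) = {b, a, c} :=
  Set.insert_comm a b {c}

private lemma set3_comm13 (a b c : G) : ({a, b, c} : Set G) = {c, b, a} := by
  ext x; simp only [Set.mem_insert_iff, Set.mem_singleton_iff]; tauto

end AuxLemmas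

private lemma int_gcd_sub_mul (a b q : ℤ) : Int.gcd a (b - a * q) = Int.gcd a b := by
  apply Nat.dvd_antisymm
  · have h1 : (Int.gcd a (b - a * q) : ℤ) ∣ a := Int.gcd_dvd_left _ _
    have h2 : ((Int.gcd a (b - a * q) : ℤ)) ∣ (b - a * q) := Int.gcd_dvd_right _ _
    have h3 : ((Int.gcd a (b - a * q) : ℤ)) ∣ b := by
      have := dvd_add h2 (h1.mul_right q); simpa using this
    exact Int.natCast_dvd_natCast.mp (Int.dvd_coe_gcd h1 h3)
  · have h1 : (Int.gcd a b : ℤ) ∣ a := Int.gcd_dvd_left _ _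
    have h2 : ((Int.gcd a b : ℤ)) ∣ b := Int.gcd_dvd_right _ _
    have h3 : ((Int.gcd a b : ℤ)) ∣ (b - a * q) := dvd_sub h2 (h1.mul_right q)
    exact Int.natCast_dvd_natCast.mp (Int.dvd_coe_gcd h1 h3)

private abbrev M4 := Matrix (Fin 4) (Fin 4) ℝ

section MatrixLemmas

variable (θ : Matrix (Fin 2) (Fin 2) ℤ)

private def Amat : M4 :=
  !![(θ 0 0 : ℝ), (θ 0 1 : ℝ), 0, 0;
     (θ 1 0 : ℝ), (θ 1 1 : ℝ), 0, 0;
     0, 0, 1, 1;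
     0, 0, 0, 1]

private def Nmat (x y : ℝ) : M4 :=
  1 + Matrix.single 0 3 x + Matrix.single 1 3 y

private lemma Nmat_mul (x y u v : ℝ) : Nmat x y * Nmat u v = Nmat (x + u) (y + v) := by
  unfold Nmat
  ext i j
  fin_cases i <;> fin_cases j <;>
    simp [Matrix.mul_apply, Fin.sum_univ_four, Matrix.single, Matrix.one_apply,
      Matrix.vecHead, Matrix.vecTail] <;> ring

private lemma A_mul_B : Amat θ * Nmat 1 0 = Nmat (θ 0 0 : ℝ) (θ 1 0 : ℝ) * Amat θ := by
  unfold Amat Nmat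
  ext i j
  fin_cases i <;> fin_cases j <;>
    simp [Matrix.mul_apply, Fin.sum_univ_four, Matrix.single, Matrix.one_apply,
      Matrix.vecHead, Matrix.vecTail]

private lemma A_mul_C : Amat θ * Nmat 0 1 = Nmat (θ 0 1 : ℝ) (θ 1 1 : ℝ) * Amat θ := by
  unfold Amat Nmat
  ext i j
  fin_cases i <;> fin_cases j <;>
    simp [Matrix.mul_apply, Fin.sum_univ_four, Matrix.single, Matrix.one_apply,
      Matrix.vecHead, Matrix.vecTail]

private lemma B_mul_A (hdet : θ.det = 1) :
    Nmat 1 0 * Amat θ = Amat θ * Nmat (θ 1 1 : ℝ) (-(θ 1 0 : ℝ)) := by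
  rw [Matrix.det_fin_two] at hdet
  have hd : (θ 0 0 : ℝ) * (θ 1 1 : ℝ) - (θ 0 1 : ℝ) * (θ 1 0 : ℝ) = 1 := by
    exact_mod_cast hdet
  unfold Amat Nmat
  ext i j
  fin_cases i <;> fin_cases j <;>
    simp [Matrix.mul_apply, Fin.sum_univ_four, Matrix.single, Matrix.one_apply,
      Matrix.vecHead, Matrix.vecTail] <;>
  first
    | ring1
    | linear_combination hd
    | linear_combination (2:ℝ)*hd
    | linear_combination (-1:ℝ)*hd
    | linear_combination (-2:ℝ)*hd

private lemma C_mul_A (hdet : θ.det = 1) :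
    Nmat 0 1 * Amat θ = Amat θ * Nmat (-(θ 0 1 : ℝ)) (θ 0 0 : ℝ) := by
  rw [Matrix.det_fin_two] at hdet
  have hd : (θ 0 0 : ℝ) * (θ 1 1 : ℝ) - (θ 0 1 : ℝ) * (θ 1 0 : ℝ) = 1 := by
    exact_mod_cast hdet
  unfold Amat Nmat
  ext i j
  fin_cases i <;> fin_cases j <;>
    simp [Matrix.mul_apply, Fin.sum_univ_four, Matrix.single, Matrix.one_apply,
      Matrix.vecHead, Matrix.vecTail] <;>
  first
    | ring1
    | linear_combination hd
    | linear_combination (2:ℝ)*hd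
    | linear_combination (-1:ℝ)*hd
    | linear_combination (-2:ℝ)*hd

end MatrixLemmas

/-- (Lemma 5.1) If g₁ = A^{α₁}B^{β₁}C^{γ₁}, g₂ = A^{α₂}B^{β₂}C^{γ₂},
g₃ = A^{α₃}B^{β₃}C^{γ₃} with gcd(α₁,α₂,α₃) = 1, then the subgroup generated by
g₁, g₂, g₃ is also generated by elements A·B^{β₁'}C^{γ₁'}, B^{β₂'}C^{γ₂'},
B^{β₃'}C^{γ₃'} for some integers βᵢ', γᵢ'. -/
theorem stmt_16 (θ : Matrix (Fin 2) (Fin 2) ℤ) (hdet : θ.det = 1)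
    (A B C : (Matrix (Fin 4) (Fin 4) ℝ)ˣ)
    (hA : (A : Matrix (Fin 4) (Fin 4) ℝ) =
      !![(θ 0 0 : ℝ), (θ 0 1 : ℝ), 0, 0;
         (θ 1 0 : ℝ), (θ 1 1 : ℝ), 0, 0;
         0, 0, 1, 1;
         0, 0, 0, 1])
    (hB : (B : Matrix (Fin 4) (Fin 4) ℝ) = 1 + Matrix.single 0 3 (1 : ℝ))
    (hC : (C : Matrix (Fin 4) (Fin 4) ℝ) = 1 + Matrix.single 1 3 (1 : ℝ))
    (α₁ β₁ γ₁ α₂ β₂ γ₂ α₃ β₃ γ₃ : ℤ)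
    (g₁ g₂ g₃ : (Matrix (Fin 4) (Fin 4) ℝ)ˣ)
    (hg₁ : g₁ = A ^ α₁ * B ^ β₁ * C ^ γ₁)
    (hg₂ : g₂ = A ^ α₂ * B ^ β₂ * C ^ γ₂)
    (hg₃ : g₃ = A ^ α₃ * B ^ β₃ * C ^ γ₃)
    (hgcd : Int.gcd (Int.gcd α₁ α₂) α₃ = 1) :
    ∃ β₁' γ₁' β₂' γ₂' β₃' γ₃' : ℤ,
      Subgroup.closure ({g₁, g₂, g₃} : Set (Matrix (Fin 4) (Fin 4) ℝ)ˣ) =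
        Subgroup.closure
          ({A * B ^ β₁' * C ^ γ₁', B ^ β₂' * C ^ γ₂', B ^ β₃' * C ^ γ₃'} :
            Set (Matrix (Fin 4) (Fin 4) ℝ)ˣ) := by
  subst hg₁ hg₂ hg₃
  have hA' : (A : M4) = Amat θ := hA
  have hB' : (B : M4) = Nmat 1 0 := by rw [hB]; unfold Nmat; simp
  have hC' : (C : M4) = Nmat 0 1 := by rw [hC]; unfold Nmat; simp
  -- values of integer powers of B and C
  have hBinv : ((B⁻¹ : M4ˣ) : M4) = Nmat (-1) 0 := by
    apply Units.inv_eq_of_mul_eq_one_right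
    rw [hB', Nmat_mul]; norm_num; unfold Nmat; simp
  have hCinv : ((C⁻¹ : M4ˣ) : M4) = Nmat 0 (-1) := by
    apply Units.inv_eq_of_mul_eq_one_right
    rw [hC', Nmat_mul]; norm_num; unfold Nmat; simp
  have hBpow : ∀ b : ℤ, ((B ^ b : M4ˣ) : M4) = Nmat (b : ℝ) 0 := by
    intro b
    induction b using Int.induction_on with
    | zero => rw [zpow_zero]; unfold Nmat; simp
    | succ i ih =>
        rw [_root_.zpow_add_one, Units.val_mul, ih, hB', Nmat_mul]
        norm_num
    | pred i ih =>
        rw [_root_.zpow_sub_one, Units.val_mul, ih, hBinv, Nmat_mul]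
        norm_num
        all_goals (congr 1 <;> push_cast <;> ring)
  have hCpow : ∀ c : ℤ, ((C ^ c : M4ˣ) : M4) = Nmat 0 (c : ℝ) := by
    intro c
    induction c using Int.induction_on with
    | zero => rw [zpow_zero]; unfold Nmat; simp
    | succ i ih =>
        rw [_root_.zpow_add_one, Units.val_mul, ih, hC', Nmat_mul]
        norm_num
    | pred i ih =>
        rw [_root_.zpow_sub_one, Units.val_mul, ih, hCinv, Nmat_mul]
        norm_num
        all_goals (congr 1 <;> push_cast <;> ring)
  have hNval : ∀ b c : ℤ, ((B ^ b * C ^ c : M4ˣ) : M4) = Nmat (b : ℝ) (c : ℝ) := by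
    intro b c
    rw [Units.val_mul, hBpow, hCpow, Nmat_mul]
    norm_num
  -- basic commutation facts
  have hcomm : Commute B C := by
    apply Units.ext
    rw [Units.val_mul, Units.val_mul, hB', hC', Nmat_mul, Nmat_mul]
    norm_num
  have hpow' : ∀ p q m : ℤ, (B ^ p * C ^ q) ^ m = B ^ (p * m) * C ^ (q * m) := by
    intro p q m
    rw [(hcomm.zpow_zpow p q).mul_zpow m, ← _root_.zpow_mul, ← _root_.zpow_mul]
  have hmerge : ∀ x y u v : ℤ,
      (B ^ x * C ^ y) * (B ^ u * C ^ v) = B ^ (x + u) * C ^ (y + v) := by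
    intro x y u v
    have h1 : C ^ y * B ^ u = B ^ u * C ^ y := ((hcomm.symm).zpow_zpow y u).eq
    rw [_root_.zpow_add, _root_.zpow_add, mul_assoc, ← mul_assoc (C ^ y), h1, mul_assoc (B ^ u),
      ← mul_assoc]
  -- the four semiconjugation relations
  have e1 : A * B = (B ^ (θ 0 0) * C ^ (θ 1 0)) * A := by
    apply Units.ext
    rw [Units.val_mul, Units.val_mul, hA', hB', hNval]
    exact A_mul_B θ
  have e2 : A * C = (B ^ (θ 0 1) * C ^ (θ 1 1)) * A := by
    apply Units.ext
    rw [Units.val_mul, Units.val_mul, hA', hC', hNval]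
    exact A_mul_C θ
  have e3 : B * A = A * (B ^ (θ 1 1) * C ^ (-(θ 1 0))) := by
    apply Units.ext
    rw [Units.val_mul, Units.val_mul, hA', hB', hNval]
    push_cast
    exact B_mul_A θ hdet
  have e4 : C * A = A * (B ^ (-(θ 0 1)) * C ^ (θ 0 0)) := by
    apply Units.ext
    rw [Units.val_mul, Units.val_mul, hA', hC', hNval]
    push_cast
    exact C_mul_A θ hdet
  -- single-step conjugation
  have hA1 : ∀ b c : ℤ, ∃ b' c' : ℤ, A * (B ^ b * C ^ c) = (B ^ b' * C ^ c') * A := by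
    intro b c
    have s1 : SemiconjBy A (B ^ b) ((B ^ (θ 0 0) * C ^ (θ 1 0)) ^ b) :=
      SemiconjBy.zpow_right e1 b
    have s2 : SemiconjBy A (C ^ c) ((B ^ (θ 0 1) * C ^ (θ 1 1)) ^ c) :=
      SemiconjBy.zpow_right e2 c
    refine ⟨θ 0 0 * b + θ 0 1 * c, θ 1 0 * b + θ 1 1 * c, ?_⟩
    calc A * (B ^ b * C ^ c) = (A * B ^ b) * C ^ c := (mul_assoc _ _ _).symm
      _ = ((B ^ (θ 0 0) * C ^ (θ 1 0)) ^ b * A) * C ^ c := by rw [s1.eq]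
      _ = (B ^ (θ 0 0) * C ^ (θ 1 0)) ^ b * (A * C ^ c) := mul_assoc _ _ _
      _ = (B ^ (θ 0 0) * C ^ (θ 1 0)) ^ b * ((B ^ (θ 0 1) * C ^ (θ 1 1)) ^ c * A) := by
          rw [s2.eq]
      _ = ((B ^ (θ 0 0) * C ^ (θ 1 0)) ^ b * (B ^ (θ 0 1) * C ^ (θ 1 1)) ^ c) * A := by
          rw [mul_assoc]
      _ = (B ^ (θ 0 0 * b + θ 0 1 * c) * C ^ (θ 1 0 * b + θ 1 1 * c)) * A := by
          rw [hpow', hpow', hmerge]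
  have hRight1 : ∀ b c : ℤ, ∃ b' c' : ℤ, (B ^ b * C ^ c) * A = A * (B ^ b' * C ^ c') := by
    intro b c
    have s3 : SemiconjBy A (B ^ (θ 1 1) * C ^ (-(θ 1 0))) B := e3.symm
    have s4 : SemiconjBy A (B ^ (-(θ 0 1)) * C ^ (θ 0 0)) C := e4.symm
    have t3 : B ^ b * A = A * (B ^ (θ 1 1) * C ^ (-(θ 1 0))) ^ b :=
      (SemiconjBy.zpow_right s3 b).eq.symm
    have t4 : C ^ c * A = A * (B ^ (-(θ 0 1)) * C ^ (θ 0 0)) ^ c :=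
      (SemiconjBy.zpow_right s4 c).eq.symm
    refine ⟨θ 1 1 * b + -(θ 0 1) * c, -(θ 1 0) * b + θ 0 0 * c, ?_⟩
    calc (B ^ b * C ^ c) * A = B ^ b * (C ^ c * A) := mul_assoc _ _ _
      _ = B ^ b * (A * (B ^ (-(θ 0 1)) * C ^ (θ 0 0)) ^ c) := by rw [t4]
      _ = (B ^ b * A) * (B ^ (-(θ 0 1)) * C ^ (θ 0 0)) ^ c := (mul_assoc _ _ _).symm
      _ = (A * (B ^ (θ 1 1) * C ^ (-(θ 1 0))) ^ b) * (B ^ (-(θ 0 1)) * C ^ (θ 0 0)) ^ c := by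
          rw [t3]
      _ = A * ((B ^ (θ 1 1) * C ^ (-(θ 1 0))) ^ b * (B ^ (-(θ 0 1)) * C ^ (θ 0 0)) ^ c) :=
          mul_assoc _ _ _
      _ = A * (B ^ (θ 1 1 * b + -(θ 0 1) * c) * C ^ (-(θ 1 0) * b + θ 0 0 * c)) := by
          rw [hpow', hpow', hmerge]
  have hA1' : ∀ b c : ℤ, ∃ b' c' : ℤ, A⁻¹ * (B ^ b * C ^ c) = (B ^ b' * C ^ c') * A⁻¹ := by
    intro b c
    obtain ⟨b', c', h⟩ := hRight1 b c
    refine ⟨b', c', ?_⟩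
    have h3 : (B ^ b * C ^ c) = A * ((B ^ b' * C ^ c') * A⁻¹) := by
      rw [← mul_assoc, ← h]; group
    rw [h3]; group
  -- conjugation by arbitrary powers of A
  have hP : ∀ k b c : ℤ, ∃ b' c' : ℤ,
      A ^ k * (B ^ b * C ^ c) = (B ^ b' * C ^ c') * A ^ k := by
    intro k
    induction k using Int.induction_on with
    | zero => intro b c; exact ⟨b, c, by simp⟩
    | succ i ih =>
        intro b c
        obtain ⟨b1, c1, h1⟩ := hA1 b c
        obtain ⟨b2, c2, h2⟩ := ih b1 c1
        refine ⟨b2, c2, ?_⟩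
        have hz : A ^ ((i : ℤ) + 1) = A ^ (i : ℤ) * A := _root_.zpow_add_one A i
        calc A ^ ((i : ℤ) + 1) * (B ^ b * C ^ c)
            = A ^ (i : ℤ) * (A * (B ^ b * C ^ c)) := by rw [hz, mul_assoc]
          _ = A ^ (i : ℤ) * ((B ^ b1 * C ^ c1) * A) := by rw [h1]
          _ = (A ^ (i : ℤ) * (B ^ b1 * C ^ c1)) * A := (mul_assoc _ _ _).symm
          _ = ((B ^ b2 * C ^ c2) * A ^ (i : ℤ)) * A := by rw [h2]
          _ = (B ^ b2 * C ^ c2) * A ^ ((i : ℤ) + 1) := by rw [hz, mul_assoc]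
    | pred i ih =>
        intro b c
        obtain ⟨b1, c1, h1⟩ := hA1' b c
        obtain ⟨b2, c2, h2⟩ := ih b1 c1
        refine ⟨b2, c2, ?_⟩
        have hz : A ^ (-(i : ℤ) - 1) = A ^ (-(i : ℤ)) * A⁻¹ := _root_.zpow_sub_one A (-(i : ℤ))
        calc A ^ (-(i : ℤ) - 1) * (B ^ b * C ^ c)
            = A ^ (-(i : ℤ)) * (A⁻¹ * (B ^ b * C ^ c)) := by rw [hz, mul_assoc]
          _ = A ^ (-(i : ℤ)) * ((B ^ b1 * C ^ c1) * A⁻¹) := by rw [h1]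
          _ = (A ^ (-(i : ℤ)) * (B ^ b1 * C ^ c1)) * A⁻¹ := (mul_assoc _ _ _).symm
          _ = ((B ^ b2 * C ^ c2) * A ^ (-(i : ℤ))) * A⁻¹ := by rw [h2]
          _ = (B ^ b2 * C ^ c2) * A ^ (-(i : ℤ) - 1) := by rw [hz, mul_assoc]
  have hP' : ∀ k b c : ℤ, ∃ b' c' : ℤ,
      (B ^ b * C ^ c) * A ^ k = A ^ k * (B ^ b' * C ^ c') := by
    intro k b c
    obtain ⟨b', c', h⟩ := hP (-k) b c
    refine ⟨b', c', ?_⟩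
    have h3 : (B ^ b * C ^ c) = A ^ k * ((B ^ b' * C ^ c') * A ^ (-k)) := by
      rw [← h]; group
    rw [h3]; group
  -- normal form for products
  have hQ : ∀ a b c a' b' c' : ℤ, ∃ b'' c'' : ℤ,
      (A ^ a * B ^ b * C ^ c) * (A ^ a' * B ^ b' * C ^ c') =
        A ^ (a + a') * B ^ b'' * C ^ c'' := by
    intro a b c a' b' c'
    obtain ⟨b1, c1, h1⟩ := hP' a' b c
    refine ⟨b1 + b', c1 + c', ?_⟩
    calc (A ^ a * B ^ b * C ^ c) * (A ^ a' * B ^ b' * C ^ c')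
        = A ^ a * (((B ^ b * C ^ c) * A ^ a') * (B ^ b' * C ^ c')) := by
          simp only [mul_assoc]
      _ = A ^ a * ((A ^ a' * (B ^ b1 * C ^ c1)) * (B ^ b' * C ^ c')) := by rw [h1]
      _ = A ^ (a + a') * ((B ^ b1 * C ^ c1) * (B ^ b' * C ^ c')) := by
          rw [_root_.zpow_add]; simp only [mul_assoc]
      _ = A ^ (a + a') * (B ^ (b1 + b') * C ^ (c1 + c')) := by rw [hmerge]
      _ = A ^ (a + a') * B ^ (b1 + b') * C ^ (c1 + c') := (mul_assoc _ _ _).symm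
  -- normal form for inverses
  have hR : ∀ a b c : ℤ, ∃ b' c' : ℤ,
      (A ^ a * B ^ b * C ^ c)⁻¹ = A ^ (-a) * B ^ b' * C ^ c' := by
    intro a b c
    obtain ⟨b1, c1, h1⟩ := hP' (-a) (-b) (-c)
    refine ⟨b1, c1, ?_⟩
    have hswap : C ^ (-c) * B ^ (-b) = B ^ (-b) * C ^ (-c) :=
      ((hcomm.symm).zpow_zpow (-c) (-b)).eq
    have h0 : (A ^ a * B ^ b * C ^ c)⁻¹ = C ^ (-c) * B ^ (-b) * A ^ (-a) := by group
    rw [h0, hswap, h1, ← mul_assoc]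
  -- normal form for powers
  have hS : ∀ m a b c : ℤ, ∃ b' c' : ℤ,
      (A ^ a * B ^ b * C ^ c) ^ m = A ^ (a * m) * B ^ b' * C ^ c' := by
    intro m
    induction m using Int.induction_on with
    | zero => intro a b c; exact ⟨0, 0, by simp⟩
    | succ i ih =>
        intro a b c
        obtain ⟨b1, c1, h1⟩ := ih a b c
        obtain ⟨b2, c2, h2⟩ := hQ (a * i) b1 c1 a b c
        refine ⟨b2, c2, ?_⟩
        have he : a * ((i : ℤ) + 1) = a * (i : ℤ) + a := by ring
        rw [_root_.zpow_add_one, h1, h2, he]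
    | pred i ih =>
        intro a b c
        obtain ⟨b1, c1, h1⟩ := ih a b c
        obtain ⟨b2, c2, hinv⟩ := hR a b c
        obtain ⟨b3, c3, h3⟩ := hQ (a * (-(i : ℤ))) b1 c1 (-a) b2 c2
        refine ⟨b3, c3, ?_⟩
        have he : a * (-(i : ℤ) - 1) = a * (-(i : ℤ)) + (-a) := by ring
        rw [_root_.zpow_sub_one, h1, hinv, h3, he]
  -- main induction on the Euclidean measure
  have key : ∀ n : ℕ, ∀ a₁ b₁ c₁ a₂ b₂ c₂ a₃ b₃ c₃ : ℤ,
      a₂.natAbs + a₃.natAbs = n →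
      Nat.gcd (Nat.gcd a₁.natAbs a₂.natAbs) a₃.natAbs = 1 →
      ∃ p₁ q₁ p₂ q₂ p₃ q₃ : ℤ,
        Subgroup.closure ({A ^ a₁ * B ^ b₁ * C ^ c₁, A ^ a₂ * B ^ b₂ * C ^ c₂,
            A ^ a₃ * B ^ b₃ * C ^ c₃} : Set M4ˣ) =
        Subgroup.closure
          ({A * B ^ p₁ * C ^ q₁, B ^ p₂ * C ^ q₂, B ^ p₃ * C ^ q₃} : Set M4ˣ) := by
    intro n
    induction n using Nat.strong_induction_on with
    | _ n IH =>
    intro a₁ b₁ c₁ a₂ b₂ c₂ a₃ b₃ c₃ hsum hg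
    by_cases h2 : a₂ = 0
    · by_cases h3 : a₃ = 0
      · subst h2 h3
        simp only [Int.natAbs_zero, Nat.gcd_zero_right] at hg
        rcases Int.natAbs_eq_iff.mp hg with ha | ha
        · norm_num at ha
          subst ha
          refine ⟨b₁, c₁, b₂, c₂, b₃, c₃, ?_⟩
          simp only [zpow_one, zpow_zero, one_mul]
        · norm_num at ha
          subst ha
          obtain ⟨p, q, hinv⟩ := hR (-1) b₁ c₁
          have hneg : (-(-1 : ℤ)) = 1 := by norm_num
          rw [hneg] at hinv
          refine ⟨p, q, b₂, c₂, b₃, c₃, ?_⟩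
          rw [← cl3_inv (A ^ (-1 : ℤ) * B ^ b₁ * C ^ c₁) (A ^ (0 : ℤ) * B ^ b₂ * C ^ c₂)
            (A ^ (0 : ℤ) * B ^ b₃ * C ^ c₃), hinv]
          simp only [zpow_one, zpow_zero, one_mul]
      · -- a₂ = 0, a₃ ≠ 0 : reduce a₁ modulo a₃
        subst h2
        obtain ⟨u, v, hSg⟩ := hS (-(a₁ / a₃)) a₃ b₃ c₃
        obtain ⟨u2, v2, hQg⟩ := hQ a₁ b₁ c₁ (a₃ * -(a₁ / a₃)) u v
        have her : a₁ + a₃ * -(a₁ / a₃) = a₁ % a₃ := by rw [Int.emod_def]; ring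
        have hg1 : (A ^ a₁ * B ^ b₁ * C ^ c₁) * (A ^ a₃ * B ^ b₃ * C ^ c₃) ^ (-(a₁ / a₃)) =
            A ^ (a₁ % a₃) * B ^ u2 * C ^ v2 := by
          rw [hSg, hQg, her]
        have hlt : (0 : ℤ).natAbs + (a₁ % a₃).natAbs < n := by
          have hnn := Int.emod_nonneg a₁ h3
          have hlt' := Int.emod_lt a₁ h3
          omega
        have hgc : Nat.gcd (Nat.gcd a₃.natAbs (0 : ℤ).natAbs) (a₁ % a₃).natAbs = 1 := by
          have e1 : Int.gcd a₃ (a₁ - a₃ * (a₁ / a₃)) = Int.gcd a₃ a₁ := int_gcd_sub_mul _ _ _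
          rw [← Int.emod_def] at e1
          rw [Int.gcd_def, Int.gcd_def] at e1
          simp only [Int.natAbs_zero, Nat.gcd_zero_right] at hg ⊢
          rw [e1, Nat.gcd_comm]
          exact hg
        obtain ⟨p₁, q₁, p₂, q₂, p₃, q₃, hcl⟩ :=
          IH _ hlt a₃ b₃ c₃ 0 b₂ c₂ (a₁ % a₃) u2 v2 rfl hgc
        refine ⟨p₁, q₁, p₂, q₂, p₃, q₃, ?_⟩
        calc Subgroup.closure ({A ^ a₁ * B ^ b₁ * C ^ c₁, A ^ (0 : ℤ) * B ^ b₂ * C ^ c₂,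
              A ^ a₃ * B ^ b₃ * C ^ c₃} : Set M4ˣ)
            = Subgroup.closure
                {(A ^ a₁ * B ^ b₁ * C ^ c₁) * (A ^ a₃ * B ^ b₃ * C ^ c₃) ^ (-(a₁ / a₃)),
                  A ^ (0 : ℤ) * B ^ b₂ * C ^ c₂, A ^ a₃ * B ^ b₃ * C ^ c₃} :=
              (cl3_mul3 _ _ _ _).symm
          _ = Subgroup.closure {A ^ a₃ * B ^ b₃ * C ^ c₃, A ^ (0 : ℤ) * B ^ b₂ * C ^ c₂,
                A ^ (a₁ % a₃) * B ^ u2 * C ^ v2} := by rw [hg1, set3_comm13]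
          _ = _ := hcl
    · -- a₂ ≠ 0 : reduce a₁ modulo a₂
      obtain ⟨u, v, hSg⟩ := hS (-(a₁ / a₂)) a₂ b₂ c₂
      obtain ⟨u2, v2, hQg⟩ := hQ a₁ b₁ c₁ (a₂ * -(a₁ / a₂)) u v
      have her : a₁ + a₂ * -(a₁ / a₂) = a₁ % a₂ := by rw [Int.emod_def]; ring
      have hg1 : (A ^ a₁ * B ^ b₁ * C ^ c₁) * (A ^ a₂ * B ^ b₂ * C ^ c₂) ^ (-(a₁ / a₂)) =
          A ^ (a₁ % a₂) * B ^ u2 * C ^ v2 := by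
        rw [hSg, hQg, her]
      have hlt : (a₁ % a₂).natAbs + a₃.natAbs < n := by
        have hnn := Int.emod_nonneg a₁ h2
        have hlt' := Int.emod_lt a₁ h2
        omega
      have hgc : Nat.gcd (Nat.gcd a₂.natAbs (a₁ % a₂).natAbs) a₃.natAbs = 1 := by
        have e1 : Int.gcd a₂ (a₁ - a₂ * (a₁ / a₂)) = Int.gcd a₂ a₁ := int_gcd_sub_mul _ _ _
        rw [← Int.emod_def] at e1
        rw [Int.gcd_def, Int.gcd_def] at e1
        rw [e1, Nat.gcd_comm a₂.natAbs a₁.natAbs]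
        exact hg
      obtain ⟨p₁, q₁, p₂, q₂, p₃, q₃, hcl⟩ :=
        IH _ hlt a₂ b₂ c₂ (a₁ % a₂) u2 v2 a₃ b₃ c₃ rfl hgc
      refine ⟨p₁, q₁, p₂, q₂, p₃, q₃, ?_⟩
      calc Subgroup.closure ({A ^ a₁ * B ^ b₁ * C ^ c₁, A ^ a₂ * B ^ b₂ * C ^ c₂,
            A ^ a₃ * B ^ b₃ * C ^ c₃} : Set M4ˣ)
          = Subgroup.closure
              {(A ^ a₁ * B ^ b₁ * C ^ c₁) * (A ^ a₂ * B ^ b₂ * C ^ c₂) ^ (-(a₁ / a₂)),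
                A ^ a₂ * B ^ b₂ * C ^ c₂, A ^ a₃ * B ^ b₃ * C ^ c₃} :=
            (cl3_mul2 _ _ _ _).symm
        _ = Subgroup.closure {A ^ a₂ * B ^ b₂ * C ^ c₂, A ^ (a₁ % a₂) * B ^ u2 * C ^ v2,
              A ^ a₃ * B ^ b₃ * C ^ c₃} := by rw [hg1, set3_comm12]
        _ = _ := hcl
  have hgcd' : Nat.gcd (Nat.gcd α₁.natAbs α₂.natAbs) α₃.natAbs = 1 := hgcd
  exact key (α₂.natAbs + α₃.natAbs) α₁ β₁ γ₁ α₂ β₂ γ₂ α₃ β₃ γ₃ rfl hgcd'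
end

section
/- Let θ ∈ SL₂(ℤ) with trace(θ) ∈ {−2, −1, 0, 1} and let A, B, C be the 4×4 matrices generating D_m (A with top-left block θ, A₃₃ = A₃₄ = A₄₄ = 1, other entries 0; B = I₄ + E₁₄; C = I₄ + E₂₄). Let g₁ = A·B^{β₁}C^{γ₁}, g₂ = B^{β₂}C^{γ₂}, g₃ = B^{β₃}C^{γ₃} with βᵢ, γᵢ ∈ ℤ, and define τ₁ = (β₂, γ₂)ᵀ, τ₂ = (β₃, γ₃)ᵀ, τ₃ = θ·τ₁, τ₄ = θ·τ₂ ∈ ℤ². Then the subgroup generated by {g₁, g₂, g₃} equals D_m if and only if: (i) gcd of the first components of τ₁, τ₂, τ₃, τ₄ equals 1; (ii) gcd of the second components of τ₁, τ₂, τ₃, τ₄ equals 1; and (iii) gcd of the six cross products τᵢ ∧ τⱼ := τ_{1i}τ_{2j} − τ_{2i}τ_{1j} over 1 ≤ i < j ≤ 4 equals 1. -/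
open Matrix

/-! ### Auxiliary 4×4 matrix computations -/

/-- The unipotent matrix `I + a·E₀₃ + b·E₁₃`. -/
def Mv (a b : ℝ) : Matrix (Fin 4) (Fin 4) ℝ := !![1,0,0,a;0,1,0,b;0,0,1,0;0,0,0,1]

lemma Mv_mul (a b c d : ℝ) : Mv a b * Mv c d = Mv (a+c) (b+d) := by
  ext i j
  fin_cases i <;> fin_cases j <;>
    simp [Mv, Matrix.mul_apply, Fin.sum_univ_four, Matrix.vecHead, Matrix.vecTail] <;> ring

lemma Mv_one : Mv 0 0 = 1 := by
  ext i j
  fin_cases i <;> fin_cases j <;>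
    simp [Mv, Matrix.one_apply, Matrix.vecHead, Matrix.vecTail]

/-- The matrix `A` with top-left block `(p,q;r,s)`. -/
def Am (p q r s : ℝ) : Matrix (Fin 4) (Fin 4) ℝ := !![p,q,0,0;r,s,0,0;0,0,1,1;0,0,0,1]

/-- The inverse of `Am`. -/
def Ai (p q r s : ℝ) : Matrix (Fin 4) (Fin 4) ℝ := !![s,-q,0,0;-r,p,0,0;0,0,1,-1;0,0,0,1]

lemma Am_Ai {p q r s : ℝ} (h : p*s - q*r = 1) : Am p q r s * Ai p q r s = 1 := by
  ext i j
  fin_cases i <;> fin_cases j <;>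
    simp [Am, Ai, Matrix.mul_apply, Fin.sum_univ_four, Matrix.vecHead, Matrix.vecTail,
      Matrix.one_apply] <;> linarith [h]

lemma Am_Mv (p q r s a b : ℝ) :
    Am p q r s * Mv a b = Mv (p*a+q*b) (r*a+s*b) * Am p q r s := by
  ext i j
  fin_cases i <;> fin_cases j <;>
    simp [Am, Mv, Matrix.mul_apply, Fin.sum_univ_four, Matrix.vecHead, Matrix.vecTail] <;> ring

/-- Row structure: rows 2 and 3 as in the group `D`. -/
def Prow (X : Matrix (Fin 4) (Fin 4) ℝ) : Prop :=
  X 2 0 = 0 ∧ X 2 1 = 0 ∧ X 2 2 = 1 ∧ X 3 0 = 0 ∧ X 3 1 = 0 ∧ X 3 2 = 0 ∧ X 3 3 = 1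

lemma Prow_mul {X Y : Matrix (Fin 4) (Fin 4) ℝ} (hX : Prow X) (hY : Prow Y) :
    Prow (X*Y) ∧ (X*Y) 2 3 = X 2 3 + Y 2 3 := by
  obtain ⟨a1,a2,a3,a4,a5,a6,a7⟩ := hX
  obtain ⟨b1,b2,b3,b4,b5,b6,b7⟩ := hY
  refine ⟨⟨?_,?_,?_,?_,?_,?_,?_⟩,?_⟩ <;>
    simp [Matrix.mul_apply, Fin.sum_univ_four, a1,a2,a3,a4,a5,a6,a7,b1,b2,b3,b4,b5,b6,b7] <;> ring

lemma Prow_Mv (a b : ℝ) : Prow (Mv a b) ∧ (Mv a b) 2 3 = 0 := by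
  refine ⟨⟨?_,?_,?_,?_,?_,?_,?_⟩,?_⟩ <;> simp [Mv, Prow, Matrix.vecHead, Matrix.vecTail]

lemma Prow_Am (p q r s : ℝ) : Prow (Am p q r s) ∧ (Am p q r s) 2 3 = 1 := by
  refine ⟨⟨?_,?_,?_,?_,?_,?_,?_⟩,?_⟩ <;> simp [Am, Prow, Matrix.vecHead, Matrix.vecTail]

lemma Prow_Ai (p q r s : ℝ) : Prow (Ai p q r s) ∧ (Ai p q r s) 2 3 = -1 := by
  refine ⟨⟨?_,?_,?_,?_,?_,?_,?_⟩,?_⟩ <;> simp [Ai, Prow, Matrix.vecHead, Matrix.vecTail]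

lemma Prow_one : Prow 1 ∧ (1 : Matrix (Fin 4) (Fin 4) ℝ) 2 3 = 0 := by
  refine ⟨⟨?_,?_,?_,?_,?_,?_,?_⟩,?_⟩ <;> simp [Prow, Matrix.one_apply]

lemma Mv_03 (a b : ℝ) : (Mv a b) 0 3 = a := by simp [Mv]
lemma Mv_13 (a b : ℝ) : (Mv a b) 1 3 = b := by simp [Mv]

lemma unit_inv_coe {M : Type*} [Monoid M] {X : Mˣ} {Y : M} (h : (X : M) * Y = 1) :
    ((X⁻¹ : Mˣ) : M) = Y := by
  rw [← one_mul Y, ← Units.inv_mul X, mul_assoc, h, mul_one]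

/-- With g₁ = A·B^{β₁}C^{γ₁}, g₂ = B^{β₂}C^{γ₂}, g₃ = B^{β₃}C^{γ₃} and
τ₁ = (β₂,γ₂), τ₂ = (β₃,γ₃), τ₃ = θτ₁, τ₄ = θτ₂, the subgroup generated by g₁,g₂,g₃
equals D_m = ⟨A,B,C⟩ iff the gcd of the first components of the τᵢ is 1, the gcd of
their second components is 1, and the gcd of the six cross products τᵢ ∧ τⱼ is 1. -/
theorem stmt_17 (θ : Matrix (Fin 2) (Fin 2) ℤ) (hdet : θ.det = 1)
    (htr : θ.trace = -2 ∨ θ.trace = -1 ∨ θ.trace = 0 ∨ θ.trace = 1)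
    (A B C : (Matrix (Fin 4) (Fin 4) ℝ)ˣ)
    (hA : (A : Matrix (Fin 4) (Fin 4) ℝ) =
      !![(θ 0 0 : ℝ), (θ 0 1 : ℝ), 0, 0;
         (θ 1 0 : ℝ), (θ 1 1 : ℝ), 0, 0;
         0, 0, 1, 1;
         0, 0, 0, 1])
    (hB : (B : Matrix (Fin 4) (Fin 4) ℝ) = 1 + Matrix.single 0 3 (1 : ℝ))
    (hC : (C : Matrix (Fin 4) (Fin 4) ℝ) = 1 + Matrix.single 1 3 (1 : ℝ))
    (β₁ γ₁ β₂ γ₂ β₃ γ₃ : ℤ)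
    (g₁ g₂ g₃ : (Matrix (Fin 4) (Fin 4) ℝ)ˣ)
    (hg₁ : g₁ = A * B ^ β₁ * C ^ γ₁)
    (hg₂ : g₂ = B ^ β₂ * C ^ γ₂)
    (hg₃ : g₃ = B ^ β₃ * C ^ γ₃)
    (τ₁ τ₂ τ₃ τ₄ : ℤ × ℤ)
    (hτ₁ : τ₁ = (β₂, γ₂)) (hτ₂ : τ₂ = (β₃, γ₃))
    (hτ₃ : τ₃ = (θ 0 0 * β₂ + θ 0 1 * γ₂, θ 1 0 * β₂ + θ 1 1 * γ₂))
    (hτ₄ : τ₄ = (θ 0 0 * β₃ + θ 0 1 * γ₃, θ 1 0 * β₃ + θ 1 1 * γ₃)) :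
    Subgroup.closure ({g₁, g₂, g₃} : Set (Matrix (Fin 4) (Fin 4) ℝ)ˣ) =
        Subgroup.closure ({A, B, C} : Set (Matrix (Fin 4) (Fin 4) ℝ)ˣ) ↔
      (Int.gcd (Int.gcd (Int.gcd τ₁.1 τ₂.1) τ₃.1) τ₄.1 = 1 ∧
       Int.gcd (Int.gcd (Int.gcd τ₁.2 τ₂.2) τ₃.2) τ₄.2 = 1 ∧
       Int.gcd (Int.gcd (Int.gcd (Int.gcd (Int.gcd
           (τ₁.1 * τ₂.2 - τ₁.2 * τ₂.1)
           (τ₁.1 * τ₃.2 - τ₁.2 * τ₃.1))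
           (τ₁.1 * τ₄.2 - τ₁.2 * τ₄.1))
           (τ₂.1 * τ₃.2 - τ₂.2 * τ₃.1))
           (τ₂.1 * τ₄.2 - τ₂.2 * τ₄.1))
           (τ₃.1 * τ₄.2 - τ₃.2 * τ₄.1) = 1) := by
  clear htr
  have hdet' : θ 0 0 * θ 1 1 - θ 0 1 * θ 1 0 = 1 := by
    rwa [Matrix.det_fin_two] at hdet
  have hdetR : (θ 0 0 : ℝ) * (θ 1 1 : ℝ) - (θ 0 1 : ℝ) * (θ 1 0 : ℝ) = 1 := by
    exact_mod_cast congrArg (fun z : ℤ => (z : ℝ)) hdet'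
  -- the unipotent one-parameter subgroup
  set u : ℤ × ℤ → (Matrix (Fin 4) (Fin 4) ℝ)ˣ := fun v => B ^ v.1 * C ^ v.2 with hu_def
  have hB' : (B : Matrix (Fin 4) (Fin 4) ℝ) = Mv 1 0 := by
    rw [hB]; ext i j
    fin_cases i <;> fin_cases j <;>
      simp [Mv, Matrix.single, Matrix.one_apply, Matrix.vecHead, Matrix.vecTail]
  have hC' : (C : Matrix (Fin 4) (Fin 4) ℝ) = Mv 0 1 := by
    rw [hC]; ext i j
    fin_cases i <;> fin_cases j <;>
      simp [Mv, Matrix.single, Matrix.one_apply, Matrix.vecHead, Matrix.vecTail]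
  have hBinv : ((B⁻¹ : (Matrix (Fin 4) (Fin 4) ℝ)ˣ) : Matrix (Fin 4) (Fin 4) ℝ) = Mv (-1) 0 := by
    apply unit_inv_coe; rw [hB', Mv_mul]; norm_num [Mv_one]
  have hCinv : ((C⁻¹ : (Matrix (Fin 4) (Fin 4) ℝ)ˣ) : Matrix (Fin 4) (Fin 4) ℝ) = Mv 0 (-1) := by
    apply unit_inv_coe; rw [hC', Mv_mul]; norm_num [Mv_one]
  have hBpow : ∀ n : ℤ, ((B ^ n : (Matrix (Fin 4) (Fin 4) ℝ)ˣ) : Matrix (Fin 4) (Fin 4) ℝ)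
      = Mv (n : ℝ) 0 := by
    intro n
    induction n using Int.induction_on with
    | zero => simp [Mv_one]
    | succ n ih =>
        rw [_root_.zpow_add_one, Units.val_mul, ih, hB', Mv_mul]
        push_cast; ring_nf
    | pred n ih =>
        rw [_root_.zpow_sub_one, Units.val_mul, ih, hBinv, Mv_mul]
        push_cast; ring_nf
  have hCpow : ∀ n : ℤ, ((C ^ n : (Matrix (Fin 4) (Fin 4) ℝ)ˣ) : Matrix (Fin 4) (Fin 4) ℝ)
      = Mv 0 (n : ℝ) := by
    intro n
    induction n using Int.induction_on with
    | zero => simp [Mv_one]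
    | succ n ih =>
        rw [_root_.zpow_add_one, Units.val_mul, ih, hC', Mv_mul]
        push_cast; ring_nf
    | pred n ih =>
        rw [_root_.zpow_sub_one, Units.val_mul, ih, hCinv, Mv_mul]
        push_cast; ring_nf
  have hu : ∀ v : ℤ × ℤ, ((u v : (Matrix (Fin 4) (Fin 4) ℝ)ˣ) : Matrix (Fin 4) (Fin 4) ℝ)
      = Mv (v.1 : ℝ) (v.2 : ℝ) := by
    intro v
    rw [hu_def]
    simp only [Units.val_mul, hBpow, hCpow, Mv_mul, add_zero, zero_add]
  have hu_mul : ∀ v w : ℤ × ℤ, u v * u w = u (v + w) := by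
    intro v w
    apply Units.ext
    rw [Units.val_mul, hu, hu, hu, Mv_mul, Prod.fst_add, Prod.snd_add]
    push_cast; rfl
  have hu_one : u 0 = 1 := by
    apply Units.ext
    rw [hu]; norm_num [Mv_one]
  have hu_inv : ∀ v : ℤ × ℤ, (u v)⁻¹ = u (-v) := by
    intro v
    apply inv_eq_of_mul_eq_one_right
    rw [hu_mul, add_neg_cancel, hu_one]
  have hu_inj : ∀ v w : ℤ × ℤ, u v = u w → v = w := by
    intro v w h
    have h' := congrArg Units.val h
    rw [hu, hu] at h'
    have h1 := congrFun (congrFun h' 0) 3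
    have h2 := congrFun (congrFun h' 1) 3
    rw [Mv_03, Mv_03] at h1
    rw [Mv_13, Mv_13] at h2
    exact Prod.ext (by exact_mod_cast h1) (by exact_mod_cast h2)
  have hA' : (A : Matrix (Fin 4) (Fin 4) ℝ) = Am (θ 0 0) (θ 0 1) (θ 1 0) (θ 1 1) := by
    rw [hA]; rfl
  have hAinv : ((A⁻¹ : (Matrix (Fin 4) (Fin 4) ℝ)ˣ) : Matrix (Fin 4) (Fin 4) ℝ)
      = Ai (θ 0 0) (θ 0 1) (θ 1 0) (θ 1 1) := by
    apply unit_inv_coe; rw [hA']; exact Am_Ai hdetR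
  -- the θ action on ℤ²
  set fθ : ℤ × ℤ → ℤ × ℤ :=
    fun v => (θ 0 0 * v.1 + θ 0 1 * v.2, θ 1 0 * v.1 + θ 1 1 * v.2) with hfθ_def
  set fψ : ℤ × ℤ → ℤ × ℤ :=
    fun v => (θ 1 1 * v.1 - θ 0 1 * v.2, -(θ 1 0) * v.1 + θ 0 0 * v.2) with hfψ_def
  have hfθfψ : ∀ v, fθ (fψ v) = v := by
    intro v
    rw [hfθ_def, hfψ_def]
    refine Prod.ext ?_ ?_
    · simp only []; linear_combination v.1 * hdet'
    · simp only []; linear_combination v.2 * hdet'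
  -- conjugation identities
  have hconj : ∀ v : ℤ × ℤ, A * u v = u (fθ v) * A := by
    intro v
    apply Units.ext
    have l1 : ((A * u v : (Matrix (Fin 4) (Fin 4) ℝ)ˣ) : Matrix (Fin 4) (Fin 4) ℝ)
        = (A : Matrix (Fin 4) (Fin 4) ℝ) * ((u v : (Matrix (Fin 4) (Fin 4) ℝ)ˣ) : Matrix (Fin 4) (Fin 4) ℝ) := rfl
    have l2 : ((u (fθ v) * A : (Matrix (Fin 4) (Fin 4) ℝ)ˣ) : Matrix (Fin 4) (Fin 4) ℝ)
        = ((u (fθ v) : (Matrix (Fin 4) (Fin 4) ℝ)ˣ) : Matrix (Fin 4) (Fin 4) ℝ) * (A : Matrix (Fin 4) (Fin 4) ℝ) := rfl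
    rw [l1, l2, hu, hu, hA', hfθ_def]
    push_cast
    exact Am_Mv _ _ _ _ _ _
  have hconjA : ∀ v : ℤ × ℤ, A * u v * A⁻¹ = u (fθ v) := by
    intro v
    have h2 : u (fθ v) * A * A⁻¹ = u (fθ v) := mul_inv_cancel_right _ _
    rw [hconj v, h2]
  have hconjA' : ∀ v : ℤ × ℤ, A⁻¹ * u v * A = u (fψ v) := by
    intro v
    have h := hconj (fψ v)
    rw [hfθfψ v] at h
    rw [mul_assoc, ← h]
    group
  have hτ₀ : g₁ = A * u (β₁, γ₁) := by
    rw [hg₁, hu_def, mul_assoc]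
  have hucomm : ∀ a b : ℤ × ℤ, u a * u b = u b * u a := by
    intro a b; rw [hu_mul, hu_mul, add_comm]
  have hg1conj : ∀ v : ℤ × ℤ, g₁ * u v * g₁⁻¹ = u (fθ v) := by
    intro v
    rw [hτ₀]
    have : A * u (β₁, γ₁) * u v * (A * u (β₁, γ₁))⁻¹
        = A * (u (β₁, γ₁) * u v * (u (β₁, γ₁))⁻¹) * A⁻¹ := by group
    have h2 : u (β₁, γ₁) * u v * (u (β₁, γ₁))⁻¹ = u v := by
      rw [hu_inv, hu_mul, hu_mul]; congr 1; abel
    rw [this, h2, hconjA]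
  have hg1conj' : ∀ v : ℤ × ℤ, g₁⁻¹ * u v * g₁ = u (fψ v) := by
    intro v
    rw [hτ₀]
    have : (A * u (β₁, γ₁))⁻¹ * u v * (A * u (β₁, γ₁))
        = (u (β₁, γ₁))⁻¹ * (A⁻¹ * u v * A) * u (β₁, γ₁) := by group
    have h2 : (u (β₁, γ₁))⁻¹ * u (fψ v) * u (β₁, γ₁) = u (fψ v) := by
      rw [hu_inv, hu_mul, hu_mul]; congr 1; abel
    rw [this, hconjA', h2]
  -- the lattice Λ
  set Λ : AddSubgroup (ℤ × ℤ) := AddSubgroup.closure {τ₁, τ₂, τ₃, τ₄} with hΛ_def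
  have hτ₁Λ : τ₁ ∈ Λ := AddSubgroup.subset_closure (by simp)
  have hτ₂Λ : τ₂ ∈ Λ := AddSubgroup.subset_closure (by simp)
  have hτ₃Λ : τ₃ ∈ Λ := AddSubgroup.subset_closure (by simp)
  have hτ₄Λ : τ₄ ∈ Λ := AddSubgroup.subset_closure (by simp)
  have hfθadd : ∀ x y : ℤ × ℤ, fθ (x + y) = fθ x + fθ y := by
    intro x y; rw [hfθ_def]
    refine Prod.ext ?_ ?_ <;> simp <;> ring
  have hfψadd : ∀ x y : ℤ × ℤ, fψ (x + y) = fψ x + fψ y := by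
    intro x y; rw [hfψ_def]
    refine Prod.ext ?_ ?_ <;> simp <;> ring
  have hfθzero : fθ 0 = 0 := by rw [hfθ_def]; simp
  have hfψzero : fψ 0 = 0 := by rw [hfψ_def]; simp
  have hfθneg : ∀ x : ℤ × ℤ, fθ (-x) = -(fθ x) := by
    intro x; rw [hfθ_def]; refine Prod.ext ?_ ?_ <;> simp <;> ring
  have hfψneg : ∀ x : ℤ × ℤ, fψ (-x) = -(fψ x) := by
    intro x; rw [hfψ_def]; refine Prod.ext ?_ ?_ <;> simp <;> ring
  have hfθτ₁ : fθ τ₁ = τ₃ := by rw [hfθ_def, hτ₁, hτ₃]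
  have hfθτ₂ : fθ τ₂ = τ₄ := by rw [hfθ_def, hτ₂, hτ₄]
  have hfθτ₃ : fθ τ₃ = (θ 0 0 + θ 1 1) • τ₃ - τ₁ := by
    rw [hfθ_def, hτ₁, hτ₃]
    refine Prod.ext ?_ ?_ <;> simp [Prod.smul_def] <;>
      [linear_combination (-β₂ : ℤ) * hdet'; linear_combination (-γ₂ : ℤ) * hdet']
  have hfθτ₄ : fθ τ₄ = (θ 0 0 + θ 1 1) • τ₄ - τ₂ := by
    rw [hfθ_def, hτ₂, hτ₄]
    refine Prod.ext ?_ ?_ <;> simp [Prod.smul_def] <;>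
      [linear_combination (-β₃ : ℤ) * hdet'; linear_combination (-γ₃ : ℤ) * hdet']
  have hfψτ₁ : fψ τ₁ = (θ 0 0 + θ 1 1) • τ₁ - τ₃ := by
    rw [hfψ_def, hτ₁, hτ₃]
    refine Prod.ext ?_ ?_ <;> simp [Prod.smul_def] <;> ring
  have hfψτ₂ : fψ τ₂ = (θ 0 0 + θ 1 1) • τ₂ - τ₄ := by
    rw [hfψ_def, hτ₂, hτ₄]
    refine Prod.ext ?_ ?_ <;> simp [Prod.smul_def] <;> ring
  have hfψτ₃ : fψ τ₃ = τ₁ := by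
    rw [hfψ_def, hτ₁, hτ₃]
    refine Prod.ext ?_ ?_ <;> simp <;>
      [linear_combination (β₂ : ℤ) * hdet'; linear_combination (γ₂ : ℤ) * hdet']
  have hfψτ₄ : fψ τ₄ = τ₂ := by
    rw [hfψ_def, hτ₂, hτ₄]
    refine Prod.ext ?_ ?_ <;> simp <;>
      [linear_combination (β₃ : ℤ) * hdet'; linear_combination (γ₃ : ℤ) * hdet']
  have hΛfθ : ∀ v ∈ Λ, fθ v ∈ Λ := by
    intro v hv
    refine AddSubgroup.closure_induction (p := fun x _ => fθ x ∈ Λ) ?_ ?_ ?_ ?_ hv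
    · intro x hx
      rcases hx with h | h | h | h
      · rw [h, hfθτ₁]; exact hτ₃Λ
      · rw [h, hfθτ₂]; exact hτ₄Λ
      · rw [h, hfθτ₃]; exact sub_mem (AddSubgroup.zsmul_mem _ hτ₃Λ _) hτ₁Λ
      · rw [Set.mem_singleton_iff.mp h, hfθτ₄]
        exact sub_mem (AddSubgroup.zsmul_mem _ hτ₄Λ _) hτ₂Λ
    · show fθ 0 ∈ Λ; rw [hfθzero]; exact zero_mem _
    · intro x y _ _ h1 h2; show fθ (x + y) ∈ Λ; rw [hfθadd]; exact add_mem h1 h2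
    · intro x _ h1; show fθ (-x) ∈ Λ; rw [hfθneg]; exact neg_mem h1
  have hΛfψ : ∀ v ∈ Λ, fψ v ∈ Λ := by
    intro v hv
    refine AddSubgroup.closure_induction (p := fun x _ => fψ x ∈ Λ) ?_ ?_ ?_ ?_ hv
    · intro x hx
      rcases hx with h | h | h | h
      · rw [h, hfψτ₁]; exact sub_mem (AddSubgroup.zsmul_mem _ hτ₁Λ _) hτ₃Λ
      · rw [h, hfψτ₂]; exact sub_mem (AddSubgroup.zsmul_mem _ hτ₂Λ _) hτ₄Λ
      · rw [h, hfψτ₃]; exact hτ₁Λ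
      · rw [Set.mem_singleton_iff.mp h, hfψτ₄]; exact hτ₂Λ
    · show fψ 0 ∈ Λ; rw [hfψzero]; exact zero_mem _
    · intro x y _ _ h1 h2; show fψ (x + y) ∈ Λ; rw [hfψadd]; exact add_mem h1 h2
    · intro x _ h1; show fψ (-x) ∈ Λ; rw [hfψneg]; exact neg_mem h1
  -- conjugation by powers of g₁ preserves u-image of Λ
  have conjpow : ∀ m : ℤ, ∀ v ∈ Λ, ∃ w ∈ Λ, g₁ ^ m * u v * (g₁ ^ m)⁻¹ = u w := by
    intro m
    induction m using Int.induction_on with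
    | zero => intro v hv; exact ⟨v, hv, by simp⟩
    | succ n ih =>
        intro v hv
        obtain ⟨w, hw, hcw⟩ := ih (fθ v) (hΛfθ v hv)
        refine ⟨w, hw, ?_⟩
        have e1 : g₁ ^ ((n : ℤ) + 1) * u v * (g₁ ^ ((n : ℤ) + 1))⁻¹
            = g₁ ^ (n : ℤ) * (g₁ * u v * g₁⁻¹) * (g₁ ^ (n : ℤ))⁻¹ := by
          rw [_root_.zpow_add_one]; group
        rw [e1, hg1conj, hcw]
    | pred n ih =>
        intro v hv
        obtain ⟨w, hw, hcw⟩ := ih (fψ v) (hΛfψ v hv)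
        refine ⟨w, hw, ?_⟩
        have e1 : g₁ ^ (-(n : ℤ) - 1) * u v * (g₁ ^ (-(n : ℤ) - 1))⁻¹
            = g₁ ^ (-(n : ℤ)) * (g₁⁻¹ * u v * g₁) * (g₁ ^ (-(n : ℤ)))⁻¹ := by
          rw [_root_.zpow_sub_one]; group
        rw [e1, hg1conj', hcw]
  have hg₂u : g₂ = u τ₁ := by rw [hg₂, hu_def, hτ₁]
  have hg₃u : g₃ = u τ₂ := by rw [hg₃, hu_def, hτ₂]
  -- structure of the subgroup generated by g₁, g₂, g₃
  have key : ∀ g ∈ Subgroup.closure ({g₁, g₂, g₃} : Set (Matrix (Fin 4) (Fin 4) ℝ)ˣ),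
      ∃ n : ℤ, ∃ v ∈ Λ, g = g₁ ^ n * u v := by
    intro g hg
    refine Subgroup.closure_induction
      (p := fun g _ => ∃ n : ℤ, ∃ v ∈ Λ, g = g₁ ^ n * u v) ?_ ?_ ?_ ?_ hg
    · intro x hx
      rcases hx with h | h | h
      · exact ⟨1, 0, zero_mem _, by rw [h, hu_one, mul_one, zpow_one]⟩
      · exact ⟨0, τ₁, hτ₁Λ, by rw [Set.mem_singleton_iff.mp (Set.mem_singleton_iff.mpr h),
          hg₂u, zpow_zero, one_mul]⟩
      · exact ⟨0, τ₂, hτ₂Λ, by rw [Set.mem_singleton_iff.mp h, hg₃u, zpow_zero, one_mul]⟩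
    · exact ⟨0, 0, zero_mem _, by rw [hu_one, mul_one, zpow_zero]⟩
    · rintro x y _ _ ⟨n, v, hv, hxe⟩ ⟨m, w, hw, hye⟩
      obtain ⟨v', hv', hcv⟩ := conjpow (-m) v hv
      rw [_root_.zpow_neg, inv_inv] at hcv
      have h1 : u v * g₁ ^ m = g₁ ^ m * u v' := by
        rw [← hcv]; group
      refine ⟨n + m, v' + w, add_mem hv' hw, ?_⟩
      calc x * y = g₁ ^ n * (u v * g₁ ^ m) * u w := by rw [hxe, hye]; group
        _ = g₁ ^ n * (g₁ ^ m * u v') * u w := by rw [h1]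
        _ = g₁ ^ (n + m) * (u v' * u w) := by rw [_root_.zpow_add]; group
        _ = g₁ ^ (n + m) * u (v' + w) := by rw [hu_mul]
    · rintro x _ ⟨n, v, hv, hxe⟩
      obtain ⟨w, hw, hcw⟩ := conjpow n (-v) (neg_mem hv)
      refine ⟨-n, w, hw, ?_⟩
      have h1 : u (-v) * (g₁ ^ n)⁻¹ = (g₁ ^ n)⁻¹ * u w := by
        rw [← hcw]; group
      calc x⁻¹ = (u v)⁻¹ * (g₁ ^ n)⁻¹ := by rw [hxe]; group
        _ = u (-v) * (g₁ ^ n)⁻¹ := by rw [hu_inv]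
        _ = (g₁ ^ n)⁻¹ * u w := h1
        _ = g₁ ^ (-n) * u w := by rw [_root_.zpow_neg]
  -- row structure of powers of g₁
  have hg1coe : (g₁ : Matrix (Fin 4) (Fin 4) ℝ)
      = Am (θ 0 0) (θ 0 1) (θ 1 0) (θ 1 1) * Mv (β₁ : ℝ) (γ₁ : ℝ) := by
    rw [hτ₀]
    have : ((A * u (β₁, γ₁) : (Matrix (Fin 4) (Fin 4) ℝ)ˣ) : Matrix (Fin 4) (Fin 4) ℝ)
        = (A : Matrix (Fin 4) (Fin 4) ℝ) * ((u (β₁, γ₁) : (Matrix (Fin 4) (Fin 4) ℝ)ˣ) : Matrix (Fin 4) (Fin 4) ℝ) := rfl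
    rw [this, hA', hu]
  have hg1P : Prow (g₁ : Matrix (Fin 4) (Fin 4) ℝ) ∧ (g₁ : Matrix (Fin 4) (Fin 4) ℝ) 2 3 = 1 := by
    rw [hg1coe]
    have h := Prow_mul (Prow_Am (θ 0 0) (θ 0 1) (θ 1 0) (θ 1 1)).1 (Prow_Mv (β₁ : ℝ) (γ₁ : ℝ)).1
    exact ⟨h.1, by rw [h.2, (Prow_Am _ _ _ _).2, (Prow_Mv _ _).2, add_zero]⟩
  have hg1invcoe : ((g₁⁻¹ : (Matrix (Fin 4) (Fin 4) ℝ)ˣ) : Matrix (Fin 4) (Fin 4) ℝ)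
      = Mv (-β₁ : ℝ) (-γ₁ : ℝ) * Ai (θ 0 0) (θ 0 1) (θ 1 0) (θ 1 1) := by
    apply unit_inv_coe
    rw [hg1coe, mul_assoc, ← mul_assoc (Mv (β₁ : ℝ) (γ₁ : ℝ)), Mv_mul]
    norm_num [Mv_one, Am_Ai hdetR]
  have hg1invP : Prow ((g₁⁻¹ : (Matrix (Fin 4) (Fin 4) ℝ)ˣ) : Matrix (Fin 4) (Fin 4) ℝ)
      ∧ ((g₁⁻¹ : (Matrix (Fin 4) (Fin 4) ℝ)ˣ) : Matrix (Fin 4) (Fin 4) ℝ) 2 3 = -1 := by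
    rw [hg1invcoe]
    have h := Prow_mul (Prow_Mv (-β₁ : ℝ) (-γ₁ : ℝ)).1 (Prow_Ai (θ 0 0) (θ 0 1) (θ 1 0) (θ 1 1)).1
    exact ⟨h.1, by rw [h.2, (Prow_Ai _ _ _ _).2, (Prow_Mv _ _).2, zero_add]⟩
  have hg1pow : ∀ n : ℤ, Prow ((g₁ ^ n : (Matrix (Fin 4) (Fin 4) ℝ)ˣ) : Matrix (Fin 4) (Fin 4) ℝ)
      ∧ ((g₁ ^ n : (Matrix (Fin 4) (Fin 4) ℝ)ˣ) : Matrix (Fin 4) (Fin 4) ℝ) 2 3 = n := by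
    intro n
    induction n using Int.induction_on with
    | zero => simpa using Prow_one
    | succ n ih =>
        rw [_root_.zpow_add_one, Units.val_mul]
        have h := Prow_mul ih.1 hg1P.1
        refine ⟨h.1, ?_⟩
        rw [h.2, ih.2, hg1P.2]; push_cast; ring
    | pred n ih =>
        rw [_root_.zpow_sub_one, Units.val_mul]
        have h := Prow_mul ih.1 hg1invP.1
        refine ⟨h.1, ?_⟩
        rw [h.2, ih.2, hg1invP.2]; push_cast; ring
  -- extraction: if u w lands in the closure, then w ∈ Λ
  have extract : ∀ w : ℤ × ℤ,
      u w ∈ Subgroup.closure ({g₁, g₂, g₃} : Set (Matrix (Fin 4) (Fin 4) ℝ)ˣ) → w ∈ Λ := by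
    intro w hw
    obtain ⟨n, v, hv, he⟩ := key _ hw
    have hcoe : ((u w : (Matrix (Fin 4) (Fin 4) ℝ)ˣ) : Matrix (Fin 4) (Fin 4) ℝ)
        = ((g₁ ^ n : (Matrix (Fin 4) (Fin 4) ℝ)ˣ) : Matrix (Fin 4) (Fin 4) ℝ)
          * ((u v : (Matrix (Fin 4) (Fin 4) ℝ)ˣ) : Matrix (Fin 4) (Fin 4) ℝ) := by
      rw [he]; rfl
    rw [hu, hu] at hcoe
    have h23 := congrFun (congrFun hcoe 2) 3
    have hP := Prow_mul (hg1pow n).1 (Prow_Mv (v.1 : ℝ) (v.2 : ℝ)).1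
    rw [(Prow_Mv (w.1 : ℝ) (w.2 : ℝ)).2, hP.2, (hg1pow n).2, (Prow_Mv (v.1 : ℝ) (v.2 : ℝ)).2,
      add_zero] at h23
    have hn0 : n = 0 := by exact_mod_cast h23.symm
    rw [hn0, zpow_zero, one_mul] at he
    have := hu_inj _ _ he
    rwa [this]
  have hBu : u (1, 0) = B := by
    rw [hu_def]; simp
  have hCu : u (0, 1) = C := by
    rw [hu_def]; simp
  -- divisibility transfer along Λ
  have hdvd : ∀ (d : ℤ) (f : ℤ × ℤ → ℤ), (∀ x y, f (x + y) = f x + f y) →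
      d ∣ f τ₁ → d ∣ f τ₂ → d ∣ f τ₃ → d ∣ f τ₄ → ∀ v ∈ Λ, d ∣ f v := by
    intro d f hadd h1 h2 h3 h4 v hv
    have hf0 : f 0 = 0 := by
      have := hadd 0 0; simp at this; linarith
    have hfneg : ∀ x, f (-x) = -f x := by
      intro x
      have := hadd x (-x); rw [add_neg_cancel, hf0] at this; linarith
    refine AddSubgroup.closure_induction (p := fun x _ => d ∣ f x) ?_ ?_ ?_ ?_ hv
    · intro x hx
      rcases hx with h | h | h | h
      · rw [h]; exact h1
      · rw [h]; exact h2
      · rw [h]; exact h3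
      · rw [Set.mem_singleton_iff.mp h]; exact h4
    · show d ∣ f 0; rw [hf0]; exact dvd_zero d
    · intro x y _ _ hx hy; show d ∣ f (x + y); rw [hadd]; exact dvd_add hx hy
    · intro x _ hx; show d ∣ f (-x); rw [hfneg]; exact dvd_neg.mpr hx
  constructor
  · -- forward direction
    intro hEq
    have hBH : B ∈ Subgroup.closure ({g₁, g₂, g₃} : Set (Matrix (Fin 4) (Fin 4) ℝ)ˣ) := by
      rw [hEq]; exact Subgroup.subset_closure (by simp)
    have hCH : C ∈ Subgroup.closure ({g₁, g₂, g₃} : Set (Matrix (Fin 4) (Fin 4) ℝ)ˣ) := by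
      rw [hEq]; exact Subgroup.subset_closure (by simp)
    have he1 : ((1 : ℤ), (0 : ℤ)) ∈ Λ := extract _ (by rw [hBu]; exact hBH)
    have he2 : ((0 : ℤ), (1 : ℤ)) ∈ Λ := extract _ (by rw [hCu]; exact hCH)
    have natone : ∀ d : ℕ, ((d : ℤ) ∣ 1) → d = 1 := by
      intro d hd
      exact Nat.dvd_one.mp (by exact_mod_cast hd)
    refine ⟨?_, ?_, ?_⟩
    · apply natone
      have := hdvd (Int.gcd (Int.gcd (Int.gcd τ₁.1 τ₂.1) τ₃.1) τ₄.1 : ℤ) (fun v => v.1)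
        (fun x y => rfl)
        (dvd_trans (dvd_trans (Int.gcd_dvd_left _ _) (Int.gcd_dvd_left _ _)) (Int.gcd_dvd_left _ _))
        (dvd_trans (dvd_trans (Int.gcd_dvd_left _ _) (Int.gcd_dvd_left _ _)) (Int.gcd_dvd_right _ _))
        (dvd_trans (Int.gcd_dvd_left _ _) (Int.gcd_dvd_right _ _))
        (Int.gcd_dvd_right _ _)
        _ he1
      simpa using this
    · apply natone
      have := hdvd (Int.gcd (Int.gcd (Int.gcd τ₁.2 τ₂.2) τ₃.2) τ₄.2 : ℤ) (fun v => v.2)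
        (fun x y => rfl)
        (dvd_trans (dvd_trans (Int.gcd_dvd_left _ _) (Int.gcd_dvd_left _ _)) (Int.gcd_dvd_left _ _))
        (dvd_trans (dvd_trans (Int.gcd_dvd_left _ _) (Int.gcd_dvd_left _ _)) (Int.gcd_dvd_right _ _))
        (dvd_trans (Int.gcd_dvd_left _ _) (Int.gcd_dvd_right _ _))
        (Int.gcd_dvd_right _ _)
        _ he2
      simpa using this
    · set d : ℤ := (Int.gcd (Int.gcd (Int.gcd (Int.gcd (Int.gcd
           (τ₁.1 * τ₂.2 - τ₁.2 * τ₂.1)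
           (τ₁.1 * τ₃.2 - τ₁.2 * τ₃.1))
           (τ₁.1 * τ₄.2 - τ₁.2 * τ₄.1))
           (τ₂.1 * τ₃.2 - τ₂.2 * τ₃.1))
           (τ₂.1 * τ₄.2 - τ₂.2 * τ₄.1))
           (τ₃.1 * τ₄.2 - τ₃.2 * τ₄.1) : ℤ) with hd_def
      have dm12 : d ∣ τ₁.1 * τ₂.2 - τ₁.2 * τ₂.1 := dvd_trans (dvd_trans (dvd_trans
        (dvd_trans (Int.gcd_dvd_left _ _) (Int.gcd_dvd_left _ _)) (Int.gcd_dvd_left _ _)) (Int.gcd_dvd_left _ _))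
        (Int.gcd_dvd_left _ _)
      have dm13 : d ∣ τ₁.1 * τ₃.2 - τ₁.2 * τ₃.1 := dvd_trans (dvd_trans (dvd_trans
        (dvd_trans (Int.gcd_dvd_left _ _) (Int.gcd_dvd_left _ _)) (Int.gcd_dvd_left _ _)) (Int.gcd_dvd_left _ _))
        (Int.gcd_dvd_right _ _)
      have dm14 : d ∣ τ₁.1 * τ₄.2 - τ₁.2 * τ₄.1 := dvd_trans (dvd_trans
        (dvd_trans (Int.gcd_dvd_left _ _) (Int.gcd_dvd_left _ _)) (Int.gcd_dvd_left _ _)) (Int.gcd_dvd_right _ _)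
      have dm23 : d ∣ τ₂.1 * τ₃.2 - τ₂.2 * τ₃.1 := dvd_trans
        (dvd_trans (Int.gcd_dvd_left _ _) (Int.gcd_dvd_left _ _)) (Int.gcd_dvd_right _ _)
      have dm24 : d ∣ τ₂.1 * τ₄.2 - τ₂.2 * τ₄.1 := dvd_trans (Int.gcd_dvd_left _ _) (Int.gcd_dvd_right _ _)
      have dm34 : d ∣ τ₃.1 * τ₄.2 - τ₃.2 * τ₄.1 := (Int.gcd_dvd_right _ _)
      have hcross : ∀ t : ℤ × ℤ, d ∣ (t.1 * τ₁.2 - t.2 * τ₁.1) → d ∣ (t.1 * τ₂.2 - t.2 * τ₂.1) →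
          d ∣ (t.1 * τ₃.2 - t.2 * τ₃.1) → d ∣ (t.1 * τ₄.2 - t.2 * τ₄.1) →
          ∀ v ∈ Λ, d ∣ (t.1 * v.2 - t.2 * v.1) := by
        intro t ht1 ht2 ht3 ht4
        exact hdvd d (fun v => t.1 * v.2 - t.2 * v.1)
          (fun x y => by simp [Prod.fst_add, Prod.snd_add]; ring) ht1 ht2 ht3 ht4
      have hself : ∀ t : ℤ × ℤ, d ∣ (t.1 * t.2 - t.2 * t.1) := by
        intro t; have : t.1 * t.2 - t.2 * t.1 = 0 := by ring
        rw [this]; exact dvd_zero d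
      have hneg : ∀ a b : ℤ × ℤ, d ∣ (a.1 * b.2 - a.2 * b.1) → d ∣ (b.1 * a.2 - b.2 * a.1) := by
        intro a b h
        have : b.1 * a.2 - b.2 * a.1 = -(a.1 * b.2 - a.2 * b.1) := by ring
        rw [this]; exact dvd_neg.mpr h
      have hτ1d : ∀ v ∈ Λ, d ∣ (τ₁.1 * v.2 - τ₁.2 * v.1) :=
        hcross τ₁ (hself τ₁) dm12 dm13 dm14
      have hτ2d : ∀ v ∈ Λ, d ∣ (τ₂.1 * v.2 - τ₂.2 * v.1) :=
        hcross τ₂ (hneg _ _ dm12) (hself τ₂) dm23 dm24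
      have hτ3d : ∀ v ∈ Λ, d ∣ (τ₃.1 * v.2 - τ₃.2 * v.1) :=
        hcross τ₃ (hneg _ _ dm13) (hneg _ _ dm23) (hself τ₃) dm34
      have hτ4d : ∀ v ∈ Λ, d ∣ (τ₄.1 * v.2 - τ₄.2 * v.1) :=
        hcross τ₄ (hneg _ _ dm14) (hneg _ _ dm24) (hneg _ _ dm34) (hself τ₄)
      -- d divides the first component of each τᵢ
      have hfst : ∀ t : ℤ × ℤ, (∀ v ∈ Λ, d ∣ (t.1 * v.2 - t.2 * v.1)) → d ∣ t.1 := by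
        intro t ht
        have := ht _ he2
        simpa using this
      have hone : d ∣ (1 : ℤ) := by
        have := hdvd d (fun v => v.1) (fun x y => rfl)
          (hfst τ₁ hτ1d) (hfst τ₂ hτ2d) (hfst τ₃ hτ3d) (hfst τ₄ hτ4d) _ he1
        simpa using this
      exact natone _ hone
  · -- backward direction
    rintro ⟨-, -, h3⟩
    have hg₁H : g₁ ∈ Subgroup.closure ({g₁, g₂, g₃} : Set (Matrix (Fin 4) (Fin 4) ℝ)ˣ) :=
      Subgroup.subset_closure (by simp)
    have hg₂H : g₂ ∈ Subgroup.closure ({g₁, g₂, g₃} : Set (Matrix (Fin 4) (Fin 4) ℝ)ˣ) :=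
      Subgroup.subset_closure (by simp)
    have hg₃H : g₃ ∈ Subgroup.closure ({g₁, g₂, g₃} : Set (Matrix (Fin 4) (Fin 4) ℝ)ˣ) :=
      Subgroup.subset_closure (by simp)
    set L : AddSubgroup (ℤ × ℤ) :=
      { carrier := {v | u v ∈ Subgroup.closure ({g₁, g₂, g₃} : Set (Matrix (Fin 4) (Fin 4) ℝ)ˣ)}
        zero_mem' := by
          show u 0 ∈ Subgroup.closure ({g₁, g₂, g₃} : Set (Matrix (Fin 4) (Fin 4) ℝ)ˣ)
          rw [hu_one]; exact one_mem _
        add_mem' := by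
          intro a b ha hb
          show u (_ + _) ∈ Subgroup.closure ({g₁, g₂, g₃} : Set (Matrix (Fin 4) (Fin 4) ℝ)ˣ)
          rw [← hu_mul]; exact mul_mem ha hb
        neg_mem' := by
          intro a ha
          show u (-_) ∈ Subgroup.closure ({g₁, g₂, g₃} : Set (Matrix (Fin 4) (Fin 4) ℝ)ˣ)
          rw [← hu_inv]; exact inv_mem ha } with hL_def
    have hmemL : ∀ v : ℤ × ℤ, v ∈ L ↔
        u v ∈ Subgroup.closure ({g₁, g₂, g₃} : Set (Matrix (Fin 4) (Fin 4) ℝ)ˣ) := by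
      intro v; rfl
    have hτ₁L : τ₁ ∈ L := by rw [hmemL, ← hg₂u]; exact hg₂H
    have hτ₂L : τ₂ ∈ L := by rw [hmemL, ← hg₃u]; exact hg₃H
    have hθL : ∀ v ∈ L, fθ v ∈ L := by
      intro v hv
      rw [hmemL, ← hg1conj]
      exact mul_mem (mul_mem hg₁H ((hmemL v).mp hv)) (inv_mem hg₁H)
    have hτ₃L : τ₃ ∈ L := by rw [← hfθτ₁]; exact hθL _ hτ₁L
    have hτ₄L : τ₄ ∈ L := by rw [← hfθτ₂]; exact hθL _ hτ₂L
    have crossS1 : ∀ v w : ℤ × ℤ, v ∈ L → w ∈ L →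
        (v.1 * w.2 - v.2 * w.1) • ((1, 0) : ℤ × ℤ) ∈ L := by
      intro v w hv hw
      have he : (v.1 * w.2 - v.2 * w.1) • ((1, 0) : ℤ × ℤ) = w.2 • v - v.2 • w := by
        refine Prod.ext ?_ ?_ <;> simp [Prod.smul_def, smul_eq_mul] <;> ring
      rw [he]
      exact sub_mem (AddSubgroup.zsmul_mem _ hv _) (AddSubgroup.zsmul_mem _ hw _)
    have crossS2 : ∀ v w : ℤ × ℤ, v ∈ L → w ∈ L →
        (v.1 * w.2 - v.2 * w.1) • ((0, 1) : ℤ × ℤ) ∈ L := by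
      intro v w hv hw
      have he : (v.1 * w.2 - v.2 * w.1) • ((0, 1) : ℤ × ℤ) = v.1 • w - w.1 • v := by
        refine Prod.ext ?_ ?_ <;> simp [Prod.smul_def, smul_eq_mul] <;> ring
      rw [he]
      exact sub_mem (AddSubgroup.zsmul_mem _ hw _) (AddSubgroup.zsmul_mem _ hv _)
    have hgcdK : ∀ e : ℤ × ℤ, ∀ x y : ℤ, x • e ∈ L → y • e ∈ L →
        ((Int.gcd x y : ℤ)) • e ∈ L := by
      intro e x y hx hy
      rw [Int.gcd_eq_gcd_ab x y, add_smul, mul_comm x, mul_comm y, mul_smul, mul_smul]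
      exact add_mem (AddSubgroup.zsmul_mem _ hx _) (AddSubgroup.zsmul_mem _ hy _)
    have hbig : ∀ e : ℤ × ℤ,
        (∀ v w : ℤ × ℤ, v ∈ L → w ∈ L → (v.1 * w.2 - v.2 * w.1) • e ∈ L) → e ∈ L := by
      intro e hcr
      have h12 := hcr _ _ hτ₁L hτ₂L
      have h13 := hcr _ _ hτ₁L hτ₃L
      have h14 := hcr _ _ hτ₁L hτ₄L
      have h23 := hcr _ _ hτ₂L hτ₃L
      have h24 := hcr _ _ hτ₂L hτ₄L
      have h34 := hcr _ _ hτ₃L hτ₄L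
      have hfin := hgcdK e _ _ (hgcdK e _ _ (hgcdK e _ _ (hgcdK e _ _
        (hgcdK e _ _ h12 h13) h14) h23) h24) h34
      rw [h3] at hfin
      simpa using hfin
    have he1L : ((1 : ℤ), (0 : ℤ)) ∈ L := hbig _ crossS1
    have he2L : ((0 : ℤ), (1 : ℤ)) ∈ L := hbig _ crossS2
    have hBH : B ∈ Subgroup.closure ({g₁, g₂, g₃} : Set (Matrix (Fin 4) (Fin 4) ℝ)ˣ) := by
      rw [← hBu]; exact (hmemL _).mp he1L
    have hCH : C ∈ Subgroup.closure ({g₁, g₂, g₃} : Set (Matrix (Fin 4) (Fin 4) ℝ)ˣ) := by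
      rw [← hCu]; exact (hmemL _).mp he2L
    have hβγL : ((β₁ : ℤ), (γ₁ : ℤ)) ∈ L := by
      have he : ((β₁ : ℤ), (γ₁ : ℤ)) = β₁ • ((1, 0) : ℤ × ℤ) + γ₁ • ((0, 1) : ℤ × ℤ) := by
        refine Prod.ext ?_ ?_ <;> simp [Prod.smul_def, smul_eq_mul]
      rw [he]
      exact add_mem (AddSubgroup.zsmul_mem _ he1L _) (AddSubgroup.zsmul_mem _ he2L _)
    have hAH : A ∈ Subgroup.closure ({g₁, g₂, g₃} : Set (Matrix (Fin 4) (Fin 4) ℝ)ˣ) := by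
      have he : A = g₁ * (u (β₁, γ₁))⁻¹ := by rw [hτ₀]; group
      rw [he]
      exact mul_mem hg₁H (inv_mem ((hmemL _).mp hβγL))
    apply le_antisymm
    · rw [Subgroup.closure_le]
      intro x hx
      have hAm : A ∈ Subgroup.closure ({A, B, C} : Set (Matrix (Fin 4) (Fin 4) ℝ)ˣ) :=
        Subgroup.subset_closure (by simp)
      have hBm : B ∈ Subgroup.closure ({A, B, C} : Set (Matrix (Fin 4) (Fin 4) ℝ)ˣ) :=
        Subgroup.subset_closure (by simp)
      have hCm : C ∈ Subgroup.closure ({A, B, C} : Set (Matrix (Fin 4) (Fin 4) ℝ)ˣ) :=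
        Subgroup.subset_closure (by simp)
      rcases hx with h | h | h
      · rw [h, hg₁]
        exact mul_mem (mul_mem hAm (zpow_mem hBm _)) (zpow_mem hCm _)
      · rw [h, hg₂]
        exact mul_mem (zpow_mem hBm _) (zpow_mem hCm _)
      · rw [Set.mem_singleton_iff.mp h, hg₃]
        exact mul_mem (zpow_mem hBm _) (zpow_mem hCm _)
    · rw [Subgroup.closure_le]
      intro x hx
      rcases hx with h | h | h
      · rw [h]; exact hAH
      · rw [h]; exact hBH
      · rw [Set.mem_singleton_iff.mp h]; exact hCH
end
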